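/- arXiv:2511.10132 — 9 statements merged into one kernel-verified Lean document; each statement's English description precedes it below -/
import Mathlib

section
/- Representation of solutions of the chain recursion by the coefficients (Lemma 4.3, point 1, existence part): Let (p₀,k₀) ∈ Q. Let Z and V be real-valued functions on {(p,k) ∈ Q : k ≥ k₀} such that for every (p,k) ∈ Q with k ≥ k₀, V(p,k) = Z(p,k) + Σ_{p'∈P} Σ_{k'∈D_{p'}, k₀ ≤ k' < k} a^p_{p'} h^p_{p'}(k−k') V(p',k') (a finite sum). Then for every (p,k) ∈ Q with k ≥ k₀, V(p,k) = Σ_{p'∈P} Σ_{k'∈D_{p'}, k₀ ≤ k' ≤ k} c(p,k;p',k') Z(p',k'). -/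
open scoped BigOperators ENNReal

lemma aux_finsum_mem_eq_sum_ite {S : Finset ℝ} {s : Set ℝ} [∀ x : ℝ, Decidable (x ∈ s)]
    (hs : s.Finite) (hsub : s ⊆ ↑S) (f : ℝ → ℝ) :
    ∑ᶠ x ∈ s, f x = ∑ x ∈ S, if x ∈ s then f x else 0 := by
  rw [finsum_mem_eq_finite_toFinset_sum f hs, ← Finset.sum_filter]
  congr 1
  ext x
  simp only [Set.Finite.mem_toFinset, Finset.mem_filter]
  exact ⟨fun hx => ⟨hsub hx, hx⟩, fun hx => hx.2⟩

lemma aux_sum4 {α β : Type*} (s : Finset α) (t : Finset β) (f : α → β → α → β → ℝ) :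
    ∑ a ∈ s, ∑ b ∈ t, ∑ c ∈ s, ∑ d ∈ t, f a b c d
      = ∑ c ∈ s, ∑ d ∈ t, ∑ a ∈ s, ∑ b ∈ t, f a b c d := by
  have key : ∀ g : α → β → α → β → ℝ,
      ∑ a ∈ s, ∑ b ∈ t, ∑ c ∈ s, ∑ d ∈ t, g a b c d
        = ∑ x ∈ s ×ˢ t, ∑ y ∈ s ×ˢ t, g x.1 x.2 y.1 y.2 := by
    intro g
    rw [Finset.sum_product]
    exact Finset.sum_congr rfl fun a _ => Finset.sum_congr rfl fun b _ => by
      rw [Finset.sum_product]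
  rw [key, key fun a b c d => f c d a b]
  exact Finset.sum_comm

lemma aux_push_left {P : Type*} [Fintype P] (S : Finset ℝ) (C : Prop) [Decidable C]
    (c : ℝ) (F : P → ℝ → ℝ) (C2 : P → ℝ → Prop) [∀ q y, Decidable (C2 q y)] :
    (if C then c * (∑ q : P, ∑ y ∈ S, if C2 q y then F q y else 0) else 0)
      = ∑ q : P, ∑ y ∈ S, if C ∧ C2 q y then c * F q y else 0 := by
  split_ifs with hC
  · rw [Finset.mul_sum]
    refine Finset.sum_congr rfl fun q _ => ?_
    rw [Finset.mul_sum]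
    refine Finset.sum_congr rfl fun y _ => ?_
    simp [hC]
  · simp [hC]

lemma aux_push_right {P : Type*} [Fintype P] (S : Finset ℝ) (C : Prop) [Decidable C]
    (c : ℝ) (F : P → ℝ → ℝ) (C2 : P → ℝ → Prop) [∀ q y, Decidable (C2 q y)] :
    (if C then (∑ q : P, ∑ y ∈ S, if C2 q y then F q y else 0) * c else 0)
      = ∑ q : P, ∑ y ∈ S, if C ∧ C2 q y then F q y * c else 0 := by
  split_ifs with hC
  · rw [Finset.sum_mul]
    refine Finset.sum_congr rfl fun q _ => ?_
    rw [Finset.sum_mul]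
    refine Finset.sum_congr rfl fun y _ => ?_
    simp [hC]
  · simp [hC]

set_option maxHeartbeats 1000000 in
/-- **Lemma 4.3, point 1 (existence part).**
Representation of solutions of the chain recursion by the coefficients. -/
theorem stmt_0
    {P : Type*} [Fintype P] [Nonempty P] [DecidableEq P]
    (n : P → ℕ) (hn : ∀ p, 1 ≤ n p)
    (θ : P → ℝ) (hθ0 : ∀ p, 0 ≤ θ p) (hθ1 : ∀ p, θ p < 1 / (n p : ℝ))
    (D : P → Set ℝ)
    (hD : ∀ p, D p = {k : ℝ | ∃ j : ℤ, k = θ p + (j : ℝ) / (n p : ℝ)})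
    (hfin : ∀ u v : ℝ, u < v → ((⋃ p, D p) ∩ Set.Ioc u v).Finite)
    (a : P → P → ℝ) (ha : ∀ p p', 0 ≤ a p p')
    (h : P → P → ℝ → ℝ) (hh : ∀ p p' x, 0 ≤ h p p' x)
    (hh0 : ∀ p p' x, x ≤ 0 → h p p' x = 0)
    -- the coefficients `c(p,k;p',k')`, characterized by the well-founded recursion
    (co : P → ℝ → P → ℝ → ℝ)
    (hco_nonneg : ∀ p k p' k', k ∈ D p → k' ∈ D p' → k' ≤ k → 0 ≤ co p k p' k')
    (hco_diag : ∀ p p' k, k ∈ D p → k ∈ D p' → co p k p' k = if p = p' then 1 else 0)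
    (hco_rec : ∀ p k p' k', k ∈ D p → k' ∈ D p' → k' < k →
      co p k p' k' = ∑ p'' : P, ∑ᶠ k'' ∈ D p'' ∩ Set.Ico k' k,
        a p p'' * h p p'' (k - k'') * co p'' k'' p' k')
    -- the data of the statement
    (p₀ : P) (k₀ : ℝ) (hk₀ : k₀ ∈ D p₀)
    (Z V : P → ℝ → ℝ)
    (hV : ∀ p k, k ∈ D p → k₀ ≤ k →
      V p k = Z p k + ∑ p' : P, ∑ᶠ k' ∈ D p' ∩ Set.Ico k₀ k,
        a p p' * h p p' (k - k') * V p' k') :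
    ∀ p k, k ∈ D p → k₀ ≤ k →
      V p k = ∑ p' : P, ∑ᶠ k' ∈ D p' ∩ Set.Icc k₀ k, co p k p' k' * Z p' k' := by
  classical
  -- finiteness helpers
  have hIcc : ∀ v : ℝ, k₀ ≤ v → ((⋃ p, D p) ∩ Set.Icc k₀ v).Finite := by
    intro v hv
    refine (hfin (k₀ - 1) v (by linarith)).subset ?_
    rintro x ⟨hx1, hx2, hx3⟩
    exact ⟨hx1, by linarith, hx3⟩
  have hIcoFin : ∀ v : ℝ, ((⋃ p, D p) ∩ Set.Ico k₀ v).Finite := by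
    intro v
    rcases le_or_gt v k₀ with hv | hv
    · rw [Set.Ico_eq_empty (not_lt.mpr hv), Set.inter_empty]
      exact Set.finite_empty
    · refine (hfin (k₀ - 1) v (by linarith)).subset ?_
      rintro x ⟨hx1, hx2, hx3⟩
      exact ⟨hx1, by linarith, le_of_lt hx3⟩
  -- the main step
  have main : ∀ p k, k ∈ D p → k₀ ≤ k →
      (∀ p' k', k' ∈ D p' → k₀ ≤ k' → k' < k →
        V p' k' = ∑ p'' : P, ∑ᶠ k'' ∈ D p'' ∩ Set.Icc k₀ k', co p' k' p'' k'' * Z p'' k'') →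
      V p k = ∑ p' : P, ∑ᶠ k' ∈ D p' ∩ Set.Icc k₀ k, co p k p' k' * Z p' k' := by
    intro p k hk hkk IH
    set S : Finset ℝ := (hIcc k hkk).toFinset with hSdef
    have hmemS : ∀ (q : P) (x : ℝ), x ∈ D q → k₀ ≤ x → x ≤ k → x ∈ S := fun q x hx h1 h2 =>
      (hIcc k hkk).mem_toFinset.mpr ⟨Set.mem_iUnion.mpr ⟨q, hx⟩, h1, h2⟩
    have hSfin : (↑S : Set ℝ).Finite := S.finite_toSet
    have hsub1 : ∀ q : P, D q ∩ Set.Ico k₀ k ⊆ ↑S := by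
      rintro q x ⟨hx1, hx2, hx3⟩
      exact hmemS q x hx1 hx2 (le_of_lt hx3)
    have hsub2 : ∀ (q : P) (v : ℝ), v ≤ k → D q ∩ Set.Icc k₀ v ⊆ ↑S := by
      rintro q v hv x ⟨hx1, hx2, hx3⟩
      exact hmemS q x hx1 hx2 (le_trans hx3 hv)
    have hsub3 : ∀ (q : P) (v : ℝ), k₀ ≤ v → D q ∩ Set.Ico v k ⊆ ↑S := by
      rintro q v hv x ⟨hx1, hx2, hx3⟩
      exact hmemS q x hx1 (le_trans hv hx2) (le_of_lt hx3)
    have hkS : k ∈ S := hmemS p k hk hkk le_rfl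
    -- rewrite the LHS
    have e1 : V p k = Z p k + ∑ p' : P, ∑ x ∈ S,
        if x ∈ D p' ∩ Set.Ico k₀ k then
          a p p' * h p p' (k - x) *
            (∑ p'' : P, ∑ y ∈ S,
              if y ∈ D p'' ∩ Set.Icc k₀ x then co p' x p'' y * Z p'' y else 0)
        else 0 := by
      rw [hV p k hk hkk]
      congr 1
      refine Finset.sum_congr rfl fun p' _ => ?_
      rw [aux_finsum_mem_eq_sum_ite (hSfin.subset (hsub1 p')) (hsub1 p')]
      refine Finset.sum_congr rfl fun x _ => ?_
      split_ifs with hc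
      · obtain ⟨hxD, hx1, hx2⟩ := hc
        rw [IH p' x hxD hx1 hx2]
        congr 1
        refine Finset.sum_congr rfl fun p'' _ => ?_
        exact aux_finsum_mem_eq_sum_ite (hSfin.subset (hsub2 p'' x (le_of_lt hx2)))
          (hsub2 p'' x (le_of_lt hx2)) _
      · rfl
    -- rewrite the RHS
    have e3 : (∑ p' : P, ∑ᶠ x ∈ D p' ∩ Set.Icc k₀ k, co p k p' x * Z p' x)
        = Z p k + ∑ p' : P, ∑ x ∈ S,
            if x ∈ D p' ∩ Set.Ico k₀ k then
              (∑ p'' : P, ∑ y ∈ S,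
                if y ∈ D p'' ∩ Set.Ico x k then
                  a p p'' * h p p'' (k - y) * co p'' y p' x else 0) * Z p' x
            else 0 := by
      have split1 : ∀ (p' : P) (x : ℝ),
          (if x ∈ D p' ∩ Set.Icc k₀ k then co p k p' x * Z p' x else 0)
            = (if x ∈ D p' ∩ Set.Ico k₀ k then co p k p' x * Z p' x else 0)
              + (if x = k ∧ k ∈ D p' then co p k p' k * Z p' k else 0) := by
        intro p' x
        simp only [Set.mem_inter_iff, Set.mem_Icc, Set.mem_Ico]
        rcases eq_or_ne x k with rfl | hne
        · by_cases hd : x ∈ D p'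
          · simp [hd, hkk, lt_irrefl]
          · simp [hd]
        · have : ¬ (x = k ∧ k ∈ D p') := fun hx => hne hx.1
          rw [if_neg this, add_zero]
          refine if_congr ?_ rfl rfl
          constructor
          · rintro ⟨h1, h2, h3⟩
            exact ⟨h1, h2, lt_of_le_of_ne h3 hne⟩
          · rintro ⟨h1, h2, h3⟩
            exact ⟨h1, h2, le_of_lt h3⟩
      calc (∑ p' : P, ∑ᶠ x ∈ D p' ∩ Set.Icc k₀ k, co p k p' x * Z p' x)
          = ∑ p' : P, ∑ x ∈ S,
              ((if x ∈ D p' ∩ Set.Ico k₀ k then co p k p' x * Z p' x else 0)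
                + (if x = k ∧ k ∈ D p' then co p k p' k * Z p' k else 0)) := by
            refine Finset.sum_congr rfl fun p' _ => ?_
            rw [aux_finsum_mem_eq_sum_ite (hSfin.subset (hsub2 p' k le_rfl))
              (hsub2 p' k le_rfl)]
            exact Finset.sum_congr rfl fun x _ => split1 p' x
        _ = (∑ p' : P, ∑ x ∈ S, if x ∈ D p' ∩ Set.Ico k₀ k then co p k p' x * Z p' x else 0)
              + ∑ p' : P, ∑ x ∈ S, if x = k ∧ k ∈ D p' then co p k p' k * Z p' k else 0 := by
            rw [← Finset.sum_add_distrib]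
            refine Finset.sum_congr rfl fun p' _ => Finset.sum_add_distrib
        _ = (∑ p' : P, ∑ x ∈ S, if x ∈ D p' ∩ Set.Ico k₀ k then co p k p' x * Z p' x else 0)
              + Z p k := by
            congr 1
            have : ∀ p' : P, (∑ x ∈ S, if x = k ∧ k ∈ D p' then co p k p' k * Z p' k else 0)
                = if k ∈ D p' then co p k p' k * Z p' k else 0 := by
              intro p'
              rw [show (fun x => if x = k ∧ k ∈ D p' then co p k p' k * Z p' k else 0)
                  = fun x => if x = k then (if k ∈ D p' then co p k p' k * Z p' k else 0) else 0 by
                funext x; split_ifs <;> tauto]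
              rw [Finset.sum_ite_eq' S k fun _ => if k ∈ D p' then co p k p' k * Z p' k else 0]
              simp [hkS]
            simp only [this]
            rw [Finset.sum_eq_single p]
            · rw [if_pos hk, hco_diag p p k hk hk, if_pos rfl, one_mul]
            · intro b _ hb
              by_cases hbk : k ∈ D b
              · rw [if_pos hbk, hco_diag p b k hk hbk, if_neg (Ne.symm hb), zero_mul]
              · rw [if_neg hbk]
            · intro hp
              exact absurd (Finset.mem_univ p) hp
        _ = Z p k + ∑ p' : P, ∑ x ∈ S,
              if x ∈ D p' ∩ Set.Ico k₀ k then co p k p' x * Z p' x else 0 := by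
            rw [add_comm]
        _ = _ := by
            congr 1
            refine Finset.sum_congr rfl fun p' _ => Finset.sum_congr rfl fun x _ => ?_
            split_ifs with hc
            · obtain ⟨hxD, hx1, hx2⟩ := hc
              congr 1
              rw [hco_rec p k p' x hk hxD hx2]
              refine Finset.sum_congr rfl fun p'' _ => ?_
              exact aux_finsum_mem_eq_sum_ite (hSfin.subset (hsub3 p'' x hx1))
                (hsub3 p'' x hx1) _
            · rfl
    rw [e1, e3]
    congr 1
    -- now the quadruple-sum interchange
    calc (∑ p' : P, ∑ x ∈ S,
            if x ∈ D p' ∩ Set.Ico k₀ k then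
              a p p' * h p p' (k - x) *
                (∑ p'' : P, ∑ y ∈ S,
                  if y ∈ D p'' ∩ Set.Icc k₀ x then co p' x p'' y * Z p'' y else 0)
            else 0)
        = ∑ p' : P, ∑ x ∈ S, ∑ p'' : P, ∑ y ∈ S,
            if x ∈ D p' ∩ Set.Ico k₀ k ∧ y ∈ D p'' ∩ Set.Icc k₀ x then
              a p p' * h p p' (k - x) * (co p' x p'' y * Z p'' y) else 0 := by
          refine Finset.sum_congr rfl fun p' _ => Finset.sum_congr rfl fun x _ => ?_
          exact aux_push_left S _ _ _ _
      _ = ∑ p'' : P, ∑ y ∈ S, ∑ p' : P, ∑ x ∈ S,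
            if x ∈ D p' ∩ Set.Ico k₀ k ∧ y ∈ D p'' ∩ Set.Icc k₀ x then
              a p p' * h p p' (k - x) * (co p' x p'' y * Z p'' y) else 0 := by
          exact aux_sum4 Finset.univ S fun p' x p'' y =>
            if x ∈ D p' ∩ Set.Ico k₀ k ∧ y ∈ D p'' ∩ Set.Icc k₀ x then
              a p p' * h p p' (k - x) * (co p' x p'' y * Z p'' y) else 0
      _ = ∑ p' : P, ∑ x ∈ S, ∑ p'' : P, ∑ y ∈ S,
            if x ∈ D p' ∩ Set.Ico k₀ k ∧ y ∈ D p'' ∩ Set.Ico x k then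
              (a p p'' * h p p'' (k - y) * co p'' y p' x) * Z p' x else 0 := by
          refine Finset.sum_congr rfl fun p' _ => Finset.sum_congr rfl fun x _ =>
            Finset.sum_congr rfl fun p'' _ => Finset.sum_congr rfl fun y _ => ?_
          simp only [Set.mem_inter_iff, Set.mem_Ico, Set.mem_Icc]
          refine if_congr ?_ (by ring) rfl
          constructor
          · rintro ⟨⟨h1, h2, h3⟩, h4, h5, h6⟩
            exact ⟨⟨h4, h5, lt_of_le_of_lt h6 h3⟩, h1, h6, h3⟩
          · rintro ⟨⟨h1, h2, h3⟩, h4, h5, h6⟩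
            exact ⟨⟨h4, le_trans h2 h5, h6⟩, h1, h2, h5⟩
      _ = _ := by
          refine Finset.sum_congr rfl fun p' _ => Finset.sum_congr rfl fun x _ => ?_
          exact (aux_push_right S _ _ _ _).symm
  -- induction wrapper
  have IND : ∀ N : ℕ, ∀ p k, k ∈ D p → k₀ ≤ k → (hIcoFin k).toFinset.card ≤ N →
      V p k = ∑ p' : P, ∑ᶠ k' ∈ D p' ∩ Set.Icc k₀ k, co p k p' k' * Z p' k' := by
    intro N
    induction N with
    | zero =>
      intro p k hk hkk hcard
      refine main p k hk hkk fun p' k' h1 h2 h3 => ?_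
      exfalso
      have hmem : k' ∈ (hIcoFin k).toFinset :=
        (hIcoFin k).mem_toFinset.mpr ⟨Set.mem_iUnion.mpr ⟨p', h1⟩, h2, h3⟩
      have := Finset.card_pos.mpr ⟨k', hmem⟩
      omega
    | succ N ih =>
      intro p k hk hkk hcard
      refine main p k hk hkk fun p' k' h1 h2 h3 => ih p' k' h1 h2 ?_
      have hss : (hIcoFin k').toFinset ⊂ (hIcoFin k).toFinset := by
        rw [Set.Finite.toFinset_ssubset_toFinset]
        constructor
        · rintro x ⟨hx1, hx2, hx3⟩
          exact ⟨hx1, hx2, lt_trans hx3 h3⟩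
        · intro hsup
          have : k' ∈ (⋃ p, D p) ∩ Set.Ico k₀ k :=
            ⟨Set.mem_iUnion.mpr ⟨p', h1⟩, h2, h3⟩
          obtain ⟨-, -, hlt⟩ := hsup this
          exact lt_irrefl k' hlt
      have := Finset.card_lt_card hss
      omega
  intro p k hk hkk
  exact IND (hIcoFin k).toFinset.card p k hk hkk le_rfl
end

section
/- Uniqueness of the coefficient family (Lemma 4.3, point 1, uniqueness part): Suppose c̃ assigns a real number c̃(p,k;p',k') to every pair (p,k),(p',k') ∈ Q with k' ≤ k, and that for every (p₀,k₀) ∈ Q and all real-valued functions Z, V on {(p,k) ∈ Q : k ≥ k₀} satisfying V(p,k) = Z(p,k) + Σ_{p'∈P} Σ_{k'∈D_{p'}, k₀ ≤ k' < k} a^p_{p'} h^p_{p'}(k−k') V(p',k') for all (p,k) ∈ Q with k ≥ k₀, one has V(p,k) = Σ_{p'∈P} Σ_{k'∈D_{p'}, k₀ ≤ k' ≤ k} c̃(p,k;p',k') Z(p',k') for all (p,k) ∈ Q with k ≥ k₀. Then c̃(p,k;p',k') = c(p,k;p',k') for all (p,k),(p',k') ∈ Q with k' ≤ k. -/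
open scoped BigOperators ENNReal

/-- **Lemma 4.3, point 1 (uniqueness part).**
Uniqueness of the coefficient family. -/
theorem stmt_1
    {P : Type*} [Fintype P] [Nonempty P] [DecidableEq P]
    (n : P → ℕ) (hn : ∀ p, 1 ≤ n p)
    (θ : P → ℝ) (hθ0 : ∀ p, 0 ≤ θ p) (hθ1 : ∀ p, θ p < 1 / (n p : ℝ))
    (D : P → Set ℝ)
    (hD : ∀ p, D p = {k : ℝ | ∃ j : ℤ, k = θ p + (j : ℝ) / (n p : ℝ)})
    (hfin : ∀ u v : ℝ, u < v → ((⋃ p, D p) ∩ Set.Ioc u v).Finite)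
    (a : P → P → ℝ) (ha : ∀ p p', 0 ≤ a p p')
    (h : P → P → ℝ → ℝ) (hh : ∀ p p' x, 0 ≤ h p p' x)
    (hh0 : ∀ p p' x, x ≤ 0 → h p p' x = 0)
    -- the coefficients `c(p,k;p',k')`, characterized by the well-founded recursion
    (co : P → ℝ → P → ℝ → ℝ)
    (hco_nonneg : ∀ p k p' k', k ∈ D p → k' ∈ D p' → k' ≤ k → 0 ≤ co p k p' k')
    (hco_diag : ∀ p p' k, k ∈ D p → k ∈ D p' → co p k p' k = if p = p' then 1 else 0)
    (hco_rec : ∀ p k p' k', k ∈ D p → k' ∈ D p' → k' < k →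
      co p k p' k' = ∑ p'' : P, ∑ᶠ k'' ∈ D p'' ∩ Set.Ico k' k,
        a p p'' * h p p'' (k - k'') * co p'' k'' p' k')
    -- a candidate family `c̃` which represents all solutions of the chain recursion
    (ctil : P → ℝ → P → ℝ → ℝ)
    (hctil : ∀ (p₀ : P) (k₀ : ℝ), k₀ ∈ D p₀ → ∀ Z V : P → ℝ → ℝ,
      (∀ p k, k ∈ D p → k₀ ≤ k →
        V p k = Z p k + ∑ p' : P, ∑ᶠ k' ∈ D p' ∩ Set.Ico k₀ k,
          a p p' * h p p' (k - k') * V p' k') →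
      ∀ p k, k ∈ D p → k₀ ≤ k →
        V p k = ∑ p' : P, ∑ᶠ k' ∈ D p' ∩ Set.Icc k₀ k, ctil p k p' k' * Z p' k') :
    ∀ p k p' k', k ∈ D p → k' ∈ D p' → k' ≤ k → ctil p k p' k' = co p k p' k' := by
  classical
  intro p k p' k' hk hk' hle
  set Z : P → ℝ → ℝ := fun q x => if q = p' ∧ x = k' then 1 else 0 with hZ
  set V : P → ℝ → ℝ := fun q x => co q x p' k' with hV
  have hrec : ∀ q x, x ∈ D q → k' ≤ x →
      V q x = Z q x + ∑ p'' : P, ∑ᶠ k'' ∈ D p'' ∩ Set.Ico k' x,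
        a q p'' * h q p'' (x - k'') * V p'' k'' := by
    intro q x hx hge
    rcases eq_or_lt_of_le hge with heq | hlt
    · subst heq
      have hempty : ∀ p'' : P, D p'' ∩ Set.Ico k' k' = (∅ : Set ℝ) := by
        intro p''; simp
      simp only [hempty, finsum_mem_empty, Finset.sum_const_zero, add_zero]
      show co q k' p' k' = if q = p' ∧ k' = k' then 1 else 0
      rw [hco_diag q p' k' hx hk']
      by_cases hq : q = p' <;> simp [hq]
    · have hZ0 : Z q x = 0 := by
        rw [hZ]; simp only []
        rw [if_neg]; rintro ⟨-, rfl⟩; exact lt_irrefl _ hlt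
      rw [hZ0, zero_add, hV]
      exact hco_rec q x p' k' hx hk' hlt
  have key := hctil p' k' hk' Z V hrec p k hk hle
  have hterm : ∀ p'' : P, (∑ᶠ k'' ∈ D p'' ∩ Set.Icc k' k, ctil p k p'' k'' * Z p'' k'')
      = if p'' = p' then ctil p k p' k' else 0 := by
    intro p''
    by_cases hp : p'' = p'
    · subst hp
      rw [if_pos rfl, finsum_mem_def]
      have hsingle : ∀ x, x ≠ k' →
          Set.indicator (D p'' ∩ Set.Icc k' k) (fun k'' => ctil p k p'' k'' * Z p'' k'') x = 0 := by
        intro x hx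
        by_cases hmem : x ∈ D p'' ∩ Set.Icc k' k
        · rw [Set.indicator_of_mem hmem]
          simp [hZ, hx]
        · rw [Set.indicator_of_notMem hmem]
      have hmem : k' ∈ D p'' ∩ Set.Icc k' k := ⟨hk', le_refl _, hle⟩
      rw [finsum_eq_single _ k' hsingle, Set.indicator_of_mem hmem]
      simp [hZ]
    · have hz : ∀ k'' : ℝ, ctil p k p'' k'' * Z p'' k'' = 0 := by
        intro k''; simp [hZ, hp]
      simp [hz, hp]
  rw [Finset.sum_congr rfl (fun p'' _ => hterm p'')] at key
  simpa using key.symm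
end

section
/- 1-periodicity of the coefficients (Lemma 4.3, point 2): For every (p,k),(p',k') ∈ Q with k' ≤ k and every integer n ∈ ℤ, one has k+n ∈ D_p and k'+n ∈ D_{p'}, and c(p,k+n;p',k'+n) = c(p,k;p',k'). -/
open scoped BigOperators ENNReal

/-- **Lemma 4.3, point 2.** 1-periodicity of the coefficients. -/
theorem stmt_2
    {P : Type*} [Fintype P] [Nonempty P] [DecidableEq P]
    (n : P → ℕ) (hn : ∀ p, 1 ≤ n p)
    (θ : P → ℝ) (hθ0 : ∀ p, 0 ≤ θ p) (hθ1 : ∀ p, θ p < 1 / (n p : ℝ))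
    (D : P → Set ℝ)
    (hD : ∀ p, D p = {k : ℝ | ∃ j : ℤ, k = θ p + (j : ℝ) / (n p : ℝ)})
    (hfin : ∀ u v : ℝ, u < v → ((⋃ p, D p) ∩ Set.Ioc u v).Finite)
    (a : P → P → ℝ) (ha : ∀ p p', 0 ≤ a p p')
    (h : P → P → ℝ → ℝ) (hh : ∀ p p' x, 0 ≤ h p p' x)
    (hh0 : ∀ p p' x, x ≤ 0 → h p p' x = 0)
    -- the coefficients `c(p,k;p',k')`, characterized by the well-founded recursion
    (co : P → ℝ → P → ℝ → ℝ)
    (hco_nonneg : ∀ p k p' k', k ∈ D p → k' ∈ D p' → k' ≤ k → 0 ≤ co p k p' k')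
    (hco_diag : ∀ p p' k, k ∈ D p → k ∈ D p' → co p k p' k = if p = p' then 1 else 0)
    (hco_rec : ∀ p k p' k', k ∈ D p → k' ∈ D p' → k' < k →
      co p k p' k' = ∑ p'' : P, ∑ᶠ k'' ∈ D p'' ∩ Set.Ico k' k,
        a p p'' * h p p'' (k - k'') * co p'' k'' p' k') :
    ∀ p k p' k', k ∈ D p → k' ∈ D p' → k' ≤ k → ∀ m : ℤ,
      (k + (m : ℝ)) ∈ D p ∧ (k' + (m : ℝ)) ∈ D p' ∧
        co p (k + (m : ℝ)) p' (k' + (m : ℝ)) = co p k p' k' := by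
  have hDshift : ∀ p (x : ℝ) (m : ℤ), x ∈ D p → x + (m : ℝ) ∈ D p := by
    intro p x m hx
    rw [hD] at hx ⊢
    obtain ⟨j, rfl⟩ := hx
    refine ⟨j + m * n p, ?_⟩
    have hnp : (n p : ℝ) ≠ 0 := by
      have := hn p; positivity
    push_cast
    field_simp
    ring
  have key : ∀ N : ℕ, ∀ m : ℤ, ∀ p k p' k', k ∈ D p → k' ∈ D p' → k' ≤ k →
      ((⋃ q, D q) ∩ Set.Ioc k' k).ncard ≤ N →
      co p (k + (m : ℝ)) p' (k' + (m : ℝ)) = co p k p' k' := by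
    intro N
    induction N with
    | zero =>
      intro m p k p' k' hk hk' hle hcard
      rcases eq_or_lt_of_le hle with rfl | hlt
      · rw [hco_diag p p' k' hk hk', hco_diag p p' _ (hDshift p k' m hk) (hDshift p' k' m hk')]
      · exfalso
        have hfin' := hfin k' k hlt
        have hpos : 0 < ((⋃ q, D q) ∩ Set.Ioc k' k).ncard :=
          (Set.ncard_pos hfin').mpr ⟨k, Set.mem_iUnion.mpr ⟨p, hk⟩, hlt, le_refl k⟩
        omega
    | succ N ih =>
      intro m p k p' k' hk hk' hle hcard
      rcases eq_or_lt_of_le hle with rfl | hlt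
      · rw [hco_diag p p' k' hk hk', hco_diag p p' _ (hDshift p k' m hk) (hDshift p' k' m hk')]
      · have hfin' := hfin k' k hlt
        have hltm : k' + (m : ℝ) < k + (m : ℝ) := by linarith
        rw [hco_rec p k p' k' hk hk' hlt,
          hco_rec p _ p' _ (hDshift p k m hk) (hDshift p' k' m hk') hltm]
        apply Finset.sum_congr rfl
        intro p'' _
        have himg : D p'' ∩ Set.Ico (k' + (m : ℝ)) (k + (m : ℝ)) =
            (fun x : ℝ => x + (m : ℝ)) '' (D p'' ∩ Set.Ico k' k) := by
          ext x
          constructor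
          · rintro ⟨hx, hx1, hx2⟩
            refine ⟨x - (m : ℝ), ⟨?_, by constructor <;> linarith⟩, by ring⟩
            have := hDshift p'' x (-m) hx
            push_cast at this
            simpa [sub_eq_add_neg] using this
          · rintro ⟨y, ⟨hy, hy1, hy2⟩, rfl⟩
            exact ⟨hDshift p'' y m hy, by constructor <;> simp <;> linarith⟩
        rw [himg, finsum_mem_image (by intro a _ b _ hab; simpa using hab)]
        apply finsum_mem_congr rfl
        intro x hx
        obtain ⟨hxD, hx1, hx2⟩ := hx
        have harg : k + (m : ℝ) - (x + (m : ℝ)) = k - x := by ring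
        rw [harg]
        have hcard' : ((⋃ q, D q) ∩ Set.Ioc k' x).ncard ≤ N := by
          have hss : (⋃ q, D q) ∩ Set.Ioc k' x ⊂ (⋃ q, D q) ∩ Set.Ioc k' k := by
            constructor
            · exact Set.inter_subset_inter_right _ (Set.Ioc_subset_Ioc_right hx2.le)
            · intro hsup
              have hkmem : k ∈ (⋃ q, D q) ∩ Set.Ioc k' k :=
                ⟨Set.mem_iUnion.mpr ⟨p, hk⟩, hlt, le_refl k⟩
              have := hsup hkmem
              exact absurd this.2.2 (not_le.mpr hx2)
          have := Set.ncard_lt_ncard hss hfin'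
          omega
        rw [ih m p'' x p' k' hxD hk' hx1 hcard']
  intro p k p' k' hk hk' hle m
  exact ⟨hDshift p k m hk, hDshift p' k' m hk',
    key ((⋃ q, D q) ∩ Set.Ioc k' k).ncard m p k p' k' hk hk' hle le_rfl⟩
end

section
/- Closed form of the coefficients as a sum over paths (Proposition 4.4): Let (p,k),(p',k') ∈ Q with k' < k. Call a path from (p',k') to (p,k) any finite sequence γ = ((p₁,k₁),…,(p_N,k_N)) of elements of Q with N ≥ 2, (p₁,k₁) = (p',k'), (p_N,k_N) = (p,k) and k₁ < k₂ < ⋯ < k_N; the set of such paths is finite, and for such a path γ set Y(γ) = ∏_{i=1}^{N−1} a^{p_{i+1}}_{p_i} h^{p_{i+1}}_{p_i}(k_{i+1}−k_i). Then c(p,k;p',k') = Σ_{γ path from (p',k') to (p,k)} Y(γ). -/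
open scoped BigOperators ENNReal

section Aux

variable {α : Type*}

lemma zipTail_append (l : List α) (hl : l ≠ []) (y : α) :
    (l ++ [y]).zip (l ++ [y]).tail = l.zip l.tail ++ [(l.getLast hl, y)] := by
  induction l with
  | nil => simp at hl
  | cons x l ih =>
    cases l with
    | nil => simp
    | cons c l' =>
      have ih' := ih (by simp)
      simp only [List.cons_append, List.tail_cons, List.zip_cons_cons] at ih' ⊢
      rw [ih']
      simp [List.getLast_cons]

lemma mem_of_pairwise_head {r : α → α → Prop} {l : List α} (hp : l.Pairwise r)
    {a x : α} (hh : l.head? = some a) (hx : x ∈ l) : x = a ∨ r a x := by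
  cases l with
  | nil => simp at hx
  | cons b t =>
    simp only [List.head?_cons, Option.some.injEq] at hh
    subst hh
    rcases List.mem_cons.1 hx with rfl | hx
    · exact Or.inl rfl
    · exact Or.inr ((List.pairwise_cons.1 hp).1 x hx)

lemma mem_of_pairwise_getLast {r : α → α → Prop} {l : List α} (hp : l.Pairwise r)
    {a x : α} (hh : l.getLast? = some a) (hx : x ∈ l) : x = a ∨ r x a := by
  have hp' : l.reverse.Pairwise (fun u v => r v u) := (List.pairwise_reverse).2 hp
  have hh' : l.reverse.head? = some a := by rwa [List.head?_reverse]
  exact mem_of_pairwise_head hp' hh' (by simpa using hx)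

lemma finite_chains {r : α → α → Prop} (hr : Transitive r) (hirr : ∀ x, ¬ r x x)
    {S : Set α} (hS : S.Finite) :
    {l : List α | (∀ x ∈ l, x ∈ S) ∧ l.Chain' r}.Finite := by
  classical
  have : Finite S := hS
  haveI : IsTrans α r := ⟨fun _ _ _ hab hbc => hr hab hbc⟩
  have hfin := List.finite_length_le S hS.toFinset.card
  apply (hfin.image (fun l => l.map Subtype.val)).subset
  rintro l ⟨hmem, hchain⟩
  have hnd : l.Nodup := by
    have hp : l.Pairwise r := List.isChain_iff_pairwise.1 hchain
    exact hp.imp (fun h => by rintro rfl; exact hirr _ h)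
  refine ⟨l.attach.map (fun x => ⟨x.1, hmem x.1 x.2⟩), ?_, ?_⟩
  · simp only [Set.mem_setOf_eq, List.length_map, List.length_attach]
    calc l.length = l.toFinset.card := (List.toFinset_card_of_nodup hnd).symm
    _ ≤ hS.toFinset.card := Finset.card_le_card (fun x hx => by
        simp only [List.mem_toFinset] at hx
        simpa using hmem x hx)
  · simp [List.map_map, Function.comp]

end Aux

section Stmt3Aux

variable {P : Type*}

/-- the weight of one edge -/
def stmt3f (a : P → P → ℝ) (h : P → P → ℝ → ℝ) : (P × ℝ) × (P × ℝ) → ℝ :=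
  fun q => a q.2.1 q.1.1 * h q.2.1 q.1.1 (q.2.2 - q.1.2)

/-- the weight of a path -/
def stmt3Y (a : P → P → ℝ) (h : P → P → ℝ → ℝ) (γ : List (P × ℝ)) : ℝ :=
  ((γ.zip γ.tail).map (stmt3f a h)).prod

/-- the set of paths from `(p',k')` to `(pp,kk)` -/
def stmt3Paths (D : P → Set ℝ) (p' : P) (k' : ℝ) (pp : P) (kk : ℝ) :
    Set (List (P × ℝ)) :=
  {γ : List (P × ℝ) | 2 ≤ γ.length ∧ γ.head? = some (p', k') ∧
      γ.getLast? = some (pp, kk) ∧ (∀ q ∈ γ, q.2 ∈ D q.1) ∧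
      List.Chain' (fun q r : P × ℝ => q.2 < r.2) γ}

variable {D : P → Set ℝ} {p' : P} {k' : ℝ}

lemma stmt3Paths_finite
    (hfin : ∀ u v : ℝ, u < v → ((⋃ p, D p) ∩ Set.Ioc u v).Finite)
    [Finite P] (pp : P) (kk : ℝ) (hlt : k' < kk) :
    (stmt3Paths D p' k' pp kk).Finite := by
  haveI : IsTrans (P × ℝ) (fun q r : P × ℝ => q.2 < r.2) :=
    ⟨fun _ _ _ hab hbc => lt_trans hab hbc⟩
  have hS : ({q : P × ℝ | q.2 ∈ D q.1 ∧ q.2 ∈ Set.Icc k' kk}).Finite := by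
    have h1 : ∀ q : P, (D q ∩ Set.Icc k' kk).Finite := by
      intro q
      refine ((hfin (k' - 1) kk (by linarith)).subset ?_)
      rintro x ⟨hx1, hx2, hx3⟩
      exact ⟨Set.mem_iUnion.2 ⟨q, hx1⟩, by linarith, hx3⟩
    refine (Set.finite_iUnion (fun q : P => ((h1 q).image (fun x => (q, x))))).subset ?_
    rintro ⟨q, x⟩ ⟨hx1, hx2⟩
    exact Set.mem_iUnion.2 ⟨q, ⟨x, ⟨hx1, hx2⟩, rfl⟩⟩
  apply (finite_chains (r := fun q r : P × ℝ => q.2 < r.2)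
    (fun _ _ _ hab hbc => lt_trans hab hbc) (fun x => lt_irrefl x.2) hS).subset
  rintro γ ⟨hlen, hhead, hlast, hmem, hchain⟩
  have hp : γ.Pairwise (fun q r : P × ℝ => q.2 < r.2) := List.isChain_iff_pairwise.1 hchain
  refine ⟨fun x hx => ⟨hmem x hx, ?_, ?_⟩, hchain⟩
  · rcases mem_of_pairwise_head hp hhead hx with rfl | hr
    · exact le_refl _
    · exact le_of_lt hr
  · rcases mem_of_pairwise_getLast hp hlast hx with rfl | hr
    · exact le_refl _
    · exact le_of_lt hr

lemma stmt3_key [Fintype P] [DecidableEq P]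
    (hfin : ∀ u v : ℝ, u < v → ((⋃ p, D p) ∩ Set.Ioc u v).Finite)
    (a : P → P → ℝ) (h : P → P → ℝ → ℝ)
    (co : P → ℝ → P → ℝ → ℝ)
    (hco_diag : ∀ p p' k, k ∈ D p → k ∈ D p' → co p k p' k = if p = p' then 1 else 0)
    (hco_rec : ∀ p k p'' k'', k ∈ D p → k'' ∈ D p'' → k'' < k →
      co p k p'' k'' = ∑ p''' : P, ∑ᶠ k''' ∈ D p''' ∩ Set.Ico k'' k,
        a p p''' * h p p''' (k - k''') * co p''' k''' p'' k'')
    (hk' : k' ∈ D p') :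
    ∀ N : ℕ, ∀ pp kk, kk ∈ D pp → k' < kk →
      ∀ hfc : ((⋃ p, D p) ∩ Set.Ioc k' kk).Finite, hfc.toFinset.card ≤ N →
      co pp kk p' k' = ∑ᶠ γ ∈ stmt3Paths D p' k' pp kk, stmt3Y a h γ := by
  intro N
  induction N with
  | zero =>
    intro pp kk hkk hlt hfc hcard
    exfalso
    have hm : kk ∈ hfc.toFinset := by
      simp only [Set.Finite.mem_toFinset, Set.mem_inter_iff, Set.mem_Ioc]
      exact ⟨Set.mem_iUnion.2 ⟨pp, hkk⟩, hlt, le_refl _⟩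
    have := Finset.card_pos.2 ⟨kk, hm⟩
    omega

  | succ N ih =>
    intro pp kk hkk hlt hfc hcard
    classical
    haveI : IsTrans (P × ℝ) (fun q r : P × ℝ => q.2 < r.2) :=
      ⟨fun _ _ _ hab hbc => lt_trans hab hbc⟩
    -- the target point, and abbreviations
    set e : P × ℝ := (pp, kk) with he
    have hE : ∀ q : P, (D q ∩ Set.Ioo k' kk).Finite := fun q =>
      hfc.subset (by rintro x ⟨hx1, hx2, hx3⟩
                     exact ⟨Set.mem_iUnion.2 ⟨q, hx1⟩, hx2, le_of_lt hx3⟩)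
    -- Step 0: members of paths sets ending strictly inside are nonempty etc.
    -- Step 1: splitting the recursion sum
    have hsplit : ∀ q : P,
        (∑ᶠ k'' ∈ D q ∩ Set.Ico k' kk, a pp q * h pp q (kk - k'') * co q k'' p' k')
        = (if q = p' then a pp p' * h pp p' (kk - k') else 0)
          + ∑ᶠ k'' ∈ D q ∩ Set.Ioo k' kk,
              a pp q * h pp q (kk - k'') * co q k'' p' k' := by
      intro q
      have hdecomp : D q ∩ Set.Ico k' kk = (D q ∩ {k'}) ∪ (D q ∩ Set.Ioo k' kk) := by
        ext x
        simp only [Set.mem_inter_iff, Set.mem_union, Set.mem_Ico, Set.mem_Ioo,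
          Set.mem_singleton_iff]
        constructor
        · rintro ⟨hxD, hx1, hx2⟩
          rcases eq_or_lt_of_le hx1 with heq | hx1'
          · exact Or.inl ⟨hxD, heq.symm⟩
          · exact Or.inr ⟨hxD, hx1', hx2⟩
        · rintro (⟨hxD, rfl⟩ | ⟨hxD, h1, h2⟩)
          · exact ⟨hxD, le_refl _, hlt⟩
          · exact ⟨hxD, le_of_lt h1, h2⟩
      rw [hdecomp, finsum_mem_union (by
            refine Set.disjoint_left.2 ?_
            rintro x ⟨_, rfl⟩ ⟨_, hx2, _⟩
            exact lt_irrefl _ hx2)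
          ((Set.finite_singleton k').subset (Set.inter_subset_right)) ?_]
      · congr 1
        by_cases hq : k' ∈ D q
        · have hone : D q ∩ {k'} = {k'} :=
            Set.inter_eq_self_of_subset_right (by simpa using hq)
          rw [hone, finsum_mem_singleton, hco_diag q p' k' hq hk']
          by_cases hqp : q = p' <;> simp [hqp]
        · have hzero : D q ∩ {k'} = (∅ : Set ℝ) := by
            ext x
            simp only [Set.mem_inter_iff, Set.mem_singleton_iff, Set.mem_empty_iff_false,
              iff_false, not_and]
            rintro hxD rfl; exact hq hxD
          rw [hzero, finsum_mem_empty]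
          have hqp : q ≠ p' := by rintro rfl; exact hq hk'
          simp [hqp]
      · exact hE q
    -- Step 2: the induction hypothesis applies strictly inside
    have hrec2 : ∀ q : P, ∀ k'' ∈ D q ∩ Set.Ioo k' kk,
        co q k'' p' k' = ∑ᶠ γ ∈ stmt3Paths D p' k' q k'', stmt3Y a h γ := by
      rintro q k'' ⟨hk''D, hk''1, hk''2⟩
      have hfc' : ((⋃ p, D p) ∩ Set.Ioc k' k'').Finite := hfin k' k'' hk''1
      refine ih q k'' hk''D hk''1 hfc' ?_
      have hsub : hfc'.toFinset ⊆ hfc.toFinset.erase kk := by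
        intro x hx
        simp only [Set.Finite.mem_toFinset, Set.mem_inter_iff, Set.mem_Ioc] at hx
        obtain ⟨hx1, hx2, hx3⟩ := hx
        simp only [Finset.mem_erase, Set.Finite.mem_toFinset, Set.mem_inter_iff, Set.mem_Ioc]
        exact ⟨by rintro rfl; exact absurd hx3 (not_le.2 hk''2),
          hx1, hx2, le_trans hx3 (le_of_lt hk''2)⟩
      have h1 := Finset.card_le_card hsub
      have h2 : (hfc.toFinset.erase kk).card = hfc.toFinset.card - 1 :=
        Finset.card_erase_of_mem (by
          simp only [Set.Finite.mem_toFinset, Set.mem_inter_iff, Set.mem_Ioc]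
          exact ⟨Set.mem_iUnion.2 ⟨pp, hkk⟩, hlt, le_refl _⟩)
      have h3 : 0 < hfc.toFinset.card :=
        Finset.card_pos.2 ⟨kk, by
          simp only [Set.Finite.mem_toFinset, Set.mem_inter_iff, Set.mem_Ioc]
          exact ⟨Set.mem_iUnion.2 ⟨pp, hkk⟩, hlt, le_refl _⟩⟩
      omega
    -- Step 3: appended paths belong to the path set
    have happ_mem : ∀ q : P, ∀ k'' ∈ D q ∩ Set.Ioo k' kk,
        ∀ δ ∈ stmt3Paths D p' k' q k'', (δ ++ [e]) ∈ stmt3Paths D p' k' pp kk := by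
      rintro q k'' ⟨hk''D, hk''1, hk''2⟩ δ ⟨hlen, hhead, hlast, hmem, hchain⟩
      obtain ⟨d, δ', rfl⟩ := List.exists_cons_of_ne_nil
        (List.ne_nil_of_length_pos (by omega) : δ ≠ [])
      refine ⟨by simp only [List.length_append, List.length_singleton]; omega,
        by simpa using hhead,
        by rw [List.getLast?_concat],
        ?_, ?_⟩
      · intro x hx
        rcases List.mem_append.1 hx with hx | hx
        · exact hmem x hx
        · simp only [List.mem_singleton] at hx
          subst hx; exact hkk
      · refine List.isChain_append.2 ⟨hchain, List.isChain_singleton _, ?_⟩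
        intro x hx y hy
        simp only [List.head?_cons, Option.mem_def, Option.some.injEq] at hy
        subst hy
        rw [Option.mem_def, hlast, Option.some_inj] at hx
        subst hx
        exact hk''2
    -- Step 4: characterization of long paths
    have hchar : ∀ γ ∈ stmt3Paths D p' k' pp kk, 3 ≤ γ.length →
        ∃ q : P, ∃ k'', (k'' ∈ D q ∩ Set.Ioo k' kk) ∧
          ∃ δ ∈ stmt3Paths D p' k' q k'', γ = δ ++ [e] := by
      rintro γ ⟨hlen, hhead, hlast, hmem, hchain⟩ hlen3
      have hγne : γ ≠ [] := List.ne_nil_of_length_pos (by omega)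
      obtain ⟨δ, hγeq⟩ : ∃ δ : List (P × ℝ), δ ++ [e] = γ :=
        ⟨γ.dropLast, List.dropLast_append_getLast? e (by rw [Option.mem_def, hlast])⟩
      have hδlen : 2 ≤ δ.length := by
        have hl : δ.length + 1 = γ.length := by rw [← hγeq]; simp
        omega
      have hδne : δ ≠ [] := List.ne_nil_of_length_pos (by omega)
      obtain ⟨w, hwlast⟩ : ∃ w, δ.getLast? = some w :=
        ⟨δ.getLast hδne, List.getLast?_eq_getLast hδne⟩
      have hwmem : w ∈ δ := List.mem_of_mem_getLast? (by rw [Option.mem_def, hwlast])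
      -- chain decomposition
      rw [← hγeq] at hchain
      obtain ⟨hc1, _, hc3⟩ := List.isChain_append.1 hchain
      have hwlt : w.2 < kk := by
        have := hc3 w (by rw [Option.mem_def, hwlast]) e (by simp)
        exact this
      -- head of δ
      have hδhead : δ.head? = some (p', k') := by
        rw [← hγeq] at hhead
        obtain ⟨d, δ', hd⟩ := List.exists_cons_of_ne_nil hδne
        rw [hd] at hhead ⊢
        simpa using hhead
      -- membership
      have hδmem : ∀ x ∈ δ, x ∈ γ := fun x hx => by
        rw [← hγeq]; exact List.mem_append.2 (Or.inl hx)
      -- strict inequality k' < w.2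
      have hp : δ.Pairwise (fun q r : P × ℝ => q.2 < r.2) := List.isChain_iff_pairwise.1 hc1
      have hk'w : k' < w.2 := by
        obtain ⟨d, δ', hd⟩ := List.exists_cons_of_ne_nil hδne
        have hδ'ne : δ' ≠ [] := by
          rw [hd] at hδlen
          intro hc; rw [hc] at hδlen; simp at hδlen
        have hd' : d = (p', k') := by
          rw [hd] at hδhead; simpa using hδhead
        have hwδ' : w ∈ δ' := by
          have h1 : δ'.getLast? = some w := by
            rw [hd] at hwlast
            obtain ⟨c, δ'', rfl⟩ := List.exists_cons_of_ne_nil hδ'ne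
            rwa [List.getLast?_cons_cons] at hwlast
          exact List.mem_of_mem_getLast? (by rw [Option.mem_def, h1])
        have := (List.pairwise_cons.1 (hd ▸ hp)).1 w hwδ'
        rw [hd'] at this
        exact this
      refine ⟨w.1, w.2, ⟨hmem w (hδmem w hwmem), hk'w, hwlt⟩, δ,
        ⟨hδlen, hδhead, by rw [hwlast], fun x hx => hmem x (hδmem x hx), hc1⟩, hγeq.symm⟩
    -- Step 5: the decomposition of the path set
    have hPdecomp : stmt3Paths D p' k' pp kk =
        insert [(p', k'), e]
          (⋃ q : P, ⋃ k'' ∈ D q ∩ Set.Ioo k' kk,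
            (fun δ => δ ++ [e]) '' stmt3Paths D p' k' q k'') := by
      ext γ
      constructor
      · intro hγ
        obtain ⟨hlen, hhead, hlast, hmem, hchain⟩ := hγ
        rcases eq_or_lt_of_le hlen with hlen2 | hlen3
        · left
          obtain ⟨x, y, rfl⟩ := List.length_eq_two.1 hlen2.symm
          have hx : x = (p', k') := by simpa using hhead
          have hy : y = e := by simpa using hlast
          rw [hx, hy]
        · right
          obtain ⟨q, k'', hk''m, δ, hδ, hγeq⟩ :=
            hchar γ ⟨hlen, hhead, hlast, hmem, hchain⟩ hlen3
          exact Set.mem_iUnion.2 ⟨q, Set.mem_iUnion.2 ⟨k'', Set.mem_iUnion.2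
            ⟨hk''m, ⟨δ, hδ, hγeq.symm⟩⟩⟩⟩
      · intro hγ
        rcases Set.mem_insert_iff.1 hγ with rfl | hγ
        · exact ⟨by simp, by simp, by simp [he], by
            intro x hx
            rcases List.mem_cons.1 hx with rfl | hx
            · exact hk'
            · simp only [List.mem_singleton] at hx; subst hx; exact hkk,
            by simp [List.Chain', List.isChain_cons_cons, hlt, he]⟩
        · obtain ⟨q, hq⟩ := Set.mem_iUnion.1 hγ
          obtain ⟨k'', hk''⟩ := Set.mem_iUnion.1 hq
          obtain ⟨hk''m, hγ'⟩ := Set.mem_iUnion.1 hk''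
          obtain ⟨δ, hδ, rfl⟩ := hγ'
          exact happ_mem q k'' hk''m δ hδ
    -- Step 6: weights of appended paths and base path
    have hYapp : ∀ (q : P) (k'' : ℝ), k'' ∈ D q ∩ Set.Ioo k' kk →
        ∀ δ ∈ stmt3Paths D p' k' q k'',
        stmt3Y a h (δ ++ [e]) = stmt3Y a h δ * (a pp q * h pp q (kk - k'')) := by
      rintro q k'' hm δ ⟨hδlen, _, hδlast, _, _⟩
      have hδne : δ ≠ [] := List.ne_nil_of_length_pos (by omega)
      have hlast : δ.getLast hδne = (q, k'') := by
        have h1 := List.getLast?_eq_getLast hδne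
        rw [hδlast] at h1
        exact (Option.some_inj.1 h1).symm
      unfold stmt3Y
      rw [zipTail_append δ hδne e, List.map_append, List.prod_append, hlast]
      simp [stmt3f, he]
    have hlast_of_mem : ∀ (q : P) (k'' : ℝ), ∀ γ ∈ (fun δ => δ ++ [e]) ''
        stmt3Paths D p' k' q k'', γ.dropLast.getLast? = some (q, k'') ∧ 3 ≤ γ.length := by
      rintro q k'' γ ⟨δ, ⟨hδlen, _, hδlast, _, _⟩, rfl⟩
      exact ⟨by rw [List.dropLast_concat]; exact hδlast,
        by simp only [List.length_append, List.length_singleton]; omega⟩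
    -- finiteness of the pieces
    have hUfin : ∀ q : P, (⋃ k'' ∈ D q ∩ Set.Ioo k' kk,
        (fun δ => δ ++ [e]) '' stmt3Paths D p' k' q k'').Finite :=
      fun q => Set.Finite.biUnion (hE q)
        (fun k'' hm => (stmt3Paths_finite hfin q k'' hm.2.1).image _)
    -- disjointness of the pieces
    have hpair : Pairwise (Function.onFun Disjoint (fun q : P => ⋃ k'' ∈ D q ∩ Set.Ioo k' kk,
        (fun δ => δ ++ [e]) '' stmt3Paths D p' k' q k'')) := by
      intro q₁ q₂ hne
      refine Set.disjoint_left.2 ?_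
      intro γ h1 h2
      obtain ⟨k₁, hm₁, hγ₁⟩ := Set.mem_iUnion₂.1 h1
      obtain ⟨k₂, hm₂, hγ₂⟩ := Set.mem_iUnion₂.1 h2
      have e1 := (hlast_of_mem q₁ k₁ γ hγ₁).1
      have e2 := (hlast_of_mem q₂ k₂ γ hγ₂).1
      rw [e1] at e2
      simp only [Option.some_inj, Prod.mk.injEq] at e2
      exact hne e2.1
    have hpd : ∀ q : P, (D q ∩ Set.Ioo k' kk).PairwiseDisjoint
        (fun k'' => (fun δ => δ ++ [e]) '' stmt3Paths D p' k' q k'') := by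
      intro q k₁ hm₁ k₂ hm₂ hne
      refine Set.disjoint_left.2 ?_
      intro γ h1 h2
      have e1 := (hlast_of_mem q k₁ γ h1).1
      have e2 := (hlast_of_mem q k₂ γ h2).1
      rw [e1] at e2
      simp only [Option.some_inj, Prod.mk.injEq] at e2
      exact hne e2.2
    have hbase_disj : Disjoint {[(p', k'), e]} (⋃ q : P, ⋃ k'' ∈ D q ∩ Set.Ioo k' kk,
        (fun δ => δ ++ [e]) '' stmt3Paths D p' k' q k'') := by
      refine Set.disjoint_left.2 ?_
      rintro γ rfl h2
      obtain ⟨q, hq⟩ := Set.mem_iUnion.1 h2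
      obtain ⟨k'', hm, hγ⟩ := Set.mem_iUnion₂.1 hq
      have := (hlast_of_mem q k'' _ hγ).2
      simp at this
    -- left-hand side computation
    have hA : co pp kk p' k' = a pp p' * h pp p' (kk - k')
        + ∑ q : P, ∑ᶠ k'' ∈ D q ∩ Set.Ioo k' kk,
            a pp q * h pp q (kk - k'') *
              ∑ᶠ γ ∈ stmt3Paths D p' k' q k'', stmt3Y a h γ := by
      rw [hco_rec pp kk p' k' hkk hk' hlt]
      calc ∑ q : P, ∑ᶠ k'' ∈ D q ∩ Set.Ico k' kk,
              a pp q * h pp q (kk - k'') * co q k'' p' k'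
          = ∑ q : P, ((if q = p' then a pp p' * h pp p' (kk - k') else 0)
              + ∑ᶠ k'' ∈ D q ∩ Set.Ioo k' kk,
                  a pp q * h pp q (kk - k'') * co q k'' p' k') :=
            Finset.sum_congr rfl (fun q _ => hsplit q)
        _ = (∑ q : P, if q = p' then a pp p' * h pp p' (kk - k') else 0)
              + ∑ q : P, ∑ᶠ k'' ∈ D q ∩ Set.Ioo k' kk,
                  a pp q * h pp q (kk - k'') * co q k'' p' k' :=
            Finset.sum_add_distrib
        _ = a pp p' * h pp p' (kk - k')
              + ∑ q : P, ∑ᶠ k'' ∈ D q ∩ Set.Ioo k' kk,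
                  a pp q * h pp q (kk - k'') *
                    ∑ᶠ γ ∈ stmt3Paths D p' k' q k'', stmt3Y a h γ := by
            congr 1
            · simp
            · refine Finset.sum_congr rfl (fun q _ => finsum_mem_congr rfl (fun k'' hm => ?_))
              rw [hrec2 q k'' hm]
    -- right-hand side computation
    rw [hA, hPdecomp, Set.insert_eq,
      finsum_mem_union hbase_disj (Set.finite_singleton _) (Set.finite_iUnion hUfin),
      finsum_mem_singleton]
    congr 1
    · simp [stmt3Y, stmt3f, he]
    · rw [finsum_mem_iUnion hpair hUfin, finsum_eq_sum_of_fintype]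
      refine Finset.sum_congr rfl (fun q _ => ?_)
      rw [finsum_mem_biUnion (hpd q) (hE q)
        (fun k'' hm => (stmt3Paths_finite hfin q k'' hm.2.1).image _)]
      refine finsum_mem_congr rfl (fun k'' hm => ?_)
      rw [finsum_mem_image ((List.append_left_injective [e]).injOn)]
      rw [finsum_mem_congr rfl (fun δ hδ => hYapp q k'' hm δ hδ)]
      rw [finsum_mem_eq_finite_toFinset_sum _ (stmt3Paths_finite hfin q k'' hm.2.1),
        finsum_mem_eq_finite_toFinset_sum _ (stmt3Paths_finite hfin q k'' hm.2.1),
        ← Finset.sum_mul]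
      ring

end Stmt3Aux

/-- **Proposition 4.4.** Closed form of the coefficients as a sum over paths. -/
theorem stmt_3
    {P : Type*} [Fintype P] [Nonempty P] [DecidableEq P]
    (n : P → ℕ) (hn : ∀ p, 1 ≤ n p)
    (θ : P → ℝ) (hθ0 : ∀ p, 0 ≤ θ p) (hθ1 : ∀ p, θ p < 1 / (n p : ℝ))
    (D : P → Set ℝ)
    (hD : ∀ p, D p = {k : ℝ | ∃ j : ℤ, k = θ p + (j : ℝ) / (n p : ℝ)})
    (hfin : ∀ u v : ℝ, u < v → ((⋃ p, D p) ∩ Set.Ioc u v).Finite)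
    (a : P → P → ℝ) (ha : ∀ p p', 0 ≤ a p p')
    (h : P → P → ℝ → ℝ) (hh : ∀ p p' x, 0 ≤ h p p' x)
    (hh0 : ∀ p p' x, x ≤ 0 → h p p' x = 0)
    -- the coefficients `c(p,k;p',k')`, characterized by the well-founded recursion
    (co : P → ℝ → P → ℝ → ℝ)
    (hco_nonneg : ∀ p k p' k', k ∈ D p → k' ∈ D p' → k' ≤ k → 0 ≤ co p k p' k')
    (hco_diag : ∀ p p' k, k ∈ D p → k ∈ D p' → co p k p' k = if p = p' then 1 else 0)
    (hco_rec : ∀ p k p' k', k ∈ D p → k' ∈ D p' → k' < k →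
      co p k p' k' = ∑ p'' : P, ∑ᶠ k'' ∈ D p'' ∩ Set.Ico k' k,
        a p p'' * h p p'' (k - k'') * co p'' k'' p' k')
    (p p' : P) (k k' : ℝ) (hk : k ∈ D p) (hk' : k' ∈ D p') (hlt : k' < k) :
    {γ : List (P × ℝ) | 2 ≤ γ.length ∧ γ.head? = some (p', k') ∧
        γ.getLast? = some (p, k) ∧ (∀ q ∈ γ, q.2 ∈ D q.1) ∧
        List.Chain' (fun q r : P × ℝ => q.2 < r.2) γ}.Finite ∧
      co p k p' k' =
        ∑ᶠ γ ∈ {γ : List (P × ℝ) | 2 ≤ γ.length ∧ γ.head? = some (p', k') ∧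
            γ.getLast? = some (p, k) ∧ (∀ q ∈ γ, q.2 ∈ D q.1) ∧
            List.Chain' (fun q r : P × ℝ => q.2 < r.2) γ},
          (((γ.zip γ.tail).map fun q : (P × ℝ) × (P × ℝ) =>
              a q.2.1 q.1.1 * h q.2.1 q.1.1 (q.2.2 - q.1.2)).prod) := by
  constructor
  · exact stmt3Paths_finite hfin p k hlt
  · exact stmt3_key hfin a h co hco_diag hco_rec hk' (hfin k' k hlt).toFinset.card
      p k hk hlt (hfin k' k hlt) le_rfl
end

section
/- Ascending summability of the coefficients (Lemma B.1, point 1): For every (p₀,k₀) ∈ Q and every p ∈ P, Σ_{k∈D_p, k ≤ k₀} c(p₀,k₀;p,k) ≤ ((I−H)^{-1})_{p₀,p}, where the left-hand side is a sum in [0,∞] over the countable set D_p ∩ (−∞,k₀]. -/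
open scoped BigOperators ENNReal

section Auxiliary
open scoped NNReal

attribute [local instance] Matrix.linftyOpNormedRing Matrix.linftyOpNormedAlgebra

private lemma neumann_aux {P : Type*} [Fintype P] [DecidableEq P]
    (Hm : Matrix P P ℝ)
    (hspec : spectralRadius ℂ (Hm.map (algebraMap ℝ ℂ)) < 1) :
    ∃ T : Matrix P P ℝ, (1 - Hm) * T = 1 ∧ (1 - Hm)⁻¹ = T ∧
      ∀ p q : P, HasSum (fun n : ℕ => (Hm ^ n) p q) (T p q) := by
  classical
  set f := algebraMap ℝ ℂ with hf
  set M := Hm.map f with hM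
  -- a geometric bound on the norms of powers
  obtain ⟨r, hr1, hr2⟩ := exists_between hspec
  have hrtop : r ≠ ⊤ := ne_top_of_lt hr2
  lift r to ℝ≥0 using hrtop with r' hr'
  have hr'1 : r' < 1 := by exact_mod_cast hr2
  have hgel := spectrum.pow_nnnorm_pow_one_div_tendsto_nhds_spectralRadius M
  have hev : ∀ᶠ n : ℕ in Filter.atTop, (‖M ^ n‖₊ : ℝ≥0∞) ^ (1 / (n : ℝ)) < (r' : ℝ≥0∞) :=
    hgel.eventually_lt_const hr1
  have hev2 : ∀ᶠ n : ℕ in Filter.atTop, ‖M ^ n‖ ≤ (r' : ℝ) ^ n := by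
    filter_upwards [hev, Filter.eventually_ge_atTop 1] with n hn hn1
    have hne : (n : ℝ) ≠ 0 := by positivity
    have : ((‖M ^ n‖₊ : ℝ≥0∞) ^ (1 / (n : ℝ))) ^ (n : ℝ) ≤ ((r' : ℝ≥0∞)) ^ (n : ℝ) :=
      ENNReal.rpow_le_rpow hn.le (by positivity)
    rw [← ENNReal.rpow_mul, one_div, inv_mul_cancel₀ hne, ENNReal.rpow_one,
      ENNReal.rpow_natCast] at this
    have h3 : ‖M ^ n‖₊ ≤ r' ^ n := by exact_mod_cast this
    calc ‖M ^ n‖ = ((‖M ^ n‖₊ : ℝ≥0) : ℝ) := rfl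
    _ ≤ ((r' ^ n : ℝ≥0) : ℝ) := by exact_mod_cast h3
    _ = (r' : ℝ) ^ n := by push_cast; ring
  have hsum : Summable (fun n : ℕ => M ^ n) := by
    refine Summable.of_norm_bounded_eventually_nat (summable_geometric_of_lt_one r'.coe_nonneg hr'1) hev2
  have htend0 : Filter.Tendsto (fun n : ℕ => M ^ n) Filter.atTop (nhds 0) :=
    hsum.tendsto_atTop_zero
  set S := ∑' n : ℕ, M ^ n with hS
  have h1 : (1 - M) * S = 1 := by
    have hps := (hsum.hasSum.mul_left (1 - M)).tendsto_sum_nat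
    refine tendsto_nhds_unique hps ?_
    have ht : Filter.Tendsto (fun n : ℕ => 1 - M ^ n) Filter.atTop (nhds 1) := by
      simpa using Filter.Tendsto.sub (tendsto_const_nhds (x := (1 : Matrix P P ℂ))) htend0
    convert ht using 2 with n
    rw [← Finset.mul_sum, mul_neg_geom_sum]
  have h2 : S * (1 - M) = 1 := by
    have hps := (hsum.hasSum.mul_right (1 - M)).tendsto_sum_nat
    refine tendsto_nhds_unique hps ?_
    have ht : Filter.Tendsto (fun n : ℕ => 1 - M ^ n) Filter.atTop (nhds 1) := by
      simpa using Filter.Tendsto.sub (tendsto_const_nhds (x := (1 : Matrix P P ℂ))) htend0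
    convert ht using 2 with n
    rw [← Finset.sum_mul, geom_sum_mul_neg]
  -- entrywise sums
  have hentry : ∀ p q : P, HasSum (fun n : ℕ => (M ^ n) p q) (S p q) := by
    intro p q
    let φ : Matrix P P ℂ →ₗ[ℂ] ℂ :=
      { toFun := fun A => A p q, map_add' := fun _ _ => rfl, map_smul' := fun _ _ => rfl }
    exact (LinearMap.toContinuousLinearMap φ).hasSum hsum.hasSum
  have hMn : ∀ (n : ℕ) (p q : P), (M ^ n) p q = ((Hm ^ n) p q : ℂ) := by
    intro n p q
    have : M ^ n = (Hm ^ n).map f := by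
      show (Hm.map f) ^ n = (Hm ^ n).map (f : ℝ →+* ℂ)
      rw [← RingHom.mapMatrix_apply, ← RingHom.mapMatrix_apply, ← map_pow]
    rw [this]; rfl
  set T : Matrix P P ℝ := Matrix.of (fun p q => (S p q).re) with hT
  have hTsum : ∀ p q : P, HasSum (fun n : ℕ => (Hm ^ n) p q) (T p q) := by
    intro p q
    have := Complex.hasSum_re (hentry p q)
    simp only [hMn, Complex.ofReal_re] at this
    exact this
  have hST : S = T.map f := by
    ext p q
    have h1 : HasSum (fun n : ℕ => ((Hm ^ n) p q : ℂ)) (S p q) := by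
      simpa only [hMn] using hentry p q
    have h2 : HasSum (fun n : ℕ => ((Hm ^ n) p q : ℂ)) ((T p q : ℂ)) :=
      Complex.hasSum_ofReal.mpr (hTsum p q)
    rw [Matrix.map_apply]
    exact (h1.unique h2) ▸ rfl
  have hinj : Function.Injective f := f.injective
  have hmap1 : (1 : Matrix P P ℝ).map (f : ℝ → ℂ) = 1 := Matrix.map_one _ (map_zero f) (map_one f)
  have hmul : (1 - Hm) * T = 1 := by
    apply Matrix.map_injective hinj
    show ((1 - Hm) * T).map (f : ℝ → ℂ) = (1 : Matrix P P ℝ).map (f : ℝ → ℂ)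
    have e1 : ((1 - Hm) * T).map (f : ℝ → ℂ) = ((1 - Hm).map (f : ℝ → ℂ)) * (T.map (f : ℝ → ℂ)) := by
      rw [← RingHom.mapMatrix_apply, ← RingHom.mapMatrix_apply, ← RingHom.mapMatrix_apply, map_mul]
    have e2 : (1 - Hm).map (f : ℝ → ℂ) = 1 - M := by
      rw [← RingHom.mapMatrix_apply, map_sub, map_one, RingHom.mapMatrix_apply]
    rw [e1, e2, ← hST, hmap1, h1]
  refine ⟨T, hmul, Matrix.inv_eq_right_inv hmul, hTsum⟩

private lemma pow_entry_nonneg {P : Type*} [Fintype P] [DecidableEq P]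
    (Hm : Matrix P P ℝ) (hHm0 : ∀ p q, 0 ≤ Hm p q) (n : ℕ) :
    ∀ p q, 0 ≤ (Hm ^ n) p q := by
  induction n with
  | zero => intro p q; simp [Matrix.one_apply]; positivity
  | succ n ih =>
    intro p q
    rw [pow_succ, Matrix.mul_apply]
    exact Finset.sum_nonneg fun i _ => mul_nonneg (ih p i) (hHm0 i q)

private lemma neumann_props {P : Type*} [Fintype P] [DecidableEq P]
    (Hm : Matrix P P ℝ) (hHm0 : ∀ p q, 0 ≤ Hm p q)
    (hmulT : (1 - Hm) * (1 - Hm)⁻¹ = 1)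
    (hTsum : ∀ p q : P, HasSum (fun n : ℕ => (Hm ^ n) p q) ((1 - Hm)⁻¹ p q)) :
    (∀ p q, 0 ≤ (1 - Hm)⁻¹ p q) ∧
    (∀ p q, (1 - Hm)⁻¹ p q =
      (if p = q then (1 : ℝ) else 0) + ∑ p'', Hm p p'' * (1 - Hm)⁻¹ p'' q) := by
  constructor
  · intro p q
    exact (hTsum p q).nonneg fun n => pow_entry_nonneg Hm hHm0 n p q
  · intro p q
    have h : (1 - Hm)⁻¹ = 1 + Hm * (1 - Hm)⁻¹ := by
      have := hmulT
      rw [sub_mul, one_mul] at this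
      exact sub_eq_iff_eq_add.mp this
    calc (1 - Hm)⁻¹ p q = (1 + Hm * (1 - Hm)⁻¹) p q := by rw [← h]
    _ = _ := by rw [Matrix.add_apply, Matrix.one_apply, Matrix.mul_apply]

private lemma hbound {P : Type*}
    (n : P → ℕ) (θ : P → ℝ) (D : P → Set ℝ)
    (hD : ∀ p, D p = {k : ℝ | ∃ j : ℤ, k = θ p + (j : ℝ) / (n p : ℝ)})
    (a : P → P → ℝ) (ha : ∀ p p', 0 ≤ a p p')
    (h : P → P → ℝ → ℝ) (hh : ∀ p p' x, 0 ≤ h p p' x)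
    (Hm : Matrix P P ℝ) (hHm0 : ∀ p p', 0 ≤ Hm p p')
    (hHm : ∀ p p', ENNReal.ofReal (Hm p p') =
      ENNReal.ofReal (a p p') *
        ⨆ x : ℝ, ∑' j : ℤ, ENNReal.ofReal (h p p' (x + (j : ℝ) / (n p' : ℝ))))
    (p p'' : P) (k : ℝ) (F : Finset ℝ) (hF : ↑F ⊆ D p'') :
    ∑ k'' ∈ F, a p p'' * h p p'' (k - k'') ≤ Hm p p'' := by
  classical
  rw [← ENNReal.ofReal_le_ofReal_iff (hHm0 p p''), hHm p p'']
  rw [ENNReal.ofReal_sum_of_nonneg (fun i _ => mul_nonneg (ha p p'') (hh p p'' _))]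
  have hterm : ∀ i ∈ F, ENNReal.ofReal (a p p'' * h p p'' (k - i)) =
      ENNReal.ofReal (a p p'') * ENNReal.ofReal (h p p'' (k - i)) :=
    fun i _ => ENNReal.ofReal_mul (ha p p'')
  rw [Finset.sum_congr rfl hterm, ← Finset.mul_sum]
  refine mul_le_mul_right ?_ _
  refine le_trans ?_ (le_iSup (fun x : ℝ => ∑' j : ℤ,
    ENNReal.ofReal (h p p'' (x + (j : ℝ) / (n p'' : ℝ)))) (k - θ p''))
  -- choose, for each grid point, its integer index
  set e : ℝ → ℤ := fun x =>
    if hx : ∃ j : ℤ, x = θ p'' + (j : ℝ) / (n p'' : ℝ) then -hx.choose else 0 with he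
  have hspec : ∀ x ∈ F, x = θ p'' + ((-(e x) : ℤ) : ℝ) / (n p'' : ℝ) := by
    intro x hx
    have hx' : x ∈ D p'' := hF hx
    rw [hD p''] at hx'
    obtain ⟨j, hj⟩ := hx'
    have hex : ∃ j : ℤ, x = θ p'' + (j : ℝ) / (n p'' : ℝ) := ⟨j, hj⟩
    simp only [he, dif_pos hex, neg_neg]
    exact hex.choose_spec
  have hinj : Set.InjOn e F := by
    intro x hx y hy hxy
    rw [hspec x hx, hspec y hy, hxy]
  have hval : ∀ x ∈ F, ENNReal.ofReal (h p p'' (k - x)) =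
      ENNReal.ofReal (h p p'' ((k - θ p'') + ((e x : ℤ) : ℝ) / (n p'' : ℝ))) := by
    intro x hx
    have hs := hspec x hx
    rw [Int.cast_neg, neg_div] at hs
    congr 2
    linarith
  calc ∑ x ∈ F, ENNReal.ofReal (h p p'' (k - x))
      = ∑ x ∈ F, ENNReal.ofReal (h p p'' ((k - θ p'') + ((e x : ℤ) : ℝ) / (n p'' : ℝ))) :=
        Finset.sum_congr rfl hval
    _ = ∑ j ∈ F.image e, ENNReal.ofReal (h p p'' ((k - θ p'') + (j : ℝ) / (n p'' : ℝ))) :=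
        (Finset.sum_image (g := e) (f := fun j : ℤ => ENNReal.ofReal (h p p'' ((k - θ p'') + (j : ℝ) / (n p'' : ℝ)))) (fun x hx y hy hxy => hinj hx hy hxy)).symm
    _ ≤ ∑' j : ℤ, ENNReal.ofReal (h p p'' ((k - θ p'') + (j : ℝ) / (n p'' : ℝ))) :=
        ENNReal.sum_le_tsum _

private lemma key_induction {P : Type*} [Fintype P] [DecidableEq P]
    (D : P → Set ℝ)
    (hfin : ∀ u v : ℝ, u < v → ((⋃ p, D p) ∩ Set.Ioc u v).Finite)
    (a : P → P → ℝ) (ha : ∀ p p', 0 ≤ a p p')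
    (h : P → P → ℝ → ℝ) (hh : ∀ p p' x, 0 ≤ h p p' x)
    (co : P → ℝ → P → ℝ → ℝ)
    (hco_nonneg : ∀ p k p' k', k ∈ D p → k' ∈ D p' → k' ≤ k → 0 ≤ co p k p' k')
    (hco_diag : ∀ p p' k, k ∈ D p → k ∈ D p' → co p k p' k = if p = p' then 1 else 0)
    (hco_rec : ∀ p k p' k', k ∈ D p → k' ∈ D p' → k' < k →
      co p k p' k' = ∑ p'' : P, ∑ᶠ k'' ∈ D p'' ∩ Set.Ico k' k,
        a p p'' * h p p'' (k - k'') * co p'' k'' p' k')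
    (Hm : Matrix P P ℝ)
    (hHb : ∀ (p p'' : P) (k : ℝ) (F : Finset ℝ), ↑F ⊆ D p'' →
       ∑ k'' ∈ F, a p p'' * h p p'' (k - k'') ≤ Hm p p'')
    (B : P → P → ℝ) (hB0 : ∀ p q, 0 ≤ B p q)
    (hBrec : ∀ p q, B p q = (if p = q then (1:ℝ) else 0) + ∑ p'', Hm p p'' * B p'' q) :
    ∀ (N : ℕ) (u : ℝ) (p₀ : P) (k₀ : ℝ), k₀ ∈ D p₀ →
      (∀ hlt : u < k₀, ((hfin u k₀ hlt).toFinset.card ≤ N)) → ∀ p : P,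
      ∑ᶠ k ∈ D p ∩ Set.Ioc u k₀, co p₀ k₀ p k ≤ B p₀ p := by
  classical
  intro N
  induction N with
  | zero =>
    intro u p₀ k₀ hk₀ hcard p
    rcases lt_or_ge u k₀ with hu | hu
    · exfalso
      have hmem : k₀ ∈ (hfin u k₀ hu).toFinset := by
        rw [Set.Finite.mem_toFinset]
        exact ⟨Set.mem_iUnion.mpr ⟨p₀, hk₀⟩, hu, le_refl _⟩
      have h1 := Finset.card_pos.mpr ⟨k₀, hmem⟩
      have h2 := hcard hu
      omega
    · rw [Set.Ioc_eq_empty (not_lt.mpr hu), Set.inter_empty, finsum_mem_empty]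
      exact hB0 _ _
  | succ N ih =>
    intro u p₀ k₀ hk₀ hcard p'
    rcases lt_or_ge u k₀ with hu | hu
    swap
    · rw [Set.Ioc_eq_empty (not_lt.mpr hu), Set.inter_empty, finsum_mem_empty]
      exact hB0 _ _
    set G := (⋃ p, D p) with hG
    have hGfin : (G ∩ Set.Ioc u k₀).Finite := hfin u k₀ hu
    set A₀ : Finset ℝ := hGfin.toFinset with hA₀
    have hmemA₀ : ∀ x : ℝ, x ∈ A₀ ↔ x ∈ G ∧ u < x ∧ x ≤ k₀ := by
      intro x; rw [hA₀, Set.Finite.mem_toFinset]; exact Iff.rfl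
    have hk₀A₀ : k₀ ∈ A₀ := (hmemA₀ k₀).mpr ⟨Set.mem_iUnion.mpr ⟨p₀, hk₀⟩, hu, le_refl _⟩
    have hcardA₀ : A₀.card ≤ N + 1 := hcard hu
    have hSfin : (D p' ∩ Set.Ioc u k₀).Finite :=
      hGfin.subset (Set.inter_subset_inter_left _ (Set.subset_iUnion D p'))
    rw [finsum_mem_eq_finite_toFinset_sum _ hSfin]
    set A : Finset ℝ := hSfin.toFinset with hA
    have hmemA : ∀ x : ℝ, x ∈ A ↔ x ∈ D p' ∧ u < x ∧ x ≤ k₀ := by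
      intro x; rw [hA, Set.Finite.mem_toFinset]; exact Iff.rfl
    rw [← Finset.sum_filter_add_sum_filter_not A (fun k => k = k₀)]
    -- the diagonal term
    have hterm1 : ∑ k ∈ A.filter (fun k => k = k₀), co p₀ k₀ p' k ≤
        (if p₀ = p' then (1:ℝ) else 0) := by
      by_cases hk : k₀ ∈ A
      · have heq : A.filter (fun k => k = k₀) = {k₀} := by
          ext x
          simp only [Finset.mem_filter, Finset.mem_singleton]
          exact ⟨fun hx => hx.2, fun hx => ⟨hx ▸ hk, hx⟩⟩
        rw [heq, Finset.sum_singleton,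
          hco_diag p₀ p' k₀ hk₀ ((hmemA k₀).mp hk).1]
      · have heq : A.filter (fun k => k = k₀) = ∅ := by
          ext x
          simp only [Finset.mem_filter, Finset.notMem_empty, iff_false, not_and]
          intro hx hx'
          exact hk (hx' ▸ hx)
        rw [heq, Finset.sum_empty]
        split <;> norm_num
    -- the off-diagonal terms
    have hterm2 : ∑ k ∈ A.filter (fun k => ¬ k = k₀), co p₀ k₀ p' k ≤
        ∑ p'' : P, Hm p₀ p'' * B p'' p' := by
      set A' : Finset ℝ := A.filter (fun k => ¬ k = k₀) with hA'
      have hmemA' : ∀ x : ℝ, x ∈ A' ↔ x ∈ D p' ∧ u < x ∧ x < k₀ := by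
        intro x
        rw [hA', Finset.mem_filter, hmemA]
        constructor
        · rintro ⟨⟨h1, h2, h3⟩, h4⟩; exact ⟨h1, h2, lt_of_le_of_ne h3 h4⟩
        · rintro ⟨h1, h2, h3⟩; exact ⟨⟨h1, h2, h3.le⟩, h3.ne⟩
      -- finite inner index sets
      have hI : ∀ (p'' : P) (k : ℝ), k ∈ A' →
          D p'' ∩ Set.Ico k k₀ = ↑(A₀.filter (fun x => x ∈ D p'' ∧ k ≤ x ∧ x < k₀)) := by
        intro p'' k hk
        obtain ⟨hk1, hk2, hk3⟩ := (hmemA' k).mp hk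
        ext x
        simp only [Finset.coe_filter, Set.mem_inter_iff, Set.mem_Ico, Set.mem_setOf_eq,
          hmemA₀]
        constructor
        · rintro ⟨hx1, hx2, hx3⟩
          exact ⟨⟨Set.mem_iUnion.mpr ⟨p'', hx1⟩, lt_of_lt_of_le hk2 hx2, hx3.le⟩, hx1, hx2, hx3⟩
        · rintro ⟨_, hx1, hx2, hx3⟩
          exact ⟨hx1, hx2, hx3⟩
      -- rewrite each coefficient by the recursion and swap sums
      have hrw : ∑ k ∈ A', co p₀ k₀ p' k =
          ∑ p'' : P, ∑ k ∈ A', ∑ k'' ∈ A₀.filter (fun x => x ∈ D p'' ∧ k ≤ x ∧ x < k₀),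
            a p₀ p'' * h p₀ p'' (k₀ - k'') * co p'' k'' p' k := by
        rw [← Finset.sum_comm]
        refine Finset.sum_congr rfl fun k hk => ?_
        obtain ⟨hk1, hk2, hk3⟩ := (hmemA' k).mp hk
        rw [hco_rec p₀ k₀ p' k hk₀ hk1 hk3]
        refine Finset.sum_congr rfl fun p'' _ => ?_
        rw [hI p'' k hk, finsum_mem_coe_finset]
      rw [hrw]
      refine Finset.sum_le_sum fun p'' _ => ?_
      -- swap the order of summation over k and k''
      have hswap : ∑ k ∈ A', ∑ k'' ∈ A₀.filter (fun x => x ∈ D p'' ∧ k ≤ x ∧ x < k₀),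
            a p₀ p'' * h p₀ p'' (k₀ - k'') * co p'' k'' p' k =
          ∑ k'' ∈ A₀.filter (fun x => x ∈ D p'' ∧ x < k₀),
            ∑ k ∈ A₀.filter (fun x => x ∈ D p' ∧ u < x ∧ x ≤ k''),
            a p₀ p'' * h p₀ p'' (k₀ - k'') * co p'' k'' p' k := by
        refine Finset.sum_comm' fun k k'' => ?_
        simp only [Finset.mem_filter, hmemA', hmemA₀]
        constructor
        · rintro ⟨⟨h1, h2, h3⟩, ⟨h4, h5, h6, h7⟩⟩
          exact ⟨⟨⟨Set.mem_iUnion.mpr ⟨p', h1⟩, h2, h3.le⟩, h1, h2, h6⟩, h4, h5, h7⟩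
        · rintro ⟨⟨⟨h1, h2, h3⟩, h4, h5, h6⟩, ⟨h7, h8⟩⟩
          exact ⟨⟨h4, h5, lt_of_le_of_lt h6 h8.2⟩, h7, ⟨h8.1, h6, h8.2⟩⟩
      rw [hswap]
      -- bound the inner sums by `B` using the induction hypothesis
      have hinner : ∀ k'' ∈ A₀.filter (fun x => x ∈ D p'' ∧ x < k₀),
          ∑ k ∈ A₀.filter (fun x => x ∈ D p' ∧ u < x ∧ x ≤ k''), co p'' k'' p' k ≤ B p'' p' := by
        intro k'' hk''
        rw [Finset.mem_filter, hmemA₀] at hk''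
        obtain ⟨⟨_, hku, hkk₀⟩, hkD, hklt⟩ := hk''
        have hcard' : ∀ hlt : u < k'', ((hfin u k'' hlt).toFinset.card ≤ N) := by
          intro hlt
          have hsub : (hfin u k'' hlt).toFinset ⊆ A₀.erase k₀ := by
            intro x hx
            rw [Set.Finite.mem_toFinset] at hx
            obtain ⟨hx1, hx2, hx3⟩ := hx
            refine Finset.mem_erase.mpr ⟨?_, (hmemA₀ x).mpr ⟨hx1, hx2, hx3.trans hklt.le⟩⟩
            exact ne_of_lt (lt_of_le_of_lt hx3 hklt)
          calc (hfin u k'' hlt).toFinset.card ≤ (A₀.erase k₀).card := Finset.card_le_card hsub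
          _ = A₀.card - 1 := Finset.card_erase_of_mem hk₀A₀
          _ ≤ N := by omega
        have := ih u p'' k'' hkD hcard' p'
        have hset : D p' ∩ Set.Ioc u k'' =
            ↑(A₀.filter (fun x => x ∈ D p' ∧ u < x ∧ x ≤ k'')) := by
          ext x
          simp only [Finset.coe_filter, Set.mem_inter_iff, Set.mem_Ioc, Set.mem_setOf_eq, hmemA₀]
          constructor
          · rintro ⟨hx1, hx2, hx3⟩
            exact ⟨⟨Set.mem_iUnion.mpr ⟨p', hx1⟩, hx2, hx3.trans hkk₀⟩, hx1, hx2, hx3⟩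
          · rintro ⟨_, hx1, hx2, hx3⟩
            exact ⟨hx1, hx2, hx3⟩
        rwa [hset, finsum_mem_coe_finset] at this
      calc ∑ k'' ∈ A₀.filter (fun x => x ∈ D p'' ∧ x < k₀),
            ∑ k ∈ A₀.filter (fun x => x ∈ D p' ∧ u < x ∧ x ≤ k''),
            a p₀ p'' * h p₀ p'' (k₀ - k'') * co p'' k'' p' k
          = ∑ k'' ∈ A₀.filter (fun x => x ∈ D p'' ∧ x < k₀),
            a p₀ p'' * h p₀ p'' (k₀ - k'') *
              ∑ k ∈ A₀.filter (fun x => x ∈ D p' ∧ u < x ∧ x ≤ k''), co p'' k'' p' k := by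
            refine Finset.sum_congr rfl fun k'' _ => ?_
            rw [Finset.mul_sum]
        _ ≤ ∑ k'' ∈ A₀.filter (fun x => x ∈ D p'' ∧ x < k₀),
            a p₀ p'' * h p₀ p'' (k₀ - k'') * B p'' p' := by
            refine Finset.sum_le_sum fun k'' hk'' => ?_
            exact mul_le_mul_of_nonneg_left (hinner k'' hk'')
              (mul_nonneg (ha _ _) (hh _ _ _))
        _ = (∑ k'' ∈ A₀.filter (fun x => x ∈ D p'' ∧ x < k₀),
            a p₀ p'' * h p₀ p'' (k₀ - k'')) * B p'' p' := by rw [Finset.sum_mul]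
        _ ≤ Hm p₀ p'' * B p'' p' := by
            refine mul_le_mul_of_nonneg_right ?_ (hB0 _ _)
            refine hHb p₀ p'' k₀ _ ?_
            intro x hx
            rw [Finset.mem_coe, Finset.mem_filter] at hx
            exact hx.2.1
    calc ∑ k ∈ A.filter (fun k => k = k₀), co p₀ k₀ p' k +
          ∑ k ∈ A.filter (fun k => ¬ k = k₀), co p₀ k₀ p' k
        ≤ (if p₀ = p' then (1:ℝ) else 0) + ∑ p'' : P, Hm p₀ p'' * B p'' p' :=
          add_le_add hterm1 hterm2
      _ = B p₀ p' := (hBrec p₀ p').symm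

end Auxiliary

/-- **Lemma B.1, point 1.** Ascending summability of the coefficients. -/
theorem stmt_4
    {P : Type*} [Fintype P] [Nonempty P] [DecidableEq P]
    (n : P → ℕ) (hn : ∀ p, 1 ≤ n p)
    (θ : P → ℝ) (hθ0 : ∀ p, 0 ≤ θ p) (hθ1 : ∀ p, θ p < 1 / (n p : ℝ))
    (D : P → Set ℝ)
    (hD : ∀ p, D p = {k : ℝ | ∃ j : ℤ, k = θ p + (j : ℝ) / (n p : ℝ)})
    (hfin : ∀ u v : ℝ, u < v → ((⋃ p, D p) ∩ Set.Ioc u v).Finite)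
    (a : P → P → ℝ) (ha : ∀ p p', 0 ≤ a p p')
    (h : P → P → ℝ → ℝ) (hh : ∀ p p' x, 0 ≤ h p p' x)
    (hh0 : ∀ p p' x, x ≤ 0 → h p p' x = 0)
    -- the coefficients `c(p,k;p',k')`, characterized by the well-founded recursion
    (co : P → ℝ → P → ℝ → ℝ)
    (hco_nonneg : ∀ p k p' k', k ∈ D p → k' ∈ D p' → k' ≤ k → 0 ≤ co p k p' k')
    (hco_diag : ∀ p p' k, k ∈ D p → k ∈ D p' → co p k p' k = if p = p' then 1 else 0)
    (hco_rec : ∀ p k p' k', k ∈ D p → k' ∈ D p' → k' < k →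
      co p k p' k' = ∑ p'' : P, ∑ᶠ k'' ∈ D p'' ∩ Set.Ico k' k,
        a p p'' * h p p'' (k - k'') * co p'' k'' p' k')
    -- the matrix `H` of the interaction norms: its entries are finite reals
    (Hm : Matrix P P ℝ) (hHm0 : ∀ p p', 0 ≤ Hm p p')
    (hHm : ∀ p p', ENNReal.ofReal (Hm p p') =
      ENNReal.ofReal (a p p') *
        ⨆ x : ℝ, ∑' j : ℤ, ENNReal.ofReal (h p p' (x + (j : ℝ) / (n p' : ℝ))))
    -- the spectral radius of `H` is strictly less than 1
    (hspec : spectralRadius ℂ (Hm.map (algebraMap ℝ ℂ)) < 1) :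
    ∀ (p₀ : P) (k₀ : ℝ), k₀ ∈ D p₀ → ∀ p : P,
      ∑' k : (D p ∩ Set.Iic k₀ : Set ℝ), ENNReal.ofReal (co p₀ k₀ p (k : ℝ)) ≤
        ENNReal.ofReal ((1 - Hm)⁻¹ p₀ p) := by
  classical
  obtain ⟨T, hmulT, hinvT, hTsum⟩ := neumann_aux Hm hspec
  have hmulT' : (1 - Hm) * (1 - Hm)⁻¹ = 1 := by rw [hinvT]; exact hmulT
  have hTsum' : ∀ p q : P, HasSum (fun m : ℕ => (Hm ^ m) p q) ((1 - Hm)⁻¹ p q) := by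
    intro p q; rw [hinvT]; exact hTsum p q
  obtain ⟨hB0, hBrec⟩ := neumann_props Hm hHm0 hmulT' hTsum'
  have hHb : ∀ (p p'' : P) (k : ℝ) (F : Finset ℝ), ↑F ⊆ D p'' →
      ∑ k'' ∈ F, a p p'' * h p p'' (k - k'') ≤ Hm p p'' :=
    hbound n θ D hD a ha h hh Hm hHm0 hHm
  have key := key_induction D hfin a ha h hh co hco_nonneg hco_diag hco_rec Hm hHb
    (fun p q => (1 - Hm)⁻¹ p q) (fun p q => hB0 p q) (fun p q => hBrec p q)
  intro p₀ k₀ hk₀ p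
  rw [ENNReal.tsum_eq_iSup_sum]
  refine iSup_le fun s => ?_
  set F : Finset ℝ := Finset.image Subtype.val s with hF
  have hFmem : ∀ x ∈ F, x ∈ D p ∧ x ≤ k₀ := by
    intro x hx
    rw [hF, Finset.mem_image] at hx
    obtain ⟨i, _, rfl⟩ := hx
    exact i.2
  have hsum_eq : ∑ i ∈ s, ENNReal.ofReal (co p₀ k₀ p (i : ℝ)) =
      ∑ x ∈ F, ENNReal.ofReal (co p₀ k₀ p x) := by
    rw [hF]
    exact (Finset.sum_image (f := fun x : ℝ => ENNReal.ofReal (co p₀ k₀ p x)) (g := Subtype.val)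
      fun x _ y _ hxy => Subtype.ext hxy).symm
  rw [hsum_eq]
  set u : ℝ := (insert k₀ F).min' (Finset.insert_nonempty _ _) - 1 with hu_def
  have hu : u < k₀ := by
    have := (insert k₀ F).min'_le k₀ (Finset.mem_insert_self _ _)
    rw [hu_def]; linarith
  have huF : ∀ x ∈ F, u < x := by
    intro x hx
    have := (insert k₀ F).min'_le x (Finset.mem_insert_of_mem hx)
    rw [hu_def]; linarith
  have hSfin : (D p ∩ Set.Ioc u k₀).Finite :=
    (hfin u k₀ hu).subset (Set.inter_subset_inter_left _ (Set.subset_iUnion D p))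
  have hsub : F ⊆ hSfin.toFinset := by
    intro x hx
    rw [Set.Finite.mem_toFinset]
    exact ⟨(hFmem x hx).1, huF x hx, (hFmem x hx).2⟩
  have hkey := key ((hfin u k₀ hu).toFinset.card) u p₀ k₀ hk₀ (fun _ => le_refl _) p
  rw [finsum_mem_eq_finite_toFinset_sum _ hSfin] at hkey
  calc ∑ x ∈ F, ENNReal.ofReal (co p₀ k₀ p x)
      = ENNReal.ofReal (∑ x ∈ F, co p₀ k₀ p x) :=
        (ENNReal.ofReal_sum_of_nonneg fun x hx =>
          hco_nonneg p₀ k₀ p x hk₀ (hFmem x hx).1 (hFmem x hx).2).symm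
    _ ≤ ENNReal.ofReal (∑ x ∈ hSfin.toFinset, co p₀ k₀ p x) := by
        refine ENNReal.ofReal_le_ofReal ?_
        refine Finset.sum_le_sum_of_subset_of_nonneg hsub fun x hx _ => ?_
        rw [Set.Finite.mem_toFinset] at hx
        exact hco_nonneg p₀ k₀ p x hk₀ hx.1 hx.2.2
    _ ≤ ENNReal.ofReal ((1 - Hm)⁻¹ p₀ p) := ENNReal.ofReal_le_ofReal hkey
end

section
/- The two-sided representation solves the chain equation (Lemma B.1, point 3): Let Z : Q → [0,∞] and define V : Q → [0,∞] by V(p,k) = Σ_{p'∈P} Σ_{k'∈D_{p'}, k' ≤ k} c(p,k;p',k') Z(p',k') (a sum in [0,∞]). Then for every (p,k) ∈ Q, V(p,k) = Z(p,k) + Σ_{p'∈P} Σ_{k'∈D_{p'}, k' < k} a^p_{p'} h^p_{p'}(k−k') V(p',k'), an identity in [0,∞]. -/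
open scoped BigOperators ENNReal

/-- **Lemma B.1, point 3.**
The two-sided representation solves the chain equation. -/
theorem stmt_6
    {P : Type*} [Fintype P] [Nonempty P] [DecidableEq P]
    (n : P → ℕ) (hn : ∀ p, 1 ≤ n p)
    (θ : P → ℝ) (hθ0 : ∀ p, 0 ≤ θ p) (hθ1 : ∀ p, θ p < 1 / (n p : ℝ))
    (D : P → Set ℝ)
    (hD : ∀ p, D p = {k : ℝ | ∃ j : ℤ, k = θ p + (j : ℝ) / (n p : ℝ)})
    (hfin : ∀ u v : ℝ, u < v → ((⋃ p, D p) ∩ Set.Ioc u v).Finite)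
    (a : P → P → ℝ) (ha : ∀ p p', 0 ≤ a p p')
    (h : P → P → ℝ → ℝ) (hh : ∀ p p' x, 0 ≤ h p p' x)
    (hh0 : ∀ p p' x, x ≤ 0 → h p p' x = 0)
    -- the coefficients `c(p,k;p',k')`, characterized by the well-founded recursion
    (co : P → ℝ → P → ℝ → ℝ)
    (hco_nonneg : ∀ p k p' k', k ∈ D p → k' ∈ D p' → k' ≤ k → 0 ≤ co p k p' k')
    (hco_diag : ∀ p p' k, k ∈ D p → k ∈ D p' → co p k p' k = if p = p' then 1 else 0)
    (hco_rec : ∀ p k p' k', k ∈ D p → k' ∈ D p' → k' < k →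
      co p k p' k' = ∑ p'' : P, ∑ᶠ k'' ∈ D p'' ∩ Set.Ico k' k,
        a p p'' * h p p'' (k - k'') * co p'' k'' p' k')
    -- `Z : Q → [0,∞]` and `V` its two-sided representation via the coefficients
    (Z V : P → ℝ → ℝ≥0∞)
    (hVdef : ∀ (p : P) (k : ℝ), k ∈ D p →
      V p k = ∑ p' : P, ∑' k' : (D p' ∩ Set.Iic k : Set ℝ),
        ENNReal.ofReal (co p k p' (k' : ℝ)) * Z p' (k' : ℝ)) :
    ∀ (p : P) (k : ℝ), k ∈ D p →
      V p k = Z p k + ∑ p' : P, ∑' k' : (D p' ∩ Set.Iio k : Set ℝ),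
        ENNReal.ofReal (a p p' * h p p' (k - (k' : ℝ))) * V p' (k' : ℝ) := by
  intro p k hk
  classical
  have hfinIco : ∀ (p'' : P) (k' : ℝ), k' < k → (D p'' ∩ Set.Ico k' k).Finite := fun p'' k' hk' =>
    (hfin (k' - 1) k (by linarith)).subset (by
      rintro x ⟨hx1, hx2, hx3⟩
      exact ⟨Set.mem_iUnion.2 ⟨p'', hx1⟩, by linarith, hx3.le⟩)
  set g : P → P → ℝ → ℝ → ℝ≥0∞ := fun p' p'' k' k'' =>
    if k' ∈ D p' ∧ k'' ∈ D p'' ∧ k' ≤ k'' ∧ k'' < k then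
      ENNReal.ofReal (a p p'' * h p p'' (k - k'') * co p'' k'' p' k') * Z p' k'
    else 0 with hgdef
  -- Claim B : expansion of the coefficient by the recursion
  have claimB : ∀ (p' : P) (k' : ℝ), k' ∈ D p' → k' < k →
      ENNReal.ofReal (co p k p' k') * Z p' k' = ∑ p'' : P, ∑' k'' : ℝ, g p' p'' k' k'' := by
    intro p' k' hk'D hk'lt
    have hS : ∀ p'' : P, (D p'' ∩ Set.Ico k' k).Finite := fun p'' => hfinIco p'' k' hk'lt
    have hnn : ∀ (p'' : P) (k'' : ℝ), k'' ∈ (hS p'').toFinset →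
        0 ≤ a p p'' * h p p'' (k - k'') * co p'' k'' p' k' := by
      intro p'' k'' hk''
      have hm := (hS p'').mem_toFinset.mp hk''
      exact mul_nonneg (mul_nonneg (ha _ _) (hh _ _ _))
        (hco_nonneg p'' k'' p' k' hm.1 hk'D hm.2.1)
    have h1 : co p k p' k' = ∑ p'' : P, ∑ k'' ∈ (hS p'').toFinset,
        a p p'' * h p p'' (k - k'') * co p'' k'' p' k' := by
      rw [hco_rec p k p' k' hk hk'D hk'lt]
      exact Finset.sum_congr rfl fun p'' _ =>
        finsum_mem_eq_finite_toFinset_sum _ (hS p'')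
    have h2 : ENNReal.ofReal (co p k p' k') = ∑ p'' : P, ∑ k'' ∈ (hS p'').toFinset,
        ENNReal.ofReal (a p p'' * h p p'' (k - k'') * co p'' k'' p' k') := by
      rw [h1, ENNReal.ofReal_sum_of_nonneg (fun p'' _ => Finset.sum_nonneg (hnn p''))]
      exact Finset.sum_congr rfl fun p'' _ => ENNReal.ofReal_sum_of_nonneg (hnn p'')
    rw [h2, Finset.sum_mul]
    refine Finset.sum_congr rfl fun p'' _ => ?_
    rw [Finset.sum_mul]
    symm
    simp only [hgdef]
    rw [tsum_eq_sum (s := (hS p'').toFinset)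
      (fun k'' hk'' => if_neg fun hc => hk'' ((hS p'').mem_toFinset.mpr ⟨hc.2.1, hc.2.2.1, hc.2.2.2⟩))]
    refine Finset.sum_congr rfl fun k'' hk'' => ?_
    have hm := (hS p'').mem_toFinset.mp hk''
    exact if_pos ⟨hk'D, hm.1, hm.2.1, hm.2.2⟩
  -- Claim C : expansion of `V p'' k''`
  have claimC : ∀ (p'' : P) (k'' : ℝ), k'' ∈ D p'' → k'' < k →
      ENNReal.ofReal (a p p'' * h p p'' (k - k'')) * V p'' k''
        = ∑ p' : P, ∑' k' : ℝ, g p' p'' k' k'' := by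
    intro p'' k'' hk''D hk''lt
    rw [hVdef p'' k'' hk''D, Finset.mul_sum]
    refine Finset.sum_congr rfl fun p' _ => ?_
    rw [← ENNReal.tsum_mul_left, tsum_subtype (D p' ∩ Set.Iic k'')
      (fun k' => ENNReal.ofReal (a p p'' * h p p'' (k - k'')) * (ENNReal.ofReal (co p'' k'' p' k') * Z p' k'))]
    refine tsum_congr fun k' => ?_
    rw [Set.indicator_apply]
    simp only [hgdef]
    by_cases hc : k' ∈ D p' ∩ Set.Iic k''
    · rw [if_pos hc, if_pos ⟨hc.1, hk''D, hc.2, hk''lt⟩,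
        ENNReal.ofReal_mul (mul_nonneg (ha _ _) (hh _ _ _)), mul_assoc]
    · rw [if_neg hc, if_neg fun hcc => hc ⟨hcc.1, hcc.2.2.1⟩]
  -- Claim A : splitting off the diagonal term
  have claimA : ∀ p' : P,
      (∑' k' : (D p' ∩ Set.Iic k : Set ℝ), ENNReal.ofReal (co p k p' (k' : ℝ)) * Z p' (k' : ℝ))
      = (∑' k' : ℝ, if k' ∈ D p' ∧ k' < k then ENNReal.ofReal (co p k p' k') * Z p' k' else 0)
        + (if p' = p then Z p k else 0) := by
    intro p'
    rw [tsum_subtype (D p' ∩ Set.Iic k)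
      (fun k' => ENNReal.ofReal (co p k p' k') * Z p' k')]
    have hsplit : ∀ k' : ℝ,
        (D p' ∩ Set.Iic k).indicator (fun k' => ENNReal.ofReal (co p k p' k') * Z p' k') k'
        = (if k' ∈ D p' ∧ k' < k then ENNReal.ofReal (co p k p' k') * Z p' k' else 0)
          + (if k' = k ∧ k' ∈ D p' then ENNReal.ofReal (co p k p' k') * Z p' k' else 0) := by
      intro k'
      rw [Set.indicator_apply]
      by_cases hD' : k' ∈ D p'
      · by_cases heq : k' = k
        · subst heq
          rw [if_pos ⟨hD', Set.mem_Iic.mpr le_rfl⟩, if_neg (fun hc => lt_irrefl k' hc.2),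
            if_pos ⟨rfl, hD'⟩, zero_add]
        · by_cases hlt : k' < k
          · rw [if_pos ⟨hD', hlt.le⟩, if_pos ⟨hD', hlt⟩, if_neg (fun hc => heq hc.1), add_zero]
          · rw [if_neg (fun hc => hlt (lt_of_le_of_ne hc.2 heq)),
              if_neg (fun hc => hlt hc.2), if_neg (fun hc => heq hc.1), add_zero]
      · rw [if_neg (fun hc => hD' hc.1), if_neg (fun hc => hD' hc.1),
          if_neg (fun hc => hD' hc.2), add_zero]
    rw [tsum_congr hsplit, Summable.tsum_add ENNReal.summable ENNReal.summable]
    congr 1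
    rw [tsum_eq_single k (fun k' hk' => if_neg (fun hc => hk' hc.1))]
    by_cases hDk : k ∈ D p'
    · rw [if_pos ⟨rfl, hDk⟩, hco_diag p p' k hk hDk]
      by_cases hpp : p = p'
      · subst hpp
        rw [if_pos rfl, if_pos rfl, ENNReal.ofReal_one, one_mul]
      · rw [if_neg hpp, if_neg (fun hc => hpp hc.symm), ENNReal.ofReal_zero, zero_mul]
    · rw [if_neg (fun hc => hDk hc.2), if_neg (fun hc : p' = p => hDk (by rw [hc]; exact hk))]
  -- Main computation
  calc V p k
      = ∑ p' : P, ((∑' k' : ℝ, if k' ∈ D p' ∧ k' < k then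
            ENNReal.ofReal (co p k p' k') * Z p' k' else 0)
          + (if p' = p then Z p k else 0)) := by
        rw [hVdef p k hk]
        exact Finset.sum_congr rfl fun p' _ => claimA p'
    _ = (∑ p' : P, ∑' k' : ℝ, if k' ∈ D p' ∧ k' < k then
            ENNReal.ofReal (co p k p' k') * Z p' k' else 0) + Z p k := by
        rw [Finset.sum_add_distrib, Finset.sum_ite_eq' Finset.univ p (fun _ => Z p k),
          if_pos (Finset.mem_univ p)]
    _ = (∑ p' : P, ∑ p'' : P, ∑' k'' : ℝ, ∑' k' : ℝ, g p' p'' k' k'') + Z p k := by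
        congr 1
        refine Finset.sum_congr rfl fun p' _ => ?_
        have step1 : (∑' k' : ℝ, if k' ∈ D p' ∧ k' < k then
              ENNReal.ofReal (co p k p' k') * Z p' k' else 0)
            = ∑' k' : ℝ, ∑ p'' : P, ∑' k'' : ℝ, g p' p'' k' k'' := by
          refine tsum_congr fun k' => ?_
          by_cases hc : k' ∈ D p' ∧ k' < k
          · rw [if_pos hc, claimB p' k' hc.1 hc.2]
          · rw [if_neg hc]
            symm
            refine Finset.sum_eq_zero fun p'' _ => ENNReal.tsum_eq_zero.mpr fun k'' => ?_
            simp only [hgdef]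
            exact if_neg fun hcc => hc ⟨hcc.1, lt_of_le_of_lt hcc.2.2.1 hcc.2.2.2⟩
        rw [step1, Summable.tsum_finsetSum (fun _ _ => ENNReal.summable)]
        exact Finset.sum_congr rfl fun p'' _ => ENNReal.tsum_comm
    _ = Z p k + ∑ p' : P, ∑' k' : (D p' ∩ Set.Iio k : Set ℝ),
          ENNReal.ofReal (a p p' * h p p' (k - (k' : ℝ))) * V p' (k' : ℝ) := by
        rw [add_comm]
        congr 1
        rw [Finset.sum_comm]
        refine Finset.sum_congr rfl fun p'' _ => ?_
        rw [← Summable.tsum_finsetSum (fun _ _ => ENNReal.summable), tsum_subtype (D p'' ∩ Set.Iio k)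
          (fun k'' => ENNReal.ofReal (a p p'' * h p p'' (k - k'')) * V p'' k'')]
        refine tsum_congr fun k'' => ?_
        rw [Set.indicator_apply]
        by_cases hc : k'' ∈ D p'' ∩ Set.Iio k
        · rw [if_pos hc, claimC p'' k'' hc.1 hc.2]
        · rw [if_neg hc]
          refine Finset.sum_eq_zero fun p' _ => ENNReal.tsum_eq_zero.mpr fun k' => ?_
          simp only [hgdef]
          exact if_neg fun hcc => hc ⟨hcc.2.1, hcc.2.2.2⟩
end

section
/- Vanishing of L¹-bounded solutions of the homogeneous chain equation (Proposition B.2, first part): Let (Ω,𝒜,ℙ) be a probability space and, for each (p,k) ∈ Q, let V(p,k) : Ω → ℝ be a random variable, with sup_{(p,k)∈Q} E[|V(p,k)|] < ∞. Assume that for every (p,k) ∈ Q, almost surely the family (a^p_{p'} h^p_{p'}(k−k') V(p',k'))_{p'∈P, k'∈D_{p'}, k'<k} is absolutely summable with sum equal to V(p,k). Then for every (p,k) ∈ Q, V(p,k) = 0 almost surely. -/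
open scoped BigOperators ENNReal
open MeasureTheory

set_option maxHeartbeats 1000000

open Filter Topology

attribute [local instance] Matrix.linftyOpNormedRing Matrix.linftyOpNormedAlgebra

lemma aux_entry_tendsto {P : Type*} [Fintype P] [Nonempty P] [DecidableEq P]
    (Hm : Matrix P P ℝ) (hHm0 : ∀ p q, 0 ≤ Hm p q)
    (hspec : spectralRadius ℂ (Hm.map (algebraMap ℝ ℂ)) < 1) (p q : P) :
    Tendsto (fun N : ℕ => ENNReal.ofReal ((Hm ^ N) p q)) atTop (𝓝 0) := by
  set A := Hm.map (algebraMap ℝ ℂ) with hA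
  have hnorm : Tendsto (fun N : ℕ => (‖A ^ N‖₊ : ℝ≥0∞)) atTop (𝓝 0) := by
    have hg := spectrum.pow_nnnorm_pow_one_div_tendsto_nhds_spectralRadius A
    obtain ⟨r, hr1, hr2⟩ := exists_between hspec
    have hev : ∀ᶠ N : ℕ in atTop, (‖A ^ N‖₊ : ℝ≥0∞) ^ (1 / (N:ℝ)) < r :=
      hg.eventually_lt_const hr1
    have hev2 : ∀ᶠ N : ℕ in atTop, (‖A ^ N‖₊ : ℝ≥0∞) ≤ r ^ N := by
      filter_upwards [hev, eventually_gt_atTop 0] with N hN hN0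
      have : ((‖A ^ N‖₊ : ℝ≥0∞) ^ (1 / (N:ℝ))) ^ (N:ℝ) ≤ r ^ (N:ℝ) :=
        ENNReal.rpow_le_rpow hN.le (by positivity)
      rwa [← ENNReal.rpow_mul, one_div, inv_mul_cancel₀ (by exact_mod_cast hN0.ne' : (N:ℝ) ≠ 0),
        ENNReal.rpow_one, ENNReal.rpow_natCast] at this
    exact tendsto_of_tendsto_of_tendsto_of_le_of_le' tendsto_const_nhds
      (ENNReal.tendsto_pow_atTop_nhds_zero_of_lt_one hr2)
      (Eventually.of_forall fun _ => zero_le) hev2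
  have hbnd : ∀ N : ℕ, ENNReal.ofReal ((Hm ^ N) p q) ≤ (‖A ^ N‖₊ : ℝ≥0∞) := by
    intro N
    have hmap : A ^ N = (Hm ^ N).map (algebraMap ℝ ℂ) := by
      rw [hA, ← RingHom.mapMatrix_apply, ← RingHom.mapMatrix_apply, ← map_pow]
    have hentry : (A ^ N) p q = ((Hm ^ N) p q : ℂ) := by
      rw [hmap]; rfl
    have h1 : ENNReal.ofReal ((Hm ^ N) p q) ≤ (‖(A ^ N) p q‖₊ : ℝ≥0∞) := by
      rw [hentry]
      rw [Complex.nnnorm_real]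
      exact Real.ofReal_le_enorm _
    refine h1.trans ?_
    rw [ENNReal.coe_le_coe, Matrix.linfty_opNNNorm_def]
    exact le_trans (Finset.single_le_sum (f := fun j => ‖(A ^ N) p j‖₊)
      (fun _ _ => zero_le) (Finset.mem_univ q)) (Finset.le_sup (f := fun i => ∑ j, ‖(A ^ N) i j‖₊) (Finset.mem_univ p))
  exact tendsto_of_tendsto_of_tendsto_of_le_of_le' tendsto_const_nhds hnorm
    (Eventually.of_forall fun _ => zero_le) (Eventually.of_forall hbnd)

/-- **Proposition B.2, first part.**
Vanishing of L¹-bounded solutions of the homogeneous chain equation. -/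
theorem stmt_7
    {P : Type*} [Fintype P] [Nonempty P] [DecidableEq P]
    (n : P → ℕ) (hn : ∀ p, 1 ≤ n p)
    (θ : P → ℝ) (hθ0 : ∀ p, 0 ≤ θ p) (hθ1 : ∀ p, θ p < 1 / (n p : ℝ))
    (D : P → Set ℝ)
    (hD : ∀ p, D p = {k : ℝ | ∃ j : ℤ, k = θ p + (j : ℝ) / (n p : ℝ)})
    (hfin : ∀ u v : ℝ, u < v → ((⋃ p, D p) ∩ Set.Ioc u v).Finite)
    (a : P → P → ℝ) (ha : ∀ p p', 0 ≤ a p p')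
    (h : P → P → ℝ → ℝ) (hh : ∀ p p' x, 0 ≤ h p p' x)
    (hh0 : ∀ p p' x, x ≤ 0 → h p p' x = 0)
    -- the matrix `H` of the interaction norms: its entries are finite reals
    (Hm : Matrix P P ℝ) (hHm0 : ∀ p p', 0 ≤ Hm p p')
    (hHm : ∀ p p', ENNReal.ofReal (Hm p p') =
      ENNReal.ofReal (a p p') *
        ⨆ x : ℝ, ∑' j : ℤ, ENNReal.ofReal (h p p' (x + (j : ℝ) / (n p' : ℝ))))
    -- the spectral radius of `H` is strictly less than 1
    (hspec : spectralRadius ℂ (Hm.map (algebraMap ℝ ℂ)) < 1)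
    -- a probability space and an L¹-bounded solution of the homogeneous equation
    {Ω : Type*} [MeasureSpace Ω] [IsProbabilityMeasure (volume : Measure Ω)]
    (V : P → ℝ → Ω → ℝ)
    (hVmeas : ∀ (p : P) (k : ℝ), k ∈ D p → Measurable (V p k))
    (C : ℝ≥0∞) (hC : C ≠ ⊤)
    (hVL1 : ∀ (p : P) (k : ℝ), k ∈ D p → ∫⁻ ω, ENNReal.ofReal |V p k ω| ≤ C)
    (hVeq : ∀ (p : P) (k : ℝ), k ∈ D p → ∀ᵐ ω,
      Summable (fun i : Σ p' : P, (D p' ∩ Set.Iio k : Set ℝ) =>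
        a p i.1 * h p i.1 (k - (i.2 : ℝ)) * V i.1 (i.2 : ℝ) ω) ∧
      V p k ω = ∑' i : Σ p' : P, (D p' ∩ Set.Iio k : Set ℝ),
        a p i.1 * h p i.1 (k - (i.2 : ℝ)) * V i.1 (i.2 : ℝ) ω) :
    ∀ (p : P) (k : ℝ), k ∈ D p → ∀ᵐ ω, V p k ω = 0 := by
  classical
  set L1 : P → ℝ → ℝ≥0∞ := fun p k => ∫⁻ ω, ENNReal.ofReal |V p k ω| with hL1def
  set M : P → ℝ≥0∞ := fun p => ⨆ (k : ℝ) (_ : k ∈ D p), L1 p k with hMdef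
  have hMC : ∀ p, M p ≤ C := fun p => iSup₂_le fun k hk => hVL1 p k hk
  have hL1M : ∀ p k, k ∈ D p → L1 p k ≤ M p := fun p k hk =>
    le_iSup₂ (f := fun (k : ℝ) (_ : k ∈ D p) => L1 p k) k hk
  -- the inner sum bound
  have hinner : ∀ p q (k : ℝ),
      (∑' k' : (D q ∩ Set.Iio k : Set ℝ), ENNReal.ofReal (h p q (k - (k' : ℝ)))) ≤
        ⨆ x : ℝ, ∑' j : ℤ, ENNReal.ofReal (h p q (x + (j : ℝ) / (n q : ℝ))) := by
    intro p q k
    have hnq : (0 : ℝ) < (n q : ℝ) := by exact_mod_cast (hn q)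
    set g : ℤ → ℝ≥0∞ := fun j => ENNReal.ofReal (h p q ((k - θ q) + ((-j : ℤ) : ℝ) / (n q : ℝ)))
      with hg
    have hJ : ∀ e : (D q ∩ Set.Iio k : Set ℝ), ∃ j : ℤ, (e : ℝ) = θ q + (j : ℝ) / (n q : ℝ) := by
      intro e
      exact Set.ext_iff.mp (hD q) (e : ℝ) |>.mp e.2.1
    choose J hJspec using hJ
    have hJinj : Function.Injective J := by
      intro e1 e2 he
      have : (e1 : ℝ) = (e2 : ℝ) := by rw [hJspec e1, hJspec e2, he]
      exact Subtype.ext this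
    have step1 : (∑' k' : (D q ∩ Set.Iio k : Set ℝ), ENNReal.ofReal (h p q (k - (k' : ℝ)))) ≤
        ∑' j : ℤ, g j := by
      refine Summable.tsum_le_tsum_of_inj J hJinj (fun c _ => zero_le) (fun e => le_of_eq ?_)
        ENNReal.summable ENNReal.summable
      rw [hg]
      congr 1
      rw [hJspec e]
      push_cast
      ring
    have step2 : (∑' j : ℤ, g j) =
        ∑' j : ℤ, ENNReal.ofReal (h p q ((k - θ q) + (j : ℝ) / (n q : ℝ))) := by
      exact (Equiv.neg ℤ).tsum_eq (fun j : ℤ => ENNReal.ofReal (h p q ((k - θ q) + (j : ℝ) / (n q : ℝ))))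
    refine (step1.trans step2.le).trans ?_
    exact le_iSup (fun x : ℝ => ∑' j : ℤ, ENNReal.ofReal (h p q (x + (j : ℝ) / (n q : ℝ)))) (k - θ q)
  -- one-step inequality
  have step : ∀ p k, k ∈ D p → L1 p k ≤ ∑ q, ENNReal.ofReal (Hm p q) * M q := by
    intro p k hk
    have hae : ∀ᵐ ω, ENNReal.ofReal |V p k ω| ≤
        ∑' i : Σ q : P, (D q ∩ Set.Iio k : Set ℝ),
          ENNReal.ofReal (a p i.1 * h p i.1 (k - (i.2 : ℝ))) *
            ENNReal.ofReal |V i.1 (i.2 : ℝ) ω| := by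
      filter_upwards [hVeq p k hk] with ω hω
      obtain ⟨hsum, heq⟩ := hω
      rw [heq]
      set F : (Σ q : P, (D q ∩ Set.Iio k : Set ℝ)) → ℝ :=
        fun i => a p i.1 * h p i.1 (k - (i.2 : ℝ)) * V i.1 (i.2 : ℝ) ω with hF
      have hsum' : Summable (fun i => ‖F i‖) := by
        simpa only [Real.norm_eq_abs] using hsum.abs
      have h1 : |∑' i, F i| ≤ ∑' i, |F i| := by
        simpa only [Real.norm_eq_abs] using norm_tsum_le_tsum_norm hsum'
      refine (ENNReal.ofReal_le_ofReal h1).trans ?_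
      rw [ENNReal.ofReal_tsum_of_nonneg (fun i => abs_nonneg _) hsum.abs]
      refine Summable.tsum_le_tsum (fun i => ?_) ENNReal.summable ENNReal.summable
      rw [abs_mul, abs_of_nonneg (mul_nonneg (ha p i.1) (hh p i.1 _)),
        ENNReal.ofReal_mul (mul_nonneg (ha p i.1) (hh p i.1 _))]
    have hcount : ∀ q : P, (D q ∩ Set.Iio k : Set ℝ).Countable := by
      intro q
      have hsub : D q ⊆ Set.range (fun j : ℤ => θ q + (j : ℝ) / (n q : ℝ)) := by
        rw [hD q]; rintro x ⟨j, rfl⟩; exact ⟨j, rfl⟩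
      exact ((Set.countable_range _).mono hsub).mono Set.inter_subset_left
    haveI : ∀ q : P, Countable (D q ∩ Set.Iio k : Set ℝ) := fun q => (hcount q).to_subtype
    have hmeasi : ∀ i : Σ q : P, (D q ∩ Set.Iio k : Set ℝ),
        Measurable (fun ω => ENNReal.ofReal (a p i.1 * h p i.1 (k - (i.2 : ℝ))) *
          ENNReal.ofReal |V i.1 (i.2 : ℝ) ω|) := fun i =>
      ((hVmeas i.1 (i.2 : ℝ) i.2.2.1).abs.ennreal_ofReal).const_mul _
    calc L1 p k = ∫⁻ ω, ENNReal.ofReal |V p k ω| := rfl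
      _ ≤ ∫⁻ ω, ∑' i : Σ q : P, (D q ∩ Set.Iio k : Set ℝ),
            ENNReal.ofReal (a p i.1 * h p i.1 (k - (i.2 : ℝ))) *
              ENNReal.ofReal |V i.1 (i.2 : ℝ) ω| := lintegral_mono_ae hae
      _ = ∑' i : Σ q : P, (D q ∩ Set.Iio k : Set ℝ),
            ∫⁻ ω, ENNReal.ofReal (a p i.1 * h p i.1 (k - (i.2 : ℝ))) *
              ENNReal.ofReal |V i.1 (i.2 : ℝ) ω| :=
          lintegral_tsum (fun i => (hmeasi i).aemeasurable)
      _ = ∑' i : Σ q : P, (D q ∩ Set.Iio k : Set ℝ),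
            ENNReal.ofReal (a p i.1 * h p i.1 (k - (i.2 : ℝ))) * L1 i.1 (i.2 : ℝ) := by
          refine tsum_congr fun i => ?_
          rw [hL1def]
          exact lintegral_const_mul _ ((hVmeas i.1 (i.2 : ℝ) i.2.2.1).abs.ennreal_ofReal)
      _ ≤ ∑' i : Σ q : P, (D q ∩ Set.Iio k : Set ℝ),
            (ENNReal.ofReal (a p i.1) * ENNReal.ofReal (h p i.1 (k - (i.2 : ℝ)))) * M i.1 := by
          refine Summable.tsum_le_tsum (fun i => ?_) ENNReal.summable ENNReal.summable
          rw [← ENNReal.ofReal_mul (ha p i.1)]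
          exact mul_le_mul_right (hL1M i.1 (i.2 : ℝ) i.2.2.1) _
      _ = ∑ q : P, ∑' k' : (D q ∩ Set.Iio k : Set ℝ),
            (ENNReal.ofReal (a p q) * ENNReal.ofReal (h p q (k - (k' : ℝ)))) * M q := by
          rw [ENNReal.tsum_sigma', tsum_fintype]
      _ = ∑ q : P, ENNReal.ofReal (a p q) *
            (∑' k' : (D q ∩ Set.Iio k : Set ℝ), ENNReal.ofReal (h p q (k - (k' : ℝ)))) * M q := by
          refine Finset.sum_congr rfl fun q _ => ?_
          rw [ENNReal.tsum_mul_right, ENNReal.tsum_mul_left]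
      _ ≤ ∑ q : P, ENNReal.ofReal (Hm p q) * M q := by
          refine Finset.sum_le_sum fun q _ => ?_
          rw [hHm p q]
          exact mul_le_mul_left (mul_le_mul_right (hinner p q k) _) _
  have hstepM : ∀ p, M p ≤ ∑ q, ENNReal.ofReal (Hm p q) * M q := fun p =>
    iSup₂_le fun k hk => step p k hk
  -- nonnegativity of powers
  have hpow0 : ∀ N : ℕ, ∀ p q, 0 ≤ (Hm ^ N) p q := by
    intro N
    induction N with
    | zero => intro p q; by_cases hpq : p = q <;> simp [Matrix.one_apply, hpq]
    | succ N ih =>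
      intro p q
      rw [pow_succ, Matrix.mul_apply]
      exact Finset.sum_nonneg fun r _ => mul_nonneg (ih p r) (hHm0 r q)
  -- iteration
  have hiter : ∀ N : ℕ, ∀ p, M p ≤ ∑ q, ENNReal.ofReal ((Hm ^ N) p q) * M q := by
    intro N
    induction N with
    | zero =>
      intro p
      simp [Matrix.one_apply, apply_ite ENNReal.ofReal]
    | succ N ih =>
      intro p
      calc M p ≤ ∑ q, ENNReal.ofReal (Hm p q) * M q := hstepM p
        _ ≤ ∑ q, ENNReal.ofReal (Hm p q) * (∑ r, ENNReal.ofReal ((Hm ^ N) q r) * M r) :=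
            Finset.sum_le_sum fun q _ => mul_le_mul_right (ih q) _
        _ = ∑ r, (∑ q, ENNReal.ofReal (Hm p q) * ENNReal.ofReal ((Hm ^ N) q r)) * M r := by
            simp_rw [Finset.mul_sum, Finset.sum_mul]
            rw [Finset.sum_comm]
            simp_rw [mul_assoc]
        _ = ∑ r, ENNReal.ofReal ((Hm ^ (N + 1)) p r) * M r := by
            refine Finset.sum_congr rfl fun r _ => ?_
            congr 1
            rw [pow_succ', Matrix.mul_apply, ENNReal.ofReal_sum_of_nonneg]
            · exact Finset.sum_congr rfl fun q _ =>
                (ENNReal.ofReal_mul (hHm0 p q)).symm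
            · exact fun q _ => mul_nonneg (hHm0 p q) (hpow0 N q r)
  -- conclude M = 0
  have hM0 : ∀ p, M p = 0 := by
    intro p
    have hb : ∀ N : ℕ, M p ≤ ∑ q, ENNReal.ofReal ((Hm ^ N) p q) * C := fun N =>
      (hiter N p).trans (Finset.sum_le_sum fun q _ => mul_le_mul_right (hMC q) _)
    have ht : Filter.Tendsto (fun N : ℕ => ∑ q, ENNReal.ofReal ((Hm ^ N) p q) * C)
        Filter.atTop (𝓝 0) := by
      have : Filter.Tendsto (fun N : ℕ => ∑ q, ENNReal.ofReal ((Hm ^ N) p q) * C)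
          Filter.atTop (𝓝 (∑ q : P, 0 * C)) := by
        refine tendsto_finset_sum _ fun q _ => ?_
        exact ENNReal.Tendsto.mul_const (aux_entry_tendsto Hm hHm0 hspec p q) (Or.inr hC)
      simpa using this
    exact le_antisymm (ge_of_tendsto' ht hb) zero_le
  -- conclude V = 0 a.e.
  intro p k hk
  have hL10 : L1 p k = 0 := le_antisymm ((hL1M p k hk).trans (hM0 p).le) zero_le
  have := (lintegral_eq_zero_iff ((hVmeas p k hk).abs.ennreal_ofReal)).mp hL10
  filter_upwards [this] with ω hω
  have : ENNReal.ofReal |V p k ω| = 0 := hω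
  rw [ENNReal.ofReal_eq_zero] at this
  exact abs_nonpos_iff.mp this
end

section
/- Exponential decay of the coefficients (Proposition 6.1, first part): Assume in addition that there exist constants K₀, c₀ > 0 such that h^p_{p'}(x) ≤ K₀ e^{−c₀ x} for all p, p' ∈ P and all x > 0. Then there exist constants K, c > 0 such that for all (p,k),(p',k') ∈ Q with k' ≤ k, c(p,k;p',k') ≤ K e^{−c(k−k')}. -/
open scoped BigOperators ENNReal



section Gelfand
attribute [local instance] Matrix.linftyOpNormedRing Matrix.linftyOpNormedAlgebra

lemma aux_entry_le_norm {P : Type*} [Fintype P] [DecidableEq P]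
    (A : Matrix P P ℂ) (i j : P) : ‖A i j‖ ≤ ‖A‖ := by
  have h1 : ‖A i j‖₊ ≤ ∑ j', ‖A i j'‖₊ :=
    Finset.single_le_sum (f := fun j' => ‖A i j'‖₊) (fun _ _ => zero_le) (Finset.mem_univ j)
  have h2 : (∑ j', ‖A i j'‖₊) ≤ ‖A‖₊ := by
    rw [Matrix.linfty_opNNNorm_def]
    exact Finset.le_sup (f := fun i => ∑ j', ‖A i j'‖₊) (Finset.mem_univ i)
  exact_mod_cast h1.trans h2

lemma aux_gelfand {P : Type*} [Fintype P] [DecidableEq P] [Nonempty P]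
    (A : Matrix P P ℂ) (hA : spectralRadius ℂ A < 1) :
    ∃ C ρ : ℝ, 0 < C ∧ 0 < ρ ∧ ρ < 1 ∧ ∀ m : ℕ, ∀ i j, ‖(A ^ m) i j‖ ≤ C * ρ ^ m := by
  obtain ⟨r, hr1, hr2⟩ := ENNReal.lt_iff_exists_nnreal_btwn.mp hA
  have hrlt1 : (r : ℝ) < 1 := by exact_mod_cast (by exact_mod_cast hr2 : (r : ℝ≥0∞) < 1)
  set ρ : ℝ := ((r : ℝ) + 1) / 2 with hρdef
  have hρ0 : 0 < ρ := by positivity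
  have hρ1 : ρ < 1 := by simp only [hρdef]; linarith
  have hrρ : (r : ℝ) ≤ ρ := by simp only [hρdef]; linarith
  have hT := spectrum.pow_nnnorm_pow_one_div_tendsto_nhds_spectralRadius A
  have hev : ∀ᶠ m : ℕ in Filter.atTop, (‖A ^ m‖₊ : ℝ≥0∞) ^ (1 / (m:ℝ)) < (r : ℝ≥0∞) :=
    hT.eventually_lt_const hr1
  obtain ⟨M, hM⟩ := (Filter.eventually_atTop).mp hev
  have hbd : ∀ m : ℕ, M ≤ m → 1 ≤ m → ‖A ^ m‖ ≤ (r : ℝ) ^ m := by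
    intro m hMm h1m
    have h := hM m hMm
    have hm0 : (m : ℝ) ≠ 0 := by positivity
    have h2 : ((‖A ^ m‖₊ : ℝ≥0∞) ^ (1 / (m:ℝ))) ^ (m : ℝ) ≤ ((r : ℝ≥0∞)) ^ (m : ℝ) :=
      ENNReal.rpow_le_rpow h.le (by positivity)
    rw [← ENNReal.rpow_mul, one_div, inv_mul_cancel₀ hm0, ENNReal.rpow_one,
      ENNReal.rpow_natCast] at h2
    have h3 : ‖A ^ m‖₊ ≤ r ^ m := by exact_mod_cast h2
    exact_mod_cast h3
  set C : ℝ := 1 + ∑ i ∈ Finset.range (M + 1), ‖A ^ i‖ / ρ ^ i with hC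
  have hC1 : 1 ≤ C := by
    have : 0 ≤ ∑ i ∈ Finset.range (M + 1), ‖A ^ i‖ / ρ ^ i :=
      Finset.sum_nonneg fun i _ => by positivity
    simp only [hC]; linarith
  refine ⟨C, ρ, by linarith, hρ0, hρ1, fun m i j => ?_⟩
  have hnorm : ‖A ^ m‖ ≤ C * ρ ^ m := by
    rcases le_or_gt M m with hMm | hmM
    · rcases Nat.eq_zero_or_pos m with h0 | h1
      · subst h0
        simp only [pow_zero, mul_one]
        calc ‖A ^ 0‖ = ‖A ^ 0‖ / ρ ^ 0 := by simp
          _ ≤ ∑ i ∈ Finset.range (M + 1), ‖A ^ i‖ / ρ ^ i :=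
            Finset.single_le_sum (f := fun i => ‖A ^ i‖ / ρ ^ i)
              (fun i _ => by positivity) (Finset.mem_range.mpr (Nat.succ_pos M))
          _ ≤ C := by simp only [hC]; linarith
      · calc ‖A ^ m‖ ≤ (r : ℝ) ^ m := hbd m hMm h1
          _ ≤ ρ ^ m := pow_le_pow_left₀ (by positivity) hrρ m
          _ ≤ C * ρ ^ m := le_mul_of_one_le_left (by positivity) hC1
    · have hmem : m ∈ Finset.range (M + 1) := Finset.mem_range.mpr (by omega)
      have : ‖A ^ m‖ / ρ ^ m ≤ C := by
        calc ‖A ^ m‖ / ρ ^ m ≤ ∑ i ∈ Finset.range (M + 1), ‖A ^ i‖ / ρ ^ i :=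
          Finset.single_le_sum (f := fun i => ‖A ^ i‖ / ρ ^ i) (fun i _ => by positivity) hmem
          _ ≤ C := by simp only [hC]; linarith
      calc ‖A ^ m‖ = (‖A ^ m‖ / ρ ^ m) * ρ ^ m := by field_simp
        _ ≤ C * ρ ^ m := by
            apply mul_le_mul_of_nonneg_right this (by positivity)
  exact (aux_entry_le_norm (A ^ m) i j).trans hnorm
end Gelfand


lemma aux_pow_nonneg {P : Type*} [Fintype P] [DecidableEq P]
    (Hm : Matrix P P ℝ) (h0 : ∀ p q, 0 ≤ Hm p q) (m : ℕ) :
    ∀ p q, 0 ≤ (Hm ^ m) p q := by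
  induction m with
  | zero => intro p q; simp [Matrix.one_apply]; split <;> norm_num
  | succ m ih =>
    intro p q
    rw [pow_succ', Matrix.mul_apply]
    exact Finset.sum_nonneg fun r _ => mul_nonneg (h0 p r) (ih r q)

lemma aux_real_entries {P : Type*} [Fintype P] [DecidableEq P] [Nonempty P]
    (Hm : Matrix P P ℝ) (h0 : ∀ p q, 0 ≤ Hm p q)
    (hspec : spectralRadius ℂ (Hm.map (algebraMap ℝ ℂ)) < 1) :
    ∃ C ρ : ℝ, 0 < C ∧ 0 < ρ ∧ ρ < 1 ∧ ∀ m : ℕ, ∀ p q, (Hm ^ m) p q ≤ C * ρ ^ m := by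
  obtain ⟨C, ρ, hC, hρ0, hρ1, hb⟩ := aux_gelfand _ hspec
  refine ⟨C, ρ, hC, hρ0, hρ1, fun m p q => ?_⟩
  have hmap : (Hm.map (algebraMap ℝ ℂ)) ^ m = (Hm ^ m).map (algebraMap ℝ ℂ) := by
    rw [← RingHom.mapMatrix_apply, ← RingHom.mapMatrix_apply, map_pow]
  have := hb m p q
  rw [hmap] at this
  have h2 : ‖algebraMap ℝ ℂ ((Hm ^ m) p q)‖ = |(Hm ^ m) p q| := by
    simp [Complex.norm_real]
  rw [Matrix.map_apply, h2, abs_of_nonneg (aux_pow_nonneg Hm h0 m p q)] at this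
  exact this

lemma aux_w {P : Type*} [Fintype P] [DecidableEq P] [Nonempty P]
    (Hm : Matrix P P ℝ) (h0 : ∀ p q, 0 ≤ Hm p q)
    (hspec : spectralRadius ℂ (Hm.map (algebraMap ℝ ℂ)) < 1) :
    ∃ (w : P → ℝ) (ρ' : ℝ), 0 < ρ' ∧ ρ' < 1 ∧ (∀ p, 1 ≤ w p) ∧
      ∀ p, ∑ q, Hm p q * w q = ρ' * (w p - 1) := by
  obtain ⟨C, ρ, hC, hρ0, hρ1, hb⟩ := aux_real_entries Hm h0 hspec
  set ρ' : ℝ := (ρ + 1) / 2 with hρ'def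
  have hρ'0 : 0 < ρ' := by positivity
  have hρ'1 : ρ' < 1 := by simp only [hρ'def]; linarith
  have hρρ' : ρ < ρ' := by simp only [hρ'def]; linarith
  set s : ℕ → P → ℝ := fun m p => ∑ q, (Hm ^ m) p q with hsdef
  have hs0 : ∀ m p, 0 ≤ s m p := fun m p =>
    Finset.sum_nonneg fun q _ => aux_pow_nonneg Hm h0 m p q
  have hsb : ∀ m p, s m p ≤ (Fintype.card P * C) * ρ ^ m := by
    intro m p
    calc s m p ≤ ∑ _q : P, C * ρ ^ m := Finset.sum_le_sum fun q _ => hb m p q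
      _ = (Fintype.card P * C) * ρ ^ m := by
          rw [Finset.sum_const, Finset.card_univ, nsmul_eq_mul]; ring
  set f : P → ℕ → ℝ := fun p m => ρ'⁻¹ ^ m * s m p with hfdef
  have hf0 : ∀ p m, 0 ≤ f p m := fun p m => mul_nonneg (by positivity) (hs0 m p)
  have hfb : ∀ p m, f p m ≤ (Fintype.card P * C) * (ρ / ρ') ^ m := by
    intro p m
    calc f p m ≤ ρ'⁻¹ ^ m * ((Fintype.card P * C) * ρ ^ m) :=
          mul_le_mul_of_nonneg_left (hsb m p) (by positivity)
      _ = (Fintype.card P * C) * (ρ / ρ') ^ m := by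
          rw [div_pow]; field_simp
          rw [← mul_pow, one_div, inv_mul_cancel₀ hρ'0.ne', one_pow]
  have hgeo : Summable (fun m : ℕ => (Fintype.card P * C) * (ρ / ρ') ^ m) :=
    (summable_geometric_of_lt_one (by positivity) (by
      rw [div_lt_one hρ'0]; exact hρρ')).mul_left _
  have hsum : ∀ p, Summable (f p) := fun p =>
    Summable.of_nonneg_of_le (hf0 p) (hfb p) hgeo
  set w : P → ℝ := fun p => ∑' m, f p m with hwdef
  have hf00 : ∀ p, f p 0 = 1 := by
    intro p
    simp only [hfdef, pow_zero, one_mul, hsdef]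
    simp [Matrix.one_apply]
  have hw1 : ∀ p, 1 ≤ w p := by
    intro p
    have := Summable.le_tsum (hsum p) 0 (fun i _ => hf0 p i)
    rw [hf00 p] at this
    exact this
  refine ⟨w, ρ', hρ'0, hρ'1, hw1, fun p => ?_⟩
  have key1 : ∀ m, ∑ q, Hm p q * f q m = ρ' * f p (m + 1) := by
    intro m
    have hss : ∑ q, Hm p q * s m q = s (m + 1) p := by
      simp only [hsdef]
      rw [pow_succ']
      simp only [Matrix.mul_apply]
      rw [Finset.sum_comm]
      congr 1; ext q
      rw [Finset.mul_sum]
    calc ∑ q, Hm p q * f q m = ρ'⁻¹ ^ m * ∑ q, Hm p q * s m q := by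
          simp only [hfdef]; rw [Finset.mul_sum]; congr 1; ext q; ring
      _ = ρ'⁻¹ ^ m * s (m + 1) p := by rw [hss]
      _ = ρ' * f p (m + 1) := by
          simp only [hfdef, pow_succ]
          field_simp
  have hshift : Summable (fun m => f p (m + 1)) := (summable_nat_add_iff 1).mpr (hsum p)
  calc ∑ q, Hm p q * w q = ∑ q, ∑' m, Hm p q * f q m := by
        congr 1; ext q; rw [tsum_mul_left]
    _ = ∑' m, ∑ q, Hm p q * f q m :=
        (Summable.tsum_finsetSum (fun q _ => (hsum q).mul_left _)).symm
    _ = ∑' m, ρ' * f p (m + 1) := by congr 1; ext m; exact key1 m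
    _ = ρ' * ∑' m, f p (m + 1) := tsum_mul_left
    _ = ρ' * (w p - 1) := by
        have := Summable.tsum_eq_zero_add (hsum p)
        rw [hf00 p] at this
        have h2 : ∑' m, f p (m + 1) = w p - 1 := by
          show ∑' m, f p (m + 1) = (∑' m, f p m) - 1
          linarith [this]
        rw [h2]


lemma aux_grid_sum (n : ℕ) (hn : 1 ≤ n) (θ : ℝ) (g : ℝ → ℝ)
    (S : Finset ℝ) (hS : ∀ x ∈ S, ∃ j : ℤ, x = θ + (j : ℝ) / (n : ℝ)) (k : ℝ) :
    ∑ x ∈ S, ENNReal.ofReal (g (k - x)) ≤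
      ∑' j : ℤ, ENNReal.ofReal (g ((k - θ) + (j : ℝ) / (n : ℝ))) := by
  classical
  have hn0 : (0:ℝ) < (n:ℝ) := by exact_mod_cast hn
  set ι : ℝ → ℤ := fun x =>
    if hx : ∃ j : ℤ, x = θ + (j : ℝ) / (n : ℝ) then -(Classical.choose hx) else 0 with hιdef
  have hι : ∀ x ∈ S, k - x = (k - θ) + ((ι x : ℝ)) / (n : ℝ) := by
    intro x hx
    have hex := hS x hx
    have hspec := Classical.choose_spec hex
    simp only [hιdef, dif_pos hex]
    push_cast
    rw [neg_div]
    linarith [hspec]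
  have hinj : ∀ x ∈ S, ∀ y ∈ S, ι x = ι y → x = y := by
    intro x hx y hy hxy
    have h1 := hι x hx
    have h2 := hι y hy
    rw [hxy] at h1
    linarith [h1, h2]
  calc ∑ x ∈ S, ENNReal.ofReal (g (k - x))
      = ∑ j ∈ S.image ι, ENNReal.ofReal (g ((k - θ) + (j : ℝ) / (n : ℝ))) := by
        rw [Finset.sum_image hinj]
        exact Finset.sum_congr rfl fun x hx => by rw [hι x hx]
    _ ≤ ∑' j : ℤ, ENNReal.ofReal (g ((k - θ) + (j : ℝ) / (n : ℝ))) :=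
        ENNReal.sum_le_tsum _

lemma aux_grid_tail (n N : ℕ) (hn : 1 ≤ n) (hnN : n ≤ N) (c₀ : ℝ) (hc₀ : 0 < c₀) (θ k : ℝ)
    (S : Finset ℝ) (hS : ∀ x ∈ S, ∃ j : ℤ, x = θ + (j : ℝ) / (n : ℝ))
    (hSk : ∀ x ∈ S, x < k) :
    ∑ x ∈ S, (k - x) * Real.exp (-(c₀ / 2) * (k - x)) ≤
      ∑' m : ℕ, ((m : ℝ) + 1) * (Real.exp (-(c₀ / (2 * N)))) ^ m := by
  classical
  have hn0 : (0:ℝ) < (n:ℝ) := by exact_mod_cast hn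
  have hN0 : (0:ℝ) < (N:ℝ) := by
    have : 1 ≤ N := hn.trans hnN
    exact_mod_cast this
  set r : ℝ := Real.exp (-(c₀ / (2 * N))) with hrdef
  have hr0 : 0 < r := Real.exp_pos _
  have hr1 : r < 1 := by
    have h1 : -(c₀ / (2 * (N:ℝ))) < 0 := neg_lt_zero.mpr (by positivity)
    rw [hrdef, ← Real.exp_zero]
    exact Real.exp_lt_exp.mpr h1
  set g : ℕ → ℝ := fun m => ((m : ℝ) + 1) * r ^ m with hgdef
  have hg0 : ∀ m, 0 ≤ g m := fun m => by positivity
  have hgsum : Summable g := by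
    have h1 : Summable (fun m : ℕ => (m : ℝ) * r ^ m) := by
      have := summable_pow_mul_geometric_of_norm_lt_one (R := ℝ) 1
        (r := r) (by rw [Real.norm_eq_abs, abs_of_pos hr0]; exact hr1)
      simpa using this
    have h2 : Summable (fun m : ℕ => r ^ m) :=
      summable_geometric_of_lt_one hr0.le hr1
    have := h1.add h2
    apply this.congr
    intro m
    simp only [hgdef]
    ring
  set μ : ℝ → ℕ := fun x => (⌊(k - x) * n⌋).toNat with hμdef
  have hpt : ∀ x ∈ S, (k - x) * Real.exp (-(c₀ / 2) * (k - x)) ≤ g (μ x) := by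
    intro x hx
    set t : ℝ := k - x with htdef
    have ht0 : 0 < t := by simp only [htdef]; linarith [hSk x hx]
    have hfl0 : 0 ≤ ⌊t * n⌋ := Int.floor_nonneg.mpr (by positivity)
    set m : ℕ := μ x with hmdef
    have hmcast : (m : ℝ) = (⌊t * n⌋ : ℤ) := by
      simp only [hmdef, hμdef, htdef]
      exact_mod_cast Int.toNat_of_nonneg hfl0
    have htm1 : t ≤ (m : ℝ) + 1 := by
      have h1 : t * n < (⌊t * n⌋ : ℝ) + 1 := Int.lt_floor_add_one _
      have h2 : t ≤ t * n := by
        have hn1 : (1:ℝ) ≤ (n:ℝ) := by exact_mod_cast hn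
        nlinarith [ht0, hn1]
      rw [hmcast]; linarith
    have htm2 : (m : ℝ) / N ≤ t := by
      have h1 : (⌊t * n⌋ : ℝ) ≤ t * n := Int.floor_le _
      have h2 : (m : ℝ) / n ≤ t := by
        rw [hmcast, div_le_iff₀ hn0]; linarith
      have h3 : (m : ℝ) / N ≤ (m : ℝ) / n := by
        apply div_le_div_of_nonneg_left _ hn0 _
        · positivity
        · exact_mod_cast hnN
      linarith
    have hexp : Real.exp (-(c₀ / 2) * t) ≤ r ^ m := by
      rw [hrdef, ← Real.exp_nat_mul, Real.exp_le_exp]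
      have : (m : ℝ) * -(c₀ / (2 * N)) = -(c₀ / 2) * ((m : ℝ) / N) := by
        field_simp
      rw [this]
      have h4 : 0 < c₀ / 2 := by positivity
      nlinarith [htm2]
    calc t * Real.exp (-(c₀ / 2) * t) ≤ ((m : ℝ) + 1) * r ^ m := by
          apply mul_le_mul htm1 hexp (Real.exp_pos _).le (by positivity)
      _ = g m := rfl
  have hinj : ∀ x ∈ S, ∀ y ∈ S, μ x = μ y → x = y := by
    intro x hx y hy hxy
    obtain ⟨jx, hjx⟩ := hS x hx
    obtain ⟨jy, hjy⟩ := hS y hy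
    have hx0 : 0 ≤ ⌊(k - x) * n⌋ := Int.floor_nonneg.mpr (by nlinarith [hSk x hx])
    have hy0 : 0 ≤ ⌊(k - y) * n⌋ := Int.floor_nonneg.mpr (by nlinarith [hSk y hy])
    have hfx : ⌊(k - x) * n⌋ = ⌊(k - θ) * n⌋ - jx := by
      have : (k - x) * n = (k - θ) * n + (-jx : ℤ) := by
        rw [hjx]; push_cast; field_simp; ring
      rw [this, Int.floor_add_intCast]; ring
    have hfy : ⌊(k - y) * n⌋ = ⌊(k - θ) * n⌋ - jy := by
      have : (k - y) * n = (k - θ) * n + (-jy : ℤ) := by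
        rw [hjy]; push_cast; field_simp; ring
      rw [this, Int.floor_add_intCast]; ring
    have : jx = jy := by
      have h1 : ⌊(k - x) * n⌋ = ⌊(k - y) * n⌋ := by
        have := congrArg (fun z : ℕ => (z : ℤ)) hxy
        simpa [hμdef, Int.toNat_of_nonneg hx0, Int.toNat_of_nonneg hy0] using this
      omega
    rw [hjx, hjy, this]
  calc ∑ x ∈ S, (k - x) * Real.exp (-(c₀ / 2) * (k - x)) ≤ ∑ x ∈ S, g (μ x) :=
        Finset.sum_le_sum hpt
    _ = ∑ m ∈ S.image μ, g m := (Finset.sum_image hinj).symm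
    _ ≤ ∑' m : ℕ, g m := hgsum.sum_le_tsum _ (fun m _ => hg0 m)

/-- **Proposition 6.1, first part.** Exponential decay of the coefficients. -/
theorem stmt_10
    {P : Type*} [Fintype P] [Nonempty P] [DecidableEq P]
    (n : P → ℕ) (hn : ∀ p, 1 ≤ n p)
    (θ : P → ℝ) (hθ0 : ∀ p, 0 ≤ θ p) (hθ1 : ∀ p, θ p < 1 / (n p : ℝ))
    (D : P → Set ℝ)
    (hD : ∀ p, D p = {k : ℝ | ∃ j : ℤ, k = θ p + (j : ℝ) / (n p : ℝ)})
    (hfin : ∀ u v : ℝ, u < v → ((⋃ p, D p) ∩ Set.Ioc u v).Finite)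
    (a : P → P → ℝ) (ha : ∀ p p', 0 ≤ a p p')
    (h : P → P → ℝ → ℝ) (hh : ∀ p p' x, 0 ≤ h p p' x)
    (hh0 : ∀ p p' x, x ≤ 0 → h p p' x = 0)
    -- the coefficients `c(p,k;p',k')`, characterized by the well-founded recursion
    (co : P → ℝ → P → ℝ → ℝ)
    (hco_nonneg : ∀ p k p' k', k ∈ D p → k' ∈ D p' → k' ≤ k → 0 ≤ co p k p' k')
    (hco_diag : ∀ p p' k, k ∈ D p → k ∈ D p' → co p k p' k = if p = p' then 1 else 0)
    (hco_rec : ∀ p k p' k', k ∈ D p → k' ∈ D p' → k' < k →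
      co p k p' k' = ∑ p'' : P, ∑ᶠ k'' ∈ D p'' ∩ Set.Ico k' k,
        a p p'' * h p p'' (k - k'') * co p'' k'' p' k')
    -- the matrix `H` of the interaction norms: its entries are finite reals
    (Hm : Matrix P P ℝ) (hHm0 : ∀ p p', 0 ≤ Hm p p')
    (hHm : ∀ p p', ENNReal.ofReal (Hm p p') =
      ENNReal.ofReal (a p p') *
        ⨆ x : ℝ, ∑' j : ℤ, ENNReal.ofReal (h p p' (x + (j : ℝ) / (n p' : ℝ))))
    -- the spectral radius of `H` is strictly less than 1
    (hspec : spectralRadius ℂ (Hm.map (algebraMap ℝ ℂ)) < 1)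
    -- exponential tails of the interaction functions
    (K₀ c₀ : ℝ) (hK₀ : 0 < K₀) (hc₀ : 0 < c₀)
    (hdecay : ∀ (p p' : P) (x : ℝ), 0 < x → h p p' x ≤ K₀ * Real.exp (-c₀ * x)) :
    ∃ K c : ℝ, 0 < K ∧ 0 < c ∧
      ∀ (p : P) (k : ℝ) (p' : P) (k' : ℝ), k ∈ D p → k' ∈ D p' → k' ≤ k →
        co p k p' k' ≤ K * Real.exp (-c * (k - k')) := by
  classical
  obtain ⟨w, ρ', hρ'0, hρ'1, hw1, hweq⟩ := aux_w Hm hHm0 hspec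
  have hwpos : ∀ p, 0 < w p := fun p => lt_of_lt_of_le one_pos (hw1 p)
  have hwsum : 0 < ∑ q, w q :=
    Finset.sum_pos (fun q _ => hwpos q) Finset.univ_nonempty
  obtain ⟨ε, hε0, hεsum⟩ : ∃ ε : ℝ, 0 < ε ∧ ε * ∑ q, w q = 1 - ρ' :=
    ⟨(1 - ρ') / (∑ q, w q), div_pos (by linarith) hwsum, by field_simp⟩
  -- the max frequency
  obtain ⟨N, hN1, hnN⟩ : ∃ N : ℕ, 1 ≤ N ∧ ∀ p, n p ≤ N := by
    refine ⟨Finset.univ.sup n, ?_, fun p => Finset.le_sup (Finset.mem_univ p)⟩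
    obtain ⟨p0⟩ := (inferInstance : Nonempty P)
    exact (hn p0).trans (Finset.le_sup (Finset.mem_univ p0))
  obtain ⟨B, hB0, hBtail⟩ : ∃ B : ℝ, 0 ≤ B ∧ ∀ (p'' : P) (k : ℝ) (S : Finset ℝ),
      (∀ x ∈ S, ∃ j : ℤ, x = θ p'' + (j : ℝ) / (n p'' : ℝ)) → (∀ x ∈ S, x < k) →
      ∑ x ∈ S, (k - x) * Real.exp (-(c₀ / 2) * (k - x)) ≤ B :=
    ⟨∑' m : ℕ, ((m : ℝ) + 1) * (Real.exp (-(c₀ / (2 * N)))) ^ m,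
      tsum_nonneg fun m => by positivity,
      fun p'' k S h1 h2 => aux_grid_tail (n p'') N (hn p'') (hnN p'') c₀ hc₀ (θ p'') k S h1 h2⟩
  -- max coefficient
  obtain ⟨Am, hAm1, hAm⟩ : ∃ Am : ℝ, 1 ≤ Am ∧ ∀ p q, a p q ≤ Am := by
    refine ⟨1 + ∑ p, ∑ q, a p q, ?_, ?_⟩
    · have : 0 ≤ ∑ p, ∑ q, a p q :=
        Finset.sum_nonneg fun p _ => Finset.sum_nonneg fun q _ => ha p q
      linarith
    · intro p q
      have h1 : a p q ≤ ∑ q', a p q' :=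
        Finset.single_le_sum (f := fun q' => a p q') (fun q' _ => ha p q') (Finset.mem_univ q)
      have h2 : (∑ q', a p q') ≤ ∑ p', ∑ q', a p' q' :=
        Finset.single_le_sum (f := fun p' => ∑ q', a p' q')
          (fun p' _ => Finset.sum_nonneg fun q' _ => ha p' q') (Finset.mem_univ p)
      linarith
  -- the decay rate
  obtain ⟨c, hc0, hcc₀, hcε⟩ : ∃ c : ℝ, 0 < c ∧ c ≤ c₀ / 2 ∧ ∀ p q, a p q * K₀ * c * B ≤ ε := by
    have hABnn : 0 ≤ Am * K₀ * B := mul_nonneg (mul_nonneg (by linarith) hK₀.le) hB0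
    have hden : 0 < Am * K₀ * B + 1 := by linarith
    refine ⟨min (c₀ / 2) (ε / (Am * K₀ * B + 1)), lt_min (by positivity) (div_pos hε0 hden),
      min_le_left _ _, ?_⟩
    intro p q
    set c' := min (c₀ / 2) (ε / (Am * K₀ * B + 1)) with hc'
    have hc'0 : 0 < c' := lt_min (by positivity) (div_pos hε0 hden)
    have h1 : c' ≤ ε / (Am * K₀ * B + 1) := min_le_right _ _
    have h2 : c' * (Am * K₀ * B + 1) ≤ ε := by
      rw [← le_div_iff₀ hden]; exact h1
    have h3 : a p q * K₀ * c' * B ≤ Am * K₀ * c' * B := by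
      have h4 := mul_le_mul_of_nonneg_right (mul_le_mul_of_nonneg_right
        (mul_le_mul_of_nonneg_right (hAm p q) hK₀.le) hc'0.le) hB0
      exact h4
    nlinarith [hc'0.le]
  -- key summation bound
  have keyS : ∀ (p p'' : P) (k : ℝ) (S : Finset ℝ), (∀ x ∈ S, x ∈ D p'') →
      (∀ x ∈ S, x < k) →
      ∑ x ∈ S, a p p'' * h p p'' (k - x) * Real.exp (c * (k - x)) ≤ Hm p p'' + ε := by
    intro p p'' k S hSD hSk
    have hrep : ∀ x ∈ S, ∃ j : ℤ, x = θ p'' + (j : ℝ) / (n p'' : ℝ) := by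
      intro x hx
      have := hSD x hx
      rwa [hD p''] at this
    have part1 : a p p'' * ∑ x ∈ S, h p p'' (k - x) ≤ Hm p p'' := by
      have h1 := aux_grid_sum (n p'') (hn p'') (θ p'') (h p p'') S hrep k
      have h2 : (∑' j : ℤ, ENNReal.ofReal (h p p'' ((k - θ p'') + (j : ℝ) / (n p'' : ℝ)))) ≤
          ⨆ x : ℝ, ∑' j : ℤ, ENNReal.ofReal (h p p'' (x + (j : ℝ) / (n p'' : ℝ))) :=
        le_iSup (fun x : ℝ => ∑' j : ℤ, ENNReal.ofReal (h p p'' (x + (j : ℝ) / (n p'' : ℝ))))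
          (k - θ p'')
      have h3 : ENNReal.ofReal (a p p'' * ∑ x ∈ S, h p p'' (k - x)) ≤
          ENNReal.ofReal (Hm p p'') := by
        rw [ENNReal.ofReal_mul (ha p p''),
          ENNReal.ofReal_sum_of_nonneg (fun x _ => hh p p'' (k - x)), hHm p p'']
        exact mul_le_mul_right (h1.trans h2) _
      exact (ENNReal.ofReal_le_ofReal_iff (hHm0 p p'')).mp h3
    have part2 : ∑ x ∈ S, a p p'' * (h p p'' (k - x) * (Real.exp (c * (k - x)) - 1)) ≤ ε := by
      have hpt : ∀ x ∈ S, a p p'' * (h p p'' (k - x) * (Real.exp (c * (k - x)) - 1)) ≤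
          (a p p'' * K₀ * c) * ((k - x) * Real.exp (-(c₀ / 2) * (k - x))) := by
        intro x hx
        set t : ℝ := k - x with htdef
        have ht0 : 0 < t := by simp only [htdef]; linarith [hSk x hx]
        have hht : h p p'' t ≤ K₀ * Real.exp (-c₀ * t) := hdecay p p'' t ht0
        have he0 : (0:ℝ) ≤ Real.exp (c * t) - 1 := by
          have : (1:ℝ) ≤ Real.exp (c * t) := Real.one_le_exp (by nlinarith [hc0.le, ht0.le])
          linarith
        have hexp1 : Real.exp (c * t) - 1 ≤ c * t * Real.exp (c * t) := by
          have h1 := Real.add_one_le_exp (-(c * t))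
          have h2 := mul_le_mul_of_nonneg_right h1 (Real.exp_pos (c * t)).le
          rw [← Real.exp_add] at h2
          simp only [neg_add_cancel, Real.exp_zero] at h2
          nlinarith [h2]
        have hexp2 : Real.exp (-c₀ * t) * Real.exp (c * t) ≤ Real.exp (-(c₀ / 2) * t) := by
          rw [← Real.exp_add, Real.exp_le_exp]
          nlinarith [ht0.le, hcc₀]
        have step1 : h p p'' t * (Real.exp (c * t) - 1) ≤
            (K₀ * Real.exp (-c₀ * t)) * (c * t * Real.exp (c * t)) :=
          mul_le_mul hht hexp1 he0 (mul_nonneg hK₀.le (Real.exp_pos _).le)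
        have step2 : (K₀ * Real.exp (-c₀ * t)) * (c * t * Real.exp (c * t)) ≤
            (K₀ * c) * (t * Real.exp (-(c₀ / 2) * t)) := by
          have := mul_le_mul_of_nonneg_left hexp2 (mul_nonneg (mul_nonneg hK₀.le hc0.le) ht0.le)
          nlinarith [this]
        have := step1.trans step2
        calc a p p'' * (h p p'' t * (Real.exp (c * t) - 1)) ≤
            a p p'' * ((K₀ * c) * (t * Real.exp (-(c₀ / 2) * t))) :=
              mul_le_mul_of_nonneg_left this (ha p p'')
          _ = (a p p'' * K₀ * c) * (t * Real.exp (-(c₀ / 2) * t)) := by ring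
      calc ∑ x ∈ S, a p p'' * (h p p'' (k - x) * (Real.exp (c * (k - x)) - 1))
          ≤ ∑ x ∈ S, (a p p'' * K₀ * c) * ((k - x) * Real.exp (-(c₀ / 2) * (k - x))) :=
            Finset.sum_le_sum hpt
        _ = (a p p'' * K₀ * c) * ∑ x ∈ S, (k - x) * Real.exp (-(c₀ / 2) * (k - x)) :=
            (Finset.mul_sum _ _ _).symm
        _ ≤ (a p p'' * K₀ * c) * B :=
            mul_le_mul_of_nonneg_left (hBtail p'' k S hrep hSk)
              (mul_nonneg (mul_nonneg (ha p p'') hK₀.le) hc0.le)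
        _ ≤ ε := hcε p p''
    calc ∑ x ∈ S, a p p'' * h p p'' (k - x) * Real.exp (c * (k - x))
        = ∑ x ∈ S, (a p p'' * h p p'' (k - x) +
            a p p'' * (h p p'' (k - x) * (Real.exp (c * (k - x)) - 1))) :=
          Finset.sum_congr rfl fun x _ => by ring
      _ = (∑ x ∈ S, a p p'' * h p p'' (k - x)) +
          ∑ x ∈ S, a p p'' * (h p p'' (k - x) * (Real.exp (c * (k - x)) - 1)) :=
          Finset.sum_add_distrib
      _ = a p p'' * (∑ x ∈ S, h p p'' (k - x)) +
          ∑ x ∈ S, a p p'' * (h p p'' (k - x) * (Real.exp (c * (k - x)) - 1)) := by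
          rw [Finset.mul_sum]
      _ ≤ Hm p p'' + ε := add_le_add part1 part2
  -- finiteness of the recursion index sets
  have hSfin : ∀ (p'' : P) (k k' : ℝ), k' < k → (D p'' ∩ Set.Ico k' k).Finite := by
    intro p'' k k' hkk
    apply Set.Finite.subset (Set.Finite.insert k' (hfin k' k hkk))
    rintro x ⟨hxD, hxlo, hxhi⟩
    rcases eq_or_lt_of_le hxlo with he | hlt
    · exact Set.mem_insert_iff.mpr (Or.inl he.symm)
    · exact Set.mem_insert_iff.mpr (Or.inr ⟨Set.mem_iUnion.mpr ⟨p'', hxD⟩, hlt, hxhi.le⟩)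
  -- the diagonal case
  have hdiag : ∀ (p p' : P) (k' : ℝ), k' ∈ D p → k' ∈ D p' →
      co p k' p' k' * Real.exp (c * (k' - k')) ≤ w p / w p' := by
    intro p p' k' h1 h2
    rw [sub_self, mul_zero, Real.exp_zero, mul_one, hco_diag p p' k' h1 h2]
    split_ifs with hpp
    · subst hpp
      rw [div_self (hwpos p).ne']
    · exact div_nonneg (hwpos p).le (hwpos p').le
  -- main induction
  have main : ∀ Nn : ℕ, ∀ (p : P) (k : ℝ) (p' : P) (k' : ℝ), k ∈ D p → k' ∈ D p' → k' ≤ k →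
      ((⋃ q, D q) ∩ Set.Ioc k' k).ncard ≤ Nn →
      co p k p' k' * Real.exp (c * (k - k')) ≤ w p / w p' := by
    intro Nn
    induction Nn with
    | zero =>
      intro p k p' k' hk hk' hkk' hcard
      rcases eq_or_lt_of_le hkk' with he | hlt
      · subst he; exact hdiag p p' k' hk hk'
      · exfalso
        have hpos : 0 < ((⋃ q, D q) ∩ Set.Ioc k' k).ncard :=
          (Set.ncard_pos (hfin k' k hlt)).mpr
            ⟨k, Set.mem_iUnion.mpr ⟨p, hk⟩, hlt, le_refl k⟩
        omega
    | succ Nn IH =>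
      intro p k p' k' hk hk' hkk' hcard
      rcases eq_or_lt_of_le hkk' with he | hlt
      · subst he; exact hdiag p p' k' hk hk'
      · have hw'0 : 0 < w p' := hwpos p'
        rw [hco_rec p k p' k' hk hk' hlt]
        have hrw : (∑ p'' : P, ∑ᶠ k'' ∈ D p'' ∩ Set.Ico k' k,
            a p p'' * h p p'' (k - k'') * co p'' k'' p' k') =
            ∑ p'' : P, ∑ x ∈ (hSfin p'' k k' hlt).toFinset,
              a p p'' * h p p'' (k - x) * co p'' x p' k' :=
          Finset.sum_congr rfl fun p'' _ =>
            finsum_mem_eq_finite_toFinset_sum _ (hSfin p'' k k' hlt)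
        rw [hrw, Finset.sum_mul]
        have hterm : ∀ p'' ∈ Finset.univ (α := P),
            (∑ x ∈ (hSfin p'' k k' hlt).toFinset,
              a p p'' * h p p'' (k - x) * co p'' x p' k') * Real.exp (c * (k - k')) ≤
            (Hm p p'' + ε) * (w p'' / w p') := by
          intro p'' _
          rw [Finset.sum_mul]
          have hterm2 : ∀ x ∈ (hSfin p'' k k' hlt).toFinset,
              a p p'' * h p p'' (k - x) * co p'' x p' k' * Real.exp (c * (k - k')) ≤
              (a p p'' * h p p'' (k - x) * Real.exp (c * (k - x))) * (w p'' / w p') := by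
            intro x hx
            obtain ⟨hxD, hxlo, hxhi⟩ := (Set.Finite.mem_toFinset _).mp hx
            have hIH : co p'' x p' k' * Real.exp (c * (x - k')) ≤ w p'' / w p' := by
              apply IH p'' x p' k' hxD hk' hxlo
              have hsub : (⋃ q, D q) ∩ Set.Ioc k' x ⊆ (⋃ q, D q) ∩ Set.Ioc k' k :=
                Set.inter_subset_inter_right _ (Set.Ioc_subset_Ioc_right hxhi.le)
              have hss : (⋃ q, D q) ∩ Set.Ioc k' x ⊂ (⋃ q, D q) ∩ Set.Ioc k' k :=
                (Set.ssubset_iff_of_subset hsub).mpr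
                  ⟨k, ⟨Set.mem_iUnion.mpr ⟨p, hk⟩, hlt, le_refl k⟩,
                    fun hmem => absurd hmem.2.2 (not_le.mpr hxhi)⟩
              have := Set.ncard_lt_ncard hss (hfin k' k hlt)
              omega
            have hexpsplit : Real.exp (c * (k - k')) =
                Real.exp (c * (k - x)) * Real.exp (c * (x - k')) := by
              rw [← Real.exp_add]; ring_nf
            have hnn : 0 ≤ a p p'' * h p p'' (k - x) * Real.exp (c * (k - x)) :=
              mul_nonneg (mul_nonneg (ha p p'') (hh p p'' (k - x))) (Real.exp_pos _).le
            calc a p p'' * h p p'' (k - x) * co p'' x p' k' * Real.exp (c * (k - k'))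
                = (a p p'' * h p p'' (k - x) * Real.exp (c * (k - x))) *
                    (co p'' x p' k' * Real.exp (c * (x - k'))) := by
                  rw [hexpsplit]; ring
              _ ≤ (a p p'' * h p p'' (k - x) * Real.exp (c * (k - x))) * (w p'' / w p') :=
                  mul_le_mul_of_nonneg_left hIH hnn
          have hSmem : ∀ x ∈ (hSfin p'' k k' hlt).toFinset, x ∈ D p'' := fun x hx =>
            ((Set.Finite.mem_toFinset _).mp hx).1
          have hSlt : ∀ x ∈ (hSfin p'' k k' hlt).toFinset, x < k := fun x hx =>
            ((Set.Finite.mem_toFinset _).mp hx).2.2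
          calc (∑ x ∈ (hSfin p'' k k' hlt).toFinset,
                a p p'' * h p p'' (k - x) * co p'' x p' k' * Real.exp (c * (k - k')))
              ≤ ∑ x ∈ (hSfin p'' k k' hlt).toFinset,
                (a p p'' * h p p'' (k - x) * Real.exp (c * (k - x))) * (w p'' / w p') :=
                Finset.sum_le_sum hterm2
            _ = (∑ x ∈ (hSfin p'' k k' hlt).toFinset,
                a p p'' * h p p'' (k - x) * Real.exp (c * (k - x))) * (w p'' / w p') :=
                (Finset.sum_mul _ _ _).symm
            _ ≤ (Hm p p'' + ε) * (w p'' / w p') :=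
                mul_le_mul_of_nonneg_right
                  (keyS p p'' k _ hSmem hSlt)
                  (div_nonneg (hwpos p'').le (hwpos p').le)
        have hA : ∑ p'' : P, (Hm p p'' + ε) * w p'' ≤ w p := by
          have h1 : ∑ p'' : P, (Hm p p'' + ε) * w p'' =
              (∑ p'' : P, Hm p p'' * w p'') + ε * ∑ p'' : P, w p'' := by
            rw [Finset.mul_sum, ← Finset.sum_add_distrib]
            exact Finset.sum_congr rfl fun p'' _ => by ring
          rw [h1, hweq p, hεsum]
          nlinarith [hw1 p, hρ'0, hρ'1]
        calc (∑ p'' : P, (∑ x ∈ (hSfin p'' k k' hlt).toFinset,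
              a p p'' * h p p'' (k - x) * co p'' x p' k') * Real.exp (c * (k - k')))
            ≤ ∑ p'' : P, (Hm p p'' + ε) * (w p'' / w p') := Finset.sum_le_sum hterm
          _ = (∑ p'' : P, (Hm p p'' + ε) * w p'') / w p' := by
              rw [Finset.sum_div]
              exact Finset.sum_congr rfl fun p'' _ => by ring
          _ ≤ w p / w p' := by gcongr
  -- conclusion
  obtain ⟨p0⟩ := (inferInstance : Nonempty P)
  set Wmax : ℝ := Finset.univ.sup' Finset.univ_nonempty w with hWdef
  have hWpos : 0 < Wmax :=
    lt_of_lt_of_le (hwpos p0) (Finset.le_sup' w (Finset.mem_univ p0))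
  refine ⟨Wmax, c, hWpos, hc0, ?_⟩
  intro p k p' k' hk hk' hkk'
  have h1 := main _ p k p' k' hk hk' hkk' le_rfl
  have hE : 0 < Real.exp (c * (k - k')) := Real.exp_pos _
  have h2 : co p k p' k' ≤ (w p / w p') / Real.exp (c * (k - k')) :=
    (le_div_iff₀ hE).mpr h1
  have h3 : w p / w p' ≤ Wmax := by
    have : w p / w p' ≤ w p := div_le_self (hwpos p).le (hw1 p')
    exact this.trans (Finset.le_sup' w (Finset.mem_univ p))
  calc co p k p' k' ≤ (w p / w p') / Real.exp (c * (k - k')) := h2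
    _ ≤ Wmax / Real.exp (c * (k - k')) := by
        gcongr
    _ = Wmax * Real.exp (-c * (k - k')) := by
        rw [neg_mul, Real.exp_neg, div_eq_mul_inv]
end

section
/- Exponential decay of the cluster functions (Proposition 6.1, second part): Assume in addition that there exist constants K₀, c₀ > 0 such that h^p_{p'}(x) ≤ K₀e^{−c₀x}, h^m_{m'}(x) ≤ K₀e^{−c₀x}, h^m_p(x) ≤ K₀e^{−c₀x} and h^p_m(x) ≤ K₀e^{−c₀x} for all m, m' ∈ M, all p, p' ∈ P and all x > 0. Then there exist constants K, c > 0 such that for all m, m' ∈ M and all reals s < t, 𝔥^m_{m'}(s,t) ≤ K e^{−c(t−s)}. -/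
open scoped BigOperators ENNReal

attribute [local instance] Matrix.linftyOpNormedRing Matrix.linftyOpNormedAlgebra
  Matrix.linftyOpNormedAddCommGroup

lemma aux_geom (b : ℝ) (hb : 0 < b) (nn : ℕ) (hnn : 1 ≤ nn) (θ0 T k : ℝ) (hT : 0 ≤ T)
    (F : Finset ℝ) (hF : ∀ x ∈ F, (∃ j : ℤ, x = θ0 + (j:ℝ)/(nn:ℝ)) ∧ T < k - x) :
    ∑ x ∈ F, Real.exp (-b * (k - x)) ≤ Real.exp (-b*T) * (1 - Real.exp (-b/nn))⁻¹ := by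
  have hnpos : (0:ℝ) < nn := by exact_mod_cast hnn
  set q : ℝ := Real.exp (-b/nn) with hq
  have hq0 : 0 < q := Real.exp_pos _
  have hq1 : q < 1 := by
    rw [hq]; exact Real.exp_lt_one_iff.2 (div_neg_of_neg_of_pos (by linarith) hnpos)
  set g : ℝ → ℕ := fun x => ⌊(k - x - T) * nn⌋₊ with hg
  have hterm : ∀ x ∈ F, Real.exp (-b * (k - x)) ≤ Real.exp (-b*T) * q ^ (g x) := by
    intro x hx
    obtain ⟨-, hTx⟩ := hF x hx
    have hpos : 0 < (k - x - T) := by linarith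
    have hfl : (g x : ℝ) ≤ (k - x - T) * nn := Nat.floor_le (by positivity)
    have h2 : (g x:ℝ)/nn ≤ k - x - T := (div_le_iff₀ hnpos).2 (by linarith [hfl])
    have hge : T + (g x : ℝ)/nn ≤ k - x := by linarith
    have hkey : -b * (k - x) ≤ -b*T + (g x) * (-b/nn) := by
      have heq : -b*T + (g x:ℝ)*(-b/nn) = -b*(T + (g x:ℝ)/nn) := by ring
      rw [heq]
      nlinarith [mul_le_mul_of_nonneg_left hge hb.le]
    calc Real.exp (-b * (k - x)) ≤ Real.exp (-b*T + (g x) * (-b/nn)) := Real.exp_le_exp.2 hkey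
      _ = Real.exp (-b*T) * q ^ (g x) := by rw [Real.exp_add, Real.exp_nat_mul]
  have hinj : ∀ x ∈ F, ∀ y ∈ F, g x = g y → x = y := by
    intro x hx y hy hgxy
    obtain ⟨⟨j, hj⟩, hTx⟩ := hF x hx
    obtain ⟨⟨j', hj'⟩, hTy⟩ := hF y hy
    have hjx : (k - x - T) * nn = (k - θ0 - T) * nn - j := by rw [hj]; field_simp; ring
    have hjy : (k - y - T) * nn = (k - θ0 - T) * nn - j' := by rw [hj']; field_simp; ring
    have hfx : (⌊(k - x - T) * nn⌋ : ℤ) = ⌊(k - θ0 - T) * nn⌋ - j := by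
      rw [hjx, Int.floor_sub_intCast]
    have hfy : (⌊(k - y - T) * nn⌋ : ℤ) = ⌊(k - θ0 - T) * nn⌋ - j' := by
      rw [hjy, Int.floor_sub_intCast]
    have hgx : (g x : ℤ) = ⌊(k - x - T) * nn⌋ := by
      simp only [hg]; rw [Int.natCast_floor_eq_floor (by nlinarith)]
    have hgy : (g y : ℤ) = ⌊(k - y - T) * nn⌋ := by
      simp only [hg]; rw [Int.natCast_floor_eq_floor (by nlinarith)]
    have hcast : (g x : ℤ) = (g y : ℤ) := by exact_mod_cast hgxy
    have : j = j' := by omega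
    rw [hj, hj', this]
  calc ∑ x ∈ F, Real.exp (-b * (k - x)) ≤ ∑ x ∈ F, Real.exp (-b*T) * q ^ (g x) :=
        Finset.sum_le_sum hterm
    _ = Real.exp (-b*T) * ∑ x ∈ F, q ^ (g x) := by rw [Finset.mul_sum]
    _ ≤ Real.exp (-b*T) * (1 - q)⁻¹ := by
        apply mul_le_mul_of_nonneg_left _ (Real.exp_pos _).le
        have himg : ∑ x ∈ F, q ^ (g x) = ∑ i ∈ F.image g, q ^ i := (Finset.sum_image hinj).symm
        rw [himg]
        have hsum : Summable (fun i : ℕ => q ^ i) := summable_geometric_of_lt_one hq0.le hq1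
        calc ∑ i ∈ F.image g, q ^ i ≤ ∑' i : ℕ, q ^ i :=
              hsum.sum_le_tsum _ (fun i _ => by positivity)
          _ = (1 - q)⁻¹ := tsum_geometric_of_lt_one hq0.le hq1

lemma aux_norm (nn : ℕ) (hnn : 1 ≤ nn) (θ0 : ℝ) (hfun : ℝ → ℝ) (hfun0 : ∀ x, 0 ≤ hfun x)
    (A Hval : ℝ) (hA : 0 ≤ A) (hHval : 0 ≤ Hval)
    (hH : ENNReal.ofReal Hval = ENNReal.ofReal A *
      ⨆ x : ℝ, ∑' j : ℤ, ENNReal.ofReal (hfun (x + (j:ℝ) / (nn:ℝ))))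
    (k : ℝ) (F : Finset ℝ) (hF : ∀ x ∈ F, ∃ j : ℤ, x = θ0 + (j:ℝ)/(nn:ℝ)) :
    A * ∑ x ∈ F, hfun (k - x) ≤ Hval := by
  classical
  have hnpos : (0:ℝ) < nn := by exact_mod_cast hnn
  set g : ℝ → ℤ := fun x => if hx : ∃ j : ℤ, x = θ0 + (j:ℝ)/(nn:ℝ)
    then -Classical.choose hx else 0 with hgdef
  have hgspec : ∀ x ∈ F, x = θ0 + (-(g x) : ℤ)/(nn:ℝ) := by
    intro x hx
    have hx' := hF x hx
    simp only [hgdef, dif_pos hx', neg_neg]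
    exact Classical.choose_spec hx'
  have hginj : ∀ x ∈ F, ∀ y ∈ F, g x = g y → x = y := by
    intro x hx y hy hxy
    rw [hgspec x hx, hgspec y hy, hxy]
  have hrw : ∀ x ∈ F, k - x = (k - θ0) + ((g x : ℝ))/(nn:ℝ) := by
    intro x hx
    have h1 := hgspec x hx
    have h2 : ((-(g x) : ℤ) : ℝ) = -((g x : ℤ) : ℝ) := by push_cast; ring
    rw [h2, neg_div] at h1
    linarith
  rw [← ENNReal.ofReal_le_ofReal_iff hHval, hH, ENNReal.ofReal_mul hA]
  apply mul_le_mul_right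
  calc ENNReal.ofReal (∑ x ∈ F, hfun (k - x))
      = ∑ x ∈ F, ENNReal.ofReal (hfun (k - x)) :=
        ENNReal.ofReal_sum_of_nonneg (fun x _ => hfun0 _)
    _ = ∑ x ∈ F, ENNReal.ofReal (hfun ((k - θ0) + (g x : ℝ)/(nn:ℝ))) := by
        apply Finset.sum_congr rfl
        intro x hx
        rw [hrw x hx]
    _ = ∑ j ∈ F.image g, ENNReal.ofReal (hfun ((k - θ0) + (j : ℝ)/(nn:ℝ))) :=
        (Finset.sum_image (g := g) (s := F)
          (f := fun j : ℤ => ENNReal.ofReal (hfun ((k - θ0) + (j:ℝ)/(nn:ℝ)))) hginj).symm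
    _ ≤ ∑' j : ℤ, ENNReal.ofReal (hfun ((k - θ0) + (j:ℝ) / (nn:ℝ))) := ENNReal.sum_le_tsum _
    _ ≤ ⨆ x : ℝ, ∑' j : ℤ, ENNReal.ofReal (hfun (x + (j:ℝ) / (nn:ℝ))) :=
        le_iSup (fun x : ℝ => ∑' j : ℤ, ENNReal.ofReal (hfun (x + (j:ℝ) / (nn:ℝ)))) (k - θ0)

/-- Row bound with exponential weight. -/
lemma aux_row (nn : ℕ) (hnn : 1 ≤ nn) (θ0 : ℝ) (hfun : ℝ → ℝ) (hfun0 : ∀ x, 0 ≤ hfun x)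
    (A Hval : ℝ) (hA : 0 ≤ A) (hHval : 0 ≤ Hval)
    (hH : ENNReal.ofReal Hval = ENNReal.ofReal A *
      ⨆ x : ℝ, ∑' j : ℤ, ENNReal.ofReal (hfun (x + (j:ℝ) / (nn:ℝ))))
    (K₀ c₀ : ℝ) (hK₀ : 0 < K₀) (hc₀ : 0 < c₀)
    (hdecay : ∀ x : ℝ, 0 < x → hfun x ≤ K₀ * Real.exp (-c₀ * x))
    (ε T : ℝ) (hε : 0 < ε) (hεc : ε ≤ c₀/2) (hT : 0 ≤ T)
    (k : ℝ) (F : Finset ℝ)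
    (hF : ∀ x ∈ F, (∃ j : ℤ, x = θ0 + (j:ℝ)/(nn:ℝ)) ∧ x < k) :
    ∑ x ∈ F, A * hfun (k - x) * Real.exp (ε * (k - x)) ≤
      Real.exp (ε*T) * Hval + A * K₀ * Real.exp (-(c₀/2)*T) * (1 - Real.exp (-(c₀/2)/nn))⁻¹ := by
  classical
  set F₁ := F.filter (fun x => k - x ≤ T) with hF₁
  set F₂ := F.filter (fun x => ¬ (k - x ≤ T)) with hF₂
  rw [← Finset.sum_filter_add_sum_filter_not F (fun x => k - x ≤ T)]
  have part1 : ∑ x ∈ F₁, A * hfun (k - x) * Real.exp (ε * (k - x)) ≤ Real.exp (ε*T) * Hval := by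
    calc ∑ x ∈ F₁, A * hfun (k - x) * Real.exp (ε * (k - x))
        ≤ ∑ x ∈ F₁, Real.exp (ε*T) * (A * hfun (k - x)) := by
          apply Finset.sum_le_sum
          intro x hx
          have hxT : k - x ≤ T := (Finset.mem_filter.1 hx).2
          have : Real.exp (ε * (k - x)) ≤ Real.exp (ε*T) :=
            Real.exp_le_exp.2 (mul_le_mul_of_nonneg_left hxT hε.le)
          calc A * hfun (k - x) * Real.exp (ε * (k - x))
              ≤ A * hfun (k - x) * Real.exp (ε*T) :=
                mul_le_mul_of_nonneg_left this (mul_nonneg hA (hfun0 _))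
            _ = Real.exp (ε*T) * (A * hfun (k - x)) := by ring
      _ = Real.exp (ε*T) * (A * ∑ x ∈ F₁, hfun (k - x)) := by
          simp only [Finset.mul_sum]
      _ ≤ Real.exp (ε*T) * Hval := by
          apply mul_le_mul_of_nonneg_left _ (Real.exp_pos _).le
          exact aux_norm nn hnn θ0 hfun hfun0 A Hval hA hHval hH k F₁
            (fun x hx => (hF x (Finset.mem_filter.1 hx).1).1)
  have part2 : ∑ x ∈ F₂, A * hfun (k - x) * Real.exp (ε * (k - x)) ≤
      A * K₀ * Real.exp (-(c₀/2)*T) * (1 - Real.exp (-(c₀/2)/nn))⁻¹ := by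
    have hc2 : 0 < c₀/2 := by linarith
    calc ∑ x ∈ F₂, A * hfun (k - x) * Real.exp (ε * (k - x))
        ≤ ∑ x ∈ F₂, A * K₀ * Real.exp (-(c₀/2) * (k - x)) := by
          apply Finset.sum_le_sum
          intro x hx
          obtain ⟨hxF, hxT⟩ := Finset.mem_filter.1 hx
          push_neg at hxT
          have hpos : 0 < k - x := lt_of_le_of_lt hT hxT
          have hd := hdecay (k - x) hpos
          calc A * hfun (k - x) * Real.exp (ε * (k - x))
              ≤ A * (K₀ * Real.exp (-c₀ * (k - x))) * Real.exp (ε * (k - x)) := by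
                apply mul_le_mul_of_nonneg_right _ (Real.exp_pos _).le
                exact mul_le_mul_of_nonneg_left hd hA
            _ = A * K₀ * Real.exp ((-c₀ + ε) * (k - x)) := by
                rw [mul_assoc, mul_assoc, ← Real.exp_add]
                ring_nf
            _ ≤ A * K₀ * Real.exp (-(c₀/2) * (k - x)) := by
                apply mul_le_mul_of_nonneg_left _ (by positivity)
                apply Real.exp_le_exp.2
                nlinarith
      _ = A * K₀ * ∑ x ∈ F₂, Real.exp (-(c₀/2) * (k - x)) := by rw [Finset.mul_sum]
      _ ≤ A * K₀ * (Real.exp (-(c₀/2)*T) * (1 - Real.exp (-(c₀/2)/nn))⁻¹) := by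
          apply mul_le_mul_of_nonneg_left _ (by positivity)
          apply aux_geom (c₀/2) hc2 nn hnn θ0 T k hT
          intro x hx
          obtain ⟨hxF, hxT⟩ := Finset.mem_filter.1 hx
          push_neg at hxT
          exact ⟨(hF x hxF).1, hxT⟩
      _ = A * K₀ * Real.exp (-(c₀/2)*T) * (1 - Real.exp (-(c₀/2)/nn))⁻¹ := by ring
  linarith

lemma aux_vec {P : Type*} [Fintype P] [Nonempty P] [DecidableEq P] (Hm : Matrix P P ℝ)
    (hHm0 : ∀ p p', 0 ≤ Hm p p')
    (hspec : spectralRadius ℂ (Hm.map (algebraMap ℝ ℂ)) < 1) :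
    ∃ (v : P → ℝ) (δ : ℝ), 0 < δ ∧ (∀ p, 1 ≤ v p) ∧
      ∀ p, (∑ p', Hm p p' * v p') + δ ≤ v p := by
  classical
  haveI : CompleteSpace (Matrix P P ℂ) :=
    FiniteDimensional.complete ℂ (Matrix P P ℂ)
  obtain ⟨N, hN1, hNnorm⟩ : ∃ N : ℕ, 1 ≤ N ∧ ‖(Hm.map (algebraMap ℝ ℂ))^N‖₊ < 1 := by
    have htend := spectrum.pow_nnnorm_pow_one_div_tendsto_nhds_spectralRadius
      (Hm.map (algebraMap ℝ ℂ))
    have hev := htend.eventually_lt_const hspec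
    obtain ⟨N, hNlt, hN1⟩ := (hev.and (Filter.eventually_ge_atTop 1)).exists
    refine ⟨N, hN1, ?_⟩
    by_contra hge
    push_neg at hge
    have : (1:ℝ≥0∞) ≤ ((‖(Hm.map (algebraMap ℝ ℂ))^N‖₊ : ℝ≥0∞)) ^ (1/(N:ℝ)) := by
      calc (1:ℝ≥0∞) = 1 ^ (1/(N:ℝ)) := by rw [ENNReal.one_rpow]
      _ ≤ _ := ENNReal.rpow_le_rpow (by exact_mod_cast hge) (by positivity)
    exact absurd hNlt (not_lt.2 this)
  set ρ : ℝ := ‖(Hm.map (algebraMap ℝ ℂ))^N‖ with hρdef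
  have hρ0 : 0 ≤ ρ := norm_nonneg _
  have hρ1 : ρ < 1 := by exact_mod_cast hNnorm
  have hpow0 : ∀ i : ℕ, ∀ p q, 0 ≤ (Hm^i) p q := by
    intro i
    induction i with
    | zero => intro p q; by_cases hpq : p = q <;> simp [pow_zero, Matrix.one_apply, hpq]
    | succ i ih =>
      intro p q
      rw [pow_succ]
      rw [Matrix.mul_apply]
      exact Finset.sum_nonneg fun j _ => mul_nonneg (ih p j) (hHm0 j q)
  set g : ℕ → P → ℝ := fun i p => ∑ q, (Hm^i) p q with hgdef
  have hg0 : ∀ i p, 0 ≤ g i p := fun i p => Finset.sum_nonneg fun q _ => hpow0 i p q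
  have hgzero : ∀ p, g 0 p = 1 := by
    intro p; simp [hgdef, pow_zero, Matrix.one_apply]
  have hgsucc : ∀ i p, g (i+1) p = ∑ p', Hm p p' * g i p' := by
    intro i p
    simp only [hgdef]
    rw [pow_succ']
    simp only [Matrix.mul_apply]
    rw [Finset.sum_comm]
    simp [Finset.mul_sum]
  have hgN : ∀ p, g N p ≤ ρ := by
    intro p
    have hmap : (Hm.map (algebraMap ℝ ℂ))^N = (Hm^N).map (algebraMap ℝ ℂ) := by
      have h1 : Hm.map (algebraMap ℝ ℂ) = (algebraMap ℝ ℂ).mapMatrix Hm := rfl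
      rw [h1, ← map_pow]
      rfl
    have hnn : ∑ q, ‖((Hm^N).map (algebraMap ℝ ℂ)) p q‖₊ ≤ ‖(Hm^N).map (algebraMap ℝ ℂ)‖₊ := by
      rw [Matrix.linfty_opNNNorm_def]
      exact Finset.le_sup (f := fun i => ∑ j, ‖((Hm^N).map (algebraMap ℝ ℂ)) i j‖₊)
        (Finset.mem_univ p)
    have hcoe : ((∑ q, ‖((Hm^N).map (algebraMap ℝ ℂ)) p q‖₊ : NNReal) : ℝ) ≤ ρ := by
      rw [hρdef, hmap]
      exact_mod_cast hnn
    calc g N p = ∑ q, ‖((Hm^N).map (algebraMap ℝ ℂ)) p q‖ := by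
          apply Finset.sum_congr rfl
          intro q _
          simp only [Matrix.map_apply]
          rw [show (algebraMap ℝ ℂ) ((Hm^N) p q) = ((Hm^N) p q : ℂ) from rfl]
          rw [Complex.norm_real, Real.norm_eq_abs, abs_of_nonneg (hpow0 N p q)]
      _ ≤ ρ := by
          push_cast at hcoe
          exact hcoe
  refine ⟨fun p => ∑ i ∈ Finset.range N, g i p, 1 - ρ, by linarith, ?_, ?_⟩
  · intro p
    have h0mem : 0 ∈ Finset.range N := Finset.mem_range.2 hN1
    have := Finset.single_le_sum (f := fun i => g i p) (fun i _ => hg0 i p) h0mem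
    simpa [hgzero p] using this
  · intro p
    have hswap : ∑ p', Hm p p' * ∑ i ∈ Finset.range N, g i p'
        = ∑ i ∈ Finset.range N, g (i+1) p := by
      simp only [Finset.mul_sum]
      rw [Finset.sum_comm]
      exact Finset.sum_congr rfl fun i _ => (hgsucc i p).symm
    have htel : ∑ i ∈ Finset.range N, g (i+1) p
        = (∑ i ∈ Finset.range N, g i p) + g N p - g 0 p := by
      have h1 := Finset.sum_range_succ' (fun i => g i p) N
      have h2 := Finset.sum_range_succ (fun i => g i p) N
      linarith [h1, h2]
    rw [hswap, htel, hgzero p]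
    have := hgN p
    linarith
set_option maxHeartbeats 2000000 in
/-- **Proposition 6.1, second part.** Exponential decay of the cluster functions. -/
theorem stmt_11
    {P : Type*} [Fintype P] [Nonempty P] [DecidableEq P]
    (n : P → ℕ) (hn : ∀ p, 1 ≤ n p)
    (θ : P → ℝ) (hθ0 : ∀ p, 0 ≤ θ p) (hθ1 : ∀ p, θ p < 1 / (n p : ℝ))
    (D : P → Set ℝ)
    (hD : ∀ p, D p = {k : ℝ | ∃ j : ℤ, k = θ p + (j : ℝ) / (n p : ℝ)})
    (hfin : ∀ u v : ℝ, u < v → ((⋃ p, D p) ∩ Set.Ioc u v).Finite)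
    (a : P → P → ℝ) (ha : ∀ p p', 0 ≤ a p p')
    (h : P → P → ℝ → ℝ) (hh : ∀ p p' x, 0 ≤ h p p' x)
    (hh0 : ∀ p p' x, x ≤ 0 → h p p' x = 0)
    -- the coefficients `c(p,k;p',k')`, characterized by the well-founded recursion
    (co : P → ℝ → P → ℝ → ℝ)
    (hco_nonneg : ∀ p k p' k', k ∈ D p → k' ∈ D p' → k' ≤ k → 0 ≤ co p k p' k')
    (hco_diag : ∀ p p' k, k ∈ D p → k ∈ D p' → co p k p' k = if p = p' then 1 else 0)
    (hco_rec : ∀ p k p' k', k ∈ D p → k' ∈ D p' → k' < k →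
      co p k p' k' = ∑ p'' : P, ∑ᶠ k'' ∈ D p'' ∩ Set.Ico k' k,
        a p p'' * h p p'' (k - k'') * co p'' k'' p' k')
    -- the matrix `H` of the interaction norms: its entries are finite reals
    (Hm : Matrix P P ℝ) (hHm0 : ∀ p p', 0 ≤ Hm p p')
    (hHm : ∀ p p', ENNReal.ofReal (Hm p p') =
      ENNReal.ofReal (a p p') *
        ⨆ x : ℝ, ∑' j : ℤ, ENNReal.ofReal (h p p' (x + (j : ℝ) / (n p' : ℝ))))
    -- the spectral radius of `H` is strictly less than 1
    (hspec : spectralRadius ℂ (Hm.map (algebraMap ℝ ℂ)) < 1)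
    -- the set `M` of nodes and the interaction functions involving nodes
    {M : Type*} [Fintype M] [Nonempty M]
    (hMM : M → M → ℝ → ℝ) (hhMM : ∀ m m' x, 0 ≤ hMM m m' x)
    (hhMM0 : ∀ m m' x, x ≤ 0 → hMM m m' x = 0)
    (hMP : M → P → ℝ → ℝ) (hhMP : ∀ m p x, 0 ≤ hMP m p x)
    (hhMP0 : ∀ m p x, x ≤ 0 → hMP m p x = 0)
    (hPM : P → M → ℝ → ℝ) (hhPM : ∀ p m x, 0 ≤ hPM p m x)
    (hhPM0 : ∀ p m x, x ≤ 0 → hPM p m x = 0)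
    (aMP : M → P → ℝ) (haMP : ∀ m p, 0 ≤ aMP m p)
    -- the cluster functions `𝔥^m_{m'}(s,t)`
    (H𝔥 : M → M → ℝ → ℝ → ℝ≥0∞)
    (hH𝔥 : ∀ (m m' : M) (s t : ℝ), s < t →
      H𝔥 m m' s t = ENNReal.ofReal (hMM m m' (t - s)) +
        ∑ p : P, ∑ p' : P,
          ∑' k : (D p ∩ Set.Ioo s t : Set ℝ),
            ∑' k' : (D p' ∩ Set.Ioc s (k : ℝ) : Set ℝ),
              ENNReal.ofReal (aMP m p * hMP m p (t - (k : ℝ)) *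
                co p (k : ℝ) p' (k' : ℝ) * hPM p' m' ((k' : ℝ) - s)))
    -- exponential tails of all the interaction functions
    (K₀ c₀ : ℝ) (hK₀ : 0 < K₀) (hc₀ : 0 < c₀)
    (hdecayPP : ∀ (p p' : P) (x : ℝ), 0 < x → h p p' x ≤ K₀ * Real.exp (-c₀ * x))
    (hdecayMM : ∀ (m m' : M) (x : ℝ), 0 < x → hMM m m' x ≤ K₀ * Real.exp (-c₀ * x))
    (hdecayMP : ∀ (m : M) (p : P) (x : ℝ), 0 < x → hMP m p x ≤ K₀ * Real.exp (-c₀ * x))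
    (hdecayPM : ∀ (p : P) (m : M) (x : ℝ), 0 < x → hPM p m x ≤ K₀ * Real.exp (-c₀ * x)) :
    ∃ K c : ℝ, 0 < K ∧ 0 < c ∧
      ∀ (m m' : M) (s t : ℝ), s < t →
        H𝔥 m m' s t ≤ ENNReal.ofReal (K * Real.exp (-c * (t - s))) := by
  classical
  obtain ⟨v, δ, hδpos, hv1, hv⟩ := aux_vec Hm hHm0 hspec
  have hPne : (Finset.univ : Finset P).Nonempty := Finset.univ_nonempty
  have hnpos : ∀ p, (0:ℝ) < n p := fun p => by exact_mod_cast hn p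
  set Gf : P → ℝ := fun p => (1 - Real.exp (-(c₀/2)/(n p : ℝ)))⁻¹ with hGfdef
  have hGfpos : ∀ p, 0 < Gf p := by
    intro p
    have hlt : Real.exp (-(c₀/2)/(n p:ℝ)) < 1 :=
      Real.exp_lt_one_iff.2 (div_neg_of_neg_of_pos (by linarith) (hnpos p))
    exact inv_pos.2 (by linarith)
  -- max of v
  set vmax : ℝ := Finset.univ.sup' hPne v with hvmaxdef
  have hvmax : ∀ p, v p ≤ vmax := fun p => Finset.le_sup' v (Finset.mem_univ p)
  have hvmax1 : 1 ≤ vmax := le_trans (hv1 (Classical.arbitrary P)) (hvmax _)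
  have hv0 : ∀ p, 0 ≤ v p := fun p => le_trans zero_le_one (hv1 p)
  -- row sums
  set Hv : P → ℝ := fun p => ∑ p', Hm p p' * v p' with hHvdef
  have hHv0 : ∀ p, 0 ≤ Hv p :=
    fun p => Finset.sum_nonneg fun p' _ => mul_nonneg (hHm0 p p') (hv0 p')
  set Hvmax : ℝ := Finset.univ.sup' hPne Hv with hHvmaxdef
  have hHvmax : ∀ p, Hv p ≤ Hvmax := fun p => Finset.le_sup' Hv (Finset.mem_univ p)
  have hHvmax0 : 0 ≤ Hvmax := le_trans (hHv0 _) (hHvmax (Classical.arbitrary P))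
  set Cf : P → ℝ := fun p => ∑ p'', a p p'' * K₀ * Gf p'' * v p'' with hCfdef
  have hCf0 : ∀ p, 0 ≤ Cf p := fun p => Finset.sum_nonneg fun p'' _ => by
    have := hGfpos p''
    have := hv0 p''
    have := ha p p''
    positivity
  set Cmax : ℝ := Finset.univ.sup' hPne Cf with hCmaxdef
  have hCmax : ∀ p, Cf p ≤ Cmax := fun p => Finset.le_sup' Cf (Finset.mem_univ p)
  have hCmax0 : 0 ≤ Cmax := le_trans (hCf0 _) (hCmax (Classical.arbitrary P))
  -- choose T
  set r : ℝ := min (δ/(4*(Cmax+1))) 1 with hrdef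
  have hr0 : 0 < r := lt_min (by positivity) one_pos
  have hr1 : r ≤ 1 := min_le_right _ _
  set T : ℝ := -(2/c₀) * Real.log r with hTdef
  have hT0 : 0 ≤ T := by
    have hlog : Real.log r ≤ 0 := Real.log_nonpos hr0.le hr1
    have h2c : (0:ℝ) ≤ 2/c₀ := by positivity
    calc (0:ℝ) ≤ (2/c₀) * (-Real.log r) := mul_nonneg h2c (by linarith)
      _ = T := by rw [hTdef]; ring
  have hexpT : Real.exp (-(c₀/2)*T) = r := by
    rw [hTdef]
    have : -(c₀/2) * (-(2/c₀) * Real.log r) = Real.log r := by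
      field_simp
    rw [this, Real.exp_log hr0]
  have hTbound : Real.exp (-(c₀/2)*T) * Cmax ≤ δ/4 := by
    rw [hexpT]
    have hrle : r ≤ δ/(4*(Cmax+1)) := min_le_left _ _
    have h1 : r * Cmax ≤ (δ/(4*(Cmax+1))) * Cmax :=
      mul_le_mul_of_nonneg_right hrle hCmax0
    have h2 : (δ/(4*(Cmax+1))) * Cmax ≤ δ/4 := by
      rw [div_mul_eq_mul_div, div_le_div_iff₀ (by positivity) (by norm_num)]
      nlinarith
    linarith
  -- choose ε
  set u : ℝ := δ/(4*(Hvmax+1)) with hudef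
  have hu0 : 0 < u := by positivity
  set ε : ℝ := min (c₀/2) (Real.log (1+u)/(T+1)) with hεdef
  have hε0 : 0 < ε := lt_min (by linarith) (div_pos (Real.log_pos (by linarith)) (by linarith))
  have hεc : ε ≤ c₀/2 := min_le_left _ _
  have hεT : (Real.exp (ε*T) - 1) * Hvmax ≤ δ/4 := by
    have hεT' : ε*T ≤ Real.log (1+u) := by
      have h1 : ε ≤ Real.log (1+u)/(T+1) := min_le_right _ _
      have hlog0 : 0 ≤ Real.log (1+u) := (Real.log_pos (by linarith)).le
      have h2 : ε * T ≤ (Real.log (1+u)/(T+1)) * T :=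
        mul_le_mul_of_nonneg_right h1 hT0
      have h3 : (Real.log (1+u)/(T+1)) * T ≤ Real.log (1+u) := by
        rw [div_mul_eq_mul_div, div_le_iff₀ (by linarith)]
        nlinarith
      linarith
    have hexpε : Real.exp (ε*T) ≤ 1 + u := by
      calc Real.exp (ε*T) ≤ Real.exp (Real.log (1+u)) := Real.exp_le_exp.2 hεT'
        _ = 1 + u := Real.exp_log (by linarith)
    have h4 : (Real.exp (ε*T) - 1) * Hvmax ≤ u * Hvmax := by
      apply mul_le_mul_of_nonneg_right _ hHvmax0
      linarith
    have h5 : u * Hvmax ≤ δ/4 := by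
      rw [hudef, div_mul_eq_mul_div, div_le_div_iff₀ (by positivity) (by norm_num)]
      nlinarith
    linarith
  set μ : ℝ := 2/δ with hμdef
  have hμ0 : 0 < μ := by positivity
  -- the matrix B and the supersolution inequality
  set B : P → P → ℝ := fun p p'' =>
    Real.exp (ε*T) * Hm p p'' + a p p'' * K₀ * Real.exp (-(c₀/2)*T) * Gf p'' with hBdef
  have hind : ∀ p, 1 + μ * (∑ p'', B p p'' * v p'') ≤ μ * v p := by
    intro p
    have hexp1 : 1 ≤ Real.exp (ε*T) := Real.one_le_exp (by positivity)
    have hsplit : ∑ p'', B p p'' * v p''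
        = Real.exp (ε*T) * Hv p + Real.exp (-(c₀/2)*T) * Cf p := by
      simp only [hBdef, hHvdef, hCfdef, Finset.mul_sum, ← Finset.sum_add_distrib]
      apply Finset.sum_congr rfl
      intros; ring
    have h1 : Real.exp (ε*T) * Hv p ≤ Hv p + δ/4 := by
      have : Real.exp (ε*T) * Hv p = Hv p + (Real.exp (ε*T) - 1) * Hv p := by ring
      rw [this]
      have h2 : (Real.exp (ε*T) - 1) * Hv p ≤ (Real.exp (ε*T) - 1) * Hvmax :=
        mul_le_mul_of_nonneg_left (hHvmax p) (by linarith)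
      linarith
    have h2 : Real.exp (-(c₀/2)*T) * Cf p ≤ δ/4 := by
      have := mul_le_mul_of_nonneg_left (hCmax p) (Real.exp_pos (-(c₀/2)*T)).le
      linarith
    have h3 : Hv p ≤ v p - δ := by
      have := hv p
      simp only [hHvdef]
      linarith
    have h4 : ∑ p'', B p p'' * v p'' ≤ v p - δ/2 := by
      rw [hsplit]; linarith
    have h5 : μ * (∑ p'', B p p'' * v p'') ≤ μ * (v p - δ/2) :=
      mul_le_mul_of_nonneg_left h4 hμ0.le
    have h6 : μ * (δ/2) = 1 := by
      rw [hμdef]; field_simp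
    have h7 : μ * (v p - δ/2) = μ * v p - μ * (δ/2) := by ring
    linarith
  -- the finsets
  set Wfin : ℝ → ℝ → Finset ℝ := fun s k =>
    if hsk : s < k then (hfin s k hsk).toFinset else ∅ with hWdef
  have hWmem : ∀ s k x, x ∈ Wfin s k ↔ ((x ∈ ⋃ p, D p) ∧ s < x ∧ x ≤ k) := by
    intro s k x
    by_cases hsk : s < k
    · simp [hWdef, dif_pos hsk, Set.Finite.mem_toFinset, Set.mem_Ioc, and_assoc]
    · simp only [hWdef, dif_neg hsk, Finset.notMem_empty, false_iff]
      rintro ⟨-, hsx, hxk⟩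
      exact hsk (lt_of_lt_of_le hsx hxk)
  set Efin : P → ℝ → ℝ → Finset ℝ := fun p s k =>
    (Wfin s k).filter (fun x => x ∈ D p) with hEdef
  have hEmem : ∀ p s k x, x ∈ Efin p s k ↔ (x ∈ D p ∧ s < x ∧ x ≤ k) := by
    intro p s k x
    simp only [hEdef, Finset.mem_filter, hWmem]
    constructor
    · rintro ⟨⟨-, h1, h2⟩, h3⟩; exact ⟨h3, h1, h2⟩
    · rintro ⟨h1, h2, h3⟩; exact ⟨⟨Set.mem_iUnion.2 ⟨p, h1⟩, h2, h3⟩, h1⟩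
  set Eoo : P → ℝ → ℝ → Finset ℝ := fun p s k =>
    (Wfin s k).filter (fun x => x ∈ D p ∧ x ≠ k) with hEoodef
  have hEoomem : ∀ p s k x, x ∈ Eoo p s k ↔ (x ∈ D p ∧ s < x ∧ x < k) := by
    intro p s k x
    simp only [hEoodef, Finset.mem_filter, hWmem]
    constructor
    · rintro ⟨⟨-, h1, h2⟩, h3, h4⟩; exact ⟨h3, h1, lt_of_le_of_ne h2 h4⟩
    · rintro ⟨h1, h2, h3⟩
      exact ⟨⟨Set.mem_iUnion.2 ⟨p, h1⟩, h2, h3.le⟩, h1, ne_of_lt h3⟩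
  have hlatt : ∀ p x, x ∈ D p → ∃ j : ℤ, x = θ p + (j:ℝ)/(n p:ℝ) := by
    intro p x hx; rw [hD p] at hx; exact hx
  -- the weighted coefficient sums
  set Sf : P → ℝ → ℝ → ℝ := fun p s k =>
    ∑ p', ∑ k' ∈ Efin p' s k, co p k p' k' * Real.exp (ε*(k - k')) with hSfdef
  -- key induction
  have key : ∀ (N : ℕ) (p : P) (s k : ℝ), k ∈ D p → s < k → (Wfin s k).card ≤ N →
      Sf p s k ≤ μ * v p := by
    intro N
    induction N with
    | zero =>
      intro p s k hkD hsk hcard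
      exfalso
      have hkW : k ∈ Wfin s k := (hWmem s k k).2 ⟨Set.mem_iUnion.2 ⟨p, hkD⟩, hsk, le_refl k⟩
      have hpos := Finset.card_pos.2 ⟨k, hkW⟩
      omega
    | succ N ih =>
      intro p s k hkD hsk hcard
      have hkW : k ∈ Wfin s k := (hWmem s k k).2 ⟨Set.mem_iUnion.2 ⟨p, hkD⟩, hsk, le_refl k⟩
      have hknotEoo : ∀ p', k ∉ Eoo p' s k := by
        intro p' hmem
        exact absurd ((hEoomem p' s k k).1 hmem).2.2 (lt_irrefl k)
      have hEsplit : ∀ p', ∑ k' ∈ Efin p' s k, co p k p' k' * Real.exp (ε*(k - k'))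
          = (if k ∈ D p' then co p k p' k else 0)
            + ∑ k' ∈ Eoo p' s k, co p k p' k' * Real.exp (ε*(k - k')) := by
        intro p'
        by_cases hkp' : k ∈ D p'
        · have hins : Efin p' s k = insert k (Eoo p' s k) := by
            ext x
            rw [hEmem, Finset.mem_insert, hEoomem]
            constructor
            · rintro ⟨h1, h2, h3⟩
              rcases lt_or_eq_of_le h3 with h4 | h4
              · exact Or.inr ⟨h1, h2, h4⟩
              · exact Or.inl h4
            · rintro (rfl | ⟨h1, h2, h3⟩)
              · exact ⟨hkp', hsk, le_refl _⟩
              · exact ⟨h1, h2, h3.le⟩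
          rw [hins, Finset.sum_insert (hknotEoo p'), if_pos hkp', sub_self, mul_zero, Real.exp_zero,
            mul_one]
        · have heq : Efin p' s k = Eoo p' s k := by
            ext x
            rw [hEmem, hEoomem]
            constructor
            · rintro ⟨h1, h2, h3⟩
              rcases lt_or_eq_of_le h3 with h4 | h4
              · exact ⟨h1, h2, h4⟩
              · exact absurd (h4 ▸ h1) hkp'
            · rintro ⟨h1, h2, h3⟩
              exact ⟨h1, h2, h3.le⟩
          rw [heq, if_neg hkp', zero_add]
      have hdiag : ∑ p' : P, (if k ∈ D p' then co p k p' k else 0) = 1 := by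
        rw [Finset.sum_eq_single p]
        · rw [if_pos hkD, hco_diag p p k hkD hkD, if_pos rfl]
        · intro p' _ hne
          by_cases hkp' : k ∈ D p'
          · rw [if_pos hkp', hco_diag p p' k hkD hkp', if_neg (fun hpp => hne hpp.symm)]
          · rw [if_neg hkp']
        · intro habs; exact absurd (Finset.mem_univ p) habs
      have hSsplit : Sf p s k
          = 1 + ∑ p', ∑ k' ∈ Eoo p' s k, co p k p' k' * Real.exp (ε*(k - k')) := by
        simp only [hSfdef]
        rw [Finset.sum_congr rfl (fun p' _ => hEsplit p'), Finset.sum_add_distrib, hdiag]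
      set Fcut : P → ℝ → Finset ℝ := fun p'' k' =>
        (Wfin s k).filter (fun x => x ∈ D p'' ∧ k' ≤ x ∧ x < k) with hFcutdef
      have hofs : ∀ p' k', k' ∈ Eoo p' s k →
          co p k p' k' = ∑ p'' : P, ∑ k'' ∈ Fcut p'' k',
            a p p'' * h p p'' (k - k'') * co p'' k'' p' k' := by
        intro p' k' hk'
        obtain ⟨hk'D, hsk', hk'k⟩ := (hEoomem p' s k k').1 hk'
        rw [hco_rec p k p' k' hkD hk'D hk'k]
        apply Finset.sum_congr rfl
        intro p'' _
        have hseteq : D p'' ∩ Set.Ico k' k = ↑(Fcut p'' k') := by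
          ext x
          simp only [hFcutdef, Finset.coe_filter, Set.mem_setOf_eq, Set.mem_inter_iff,
            Set.mem_Ico, hWmem]
          constructor
          · rintro ⟨h1, h2, h3⟩
            exact ⟨⟨Set.mem_iUnion.2 ⟨p'', h1⟩, lt_of_lt_of_le hsk' h2, h3.le⟩, h1, h2, h3⟩
          · rintro ⟨-, h1, h2, h3⟩
            exact ⟨h1, h2, h3⟩
        rw [hseteq, finsum_mem_coe_finset]
      -- pair swap
      have hEfilter : ∀ p' (k'' : ℝ), k'' ∈ Wfin s k → k'' ≠ k →
          Efin p' s k'' = (Wfin s k).filter (fun x => x ∈ D p' ∧ x ≤ k'') := by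
        intro p' k'' hk''W hk''ne
        obtain ⟨hU, hsk'', hk''k⟩ := (hWmem s k k'').1 hk''W
        have hk''lt : k'' < k := lt_of_le_of_ne hk''k hk''ne
        ext x
        rw [hEmem, Finset.mem_filter, hWmem]
        constructor
        · rintro ⟨h1, h2, h3⟩
          exact ⟨⟨Set.mem_iUnion.2 ⟨p', h1⟩, h2, le_trans h3 hk''lt.le⟩, h1, h3⟩
        · rintro ⟨⟨-, h2, -⟩, h1, h3⟩
          exact ⟨h1, h2, h3⟩
      have hpair : ∀ (p' p'' : P) (G : ℝ → ℝ → ℝ),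
          ∑ k' ∈ Eoo p' s k, ∑ k'' ∈ Fcut p'' k', G k'' k'
          = ∑ k'' ∈ Eoo p'' s k, ∑ k' ∈ Efin p' s k'', G k'' k' := by
        intro p' p'' G
        have lhs_eq : ∑ k' ∈ Eoo p' s k, ∑ k'' ∈ Fcut p'' k', G k'' k'
            = ∑ k' ∈ Wfin s k, ∑ k'' ∈ Wfin s k,
              if (k' ∈ D p' ∧ k' ≠ k) ∧ (k'' ∈ D p'' ∧ k' ≤ k'' ∧ k'' < k)
              then G k'' k' else 0 := by
          simp only [hEoodef, hFcutdef]
          rw [Finset.sum_filter]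
          apply Finset.sum_congr rfl
          intro k' _
          by_cases h1 : k' ∈ D p' ∧ k' ≠ k
          · rw [if_pos h1, Finset.sum_filter]
            apply Finset.sum_congr rfl
            intro k'' _
            by_cases h2 : k'' ∈ D p'' ∧ k' ≤ k'' ∧ k'' < k
            · rw [if_pos h2, if_pos ⟨h1, h2⟩]
            · rw [if_neg h2, if_neg (fun hc => h2 hc.2)]
          · rw [if_neg h1, eq_comm]
            apply Finset.sum_eq_zero
            intro k'' _
            rw [if_neg (fun hc => h1 hc.1)]
        have rhs_eq : ∑ k'' ∈ Eoo p'' s k, ∑ k' ∈ Efin p' s k'', G k'' k'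
            = ∑ k'' ∈ Wfin s k, ∑ k' ∈ Wfin s k,
              if (k'' ∈ D p'' ∧ k'' ≠ k) ∧ (k' ∈ D p' ∧ k' ≤ k'')
              then G k'' k' else 0 := by
          rw [show Eoo p'' s k = (Wfin s k).filter (fun x => x ∈ D p'' ∧ x ≠ k) from rfl]
          rw [Finset.sum_filter]
          apply Finset.sum_congr rfl
          intro k'' hk''W
          by_cases h1 : k'' ∈ D p'' ∧ k'' ≠ k
          · rw [if_pos h1, hEfilter p' k'' hk''W h1.2, Finset.sum_filter]
            apply Finset.sum_congr rfl
            intro k' _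
            by_cases h2 : k' ∈ D p' ∧ k' ≤ k''
            · rw [if_pos h2, if_pos ⟨h1, h2⟩]
            · rw [if_neg h2, if_neg (fun hc => h2 hc.2)]
          · rw [if_neg h1, eq_comm]
            apply Finset.sum_eq_zero
            intro k' _
            rw [if_neg (fun hc => h1 hc.1)]
        rw [lhs_eq, rhs_eq, Finset.sum_comm]
        apply Finset.sum_congr rfl
        intro k'' hk''W
        apply Finset.sum_congr rfl
        intro k' hk'W
        obtain ⟨-, hsk', hk'k⟩ := (hWmem s k k').1 hk'W
        obtain ⟨-, hsk'', hk''k⟩ := (hWmem s k k'').1 hk''W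
        apply if_congr _ rfl rfl
        constructor
        · rintro ⟨⟨hd1, hne1⟩, hd2, hle, hlt⟩
          exact ⟨⟨hd2, ne_of_lt hlt⟩, hd1, hle⟩
        · rintro ⟨⟨hd2, hne2⟩, hd1, hle⟩
          have hlt : k'' < k := lt_of_le_of_ne hk''k hne2
          exact ⟨⟨hd1, ne_of_lt (lt_of_le_of_lt hle hlt)⟩, hd2, hle, hlt⟩
      -- off-diagonal bound
      have hoff : ∑ p', ∑ k' ∈ Eoo p' s k, co p k p' k' * Real.exp (ε*(k - k'))
          ≤ ∑ p'' : P, B p p'' * (μ * v p'') := by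
        have step1 : ∑ p', ∑ k' ∈ Eoo p' s k, co p k p' k' * Real.exp (ε*(k - k'))
            = ∑ p'' : P, ∑ p' : P, ∑ k'' ∈ Eoo p'' s k, ∑ k' ∈ Efin p' s k'',
              (a p p'' * h p p'' (k - k'') * Real.exp (ε*(k - k''))) *
                (co p'' k'' p' k' * Real.exp (ε*(k'' - k'))) := by
          rw [Finset.sum_comm]
          apply Finset.sum_congr rfl
          intro p' _
          calc ∑ k' ∈ Eoo p' s k, co p k p' k' * Real.exp (ε*(k - k'))
              = ∑ k' ∈ Eoo p' s k, ∑ p'' : P, ∑ k'' ∈ Fcut p'' k',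
                (a p p'' * h p p'' (k - k'') * Real.exp (ε*(k - k''))) *
                  (co p'' k'' p' k' * Real.exp (ε*(k'' - k'))) := by
                apply Finset.sum_congr rfl
                intro k' hk'
                rw [hofs p' k' hk', Finset.sum_mul]
                apply Finset.sum_congr rfl
                intro p'' _
                rw [Finset.sum_mul]
                apply Finset.sum_congr rfl
                intro k'' _
                have hexp : Real.exp (ε*(k - k'')) * Real.exp (ε*(k'' - k'))
                    = Real.exp (ε*(k - k')) := by
                  rw [← Real.exp_add]
                  congr 1
                  ring
                rw [← hexp]
                ring
            _ = ∑ p'' : P, ∑ k' ∈ Eoo p' s k, ∑ k'' ∈ Fcut p'' k',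
                (a p p'' * h p p'' (k - k'') * Real.exp (ε*(k - k''))) *
                  (co p'' k'' p' k' * Real.exp (ε*(k'' - k'))) := Finset.sum_comm
            _ = ∑ p'' : P, ∑ k'' ∈ Eoo p'' s k, ∑ k' ∈ Efin p' s k'',
                (a p p'' * h p p'' (k - k'') * Real.exp (ε*(k - k''))) *
                  (co p'' k'' p' k' * Real.exp (ε*(k'' - k'))) := by
                apply Finset.sum_congr rfl
                intro p'' _
                exact hpair p' p'' _
        rw [step1]
        apply Finset.sum_le_sum
        intro p'' _
        have step2 : ∑ p' : P, ∑ k'' ∈ Eoo p'' s k, ∑ k' ∈ Efin p' s k'',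
            (a p p'' * h p p'' (k - k'') * Real.exp (ε*(k - k''))) *
              (co p'' k'' p' k' * Real.exp (ε*(k'' - k')))
            = ∑ k'' ∈ Eoo p'' s k,
              (a p p'' * h p p'' (k - k'') * Real.exp (ε*(k - k''))) * Sf p'' s k'' := by
          rw [Finset.sum_comm]
          apply Finset.sum_congr rfl
          intro k'' _
          simp only [hSfdef, Finset.mul_sum]
        rw [step2]
        have hSbound : ∀ k'' ∈ Eoo p'' s k, Sf p'' s k'' ≤ μ * v p'' := by
          intro k'' hk''
          obtain ⟨hk''D, hsk'', hk''k⟩ := (hEoomem p'' s k k'').1 hk''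
          apply ih p'' s k'' hk''D hsk''
          have hsub : Wfin s k'' ⊆ (Wfin s k).erase k := by
            intro x hx
            obtain ⟨hU, hsx, hxk''⟩ := (hWmem s k'' x).1 hx
            rw [Finset.mem_erase, hWmem]
            exact ⟨ne_of_lt (lt_of_le_of_lt hxk'' hk''k),
              hU, hsx, le_trans hxk'' hk''k.le⟩
          have h1 := Finset.card_le_card hsub
          rw [Finset.card_erase_of_mem hkW] at h1
          omega
        calc ∑ k'' ∈ Eoo p'' s k,
            (a p p'' * h p p'' (k - k'') * Real.exp (ε*(k - k''))) * Sf p'' s k''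
            ≤ ∑ k'' ∈ Eoo p'' s k,
              (a p p'' * h p p'' (k - k'') * Real.exp (ε*(k - k''))) * (μ * v p'') := by
              apply Finset.sum_le_sum
              intro k'' hk''
              apply mul_le_mul_of_nonneg_left (hSbound k'' hk'')
              have := ha p p''
              have := hh p p'' (k - k'')
              positivity
          _ = (∑ k'' ∈ Eoo p'' s k,
              a p p'' * h p p'' (k - k'') * Real.exp (ε*(k - k''))) * (μ * v p'') := by
              rw [Finset.sum_mul]
          _ ≤ B p p'' * (μ * v p'') := by
              apply mul_le_mul_of_nonneg_right _ (mul_nonneg hμ0.le (hv0 p''))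
              rw [hBdef]
              exact aux_row (n p'') (hn p'') (θ p'') (h p p'') (hh p p'') (a p p'')
                (Hm p p'') (ha p p'') (hHm0 p p'') (hHm p p'') K₀ c₀ hK₀ hc₀
                (fun x hx => hdecayPP p p'' x hx) ε T hε0 hεc hT0 k (Eoo p'' s k)
                (fun x hx => ⟨hlatt p'' x ((hEoomem p'' s k x).1 hx).1,
                  ((hEoomem p'' s k x).1 hx).2.2⟩)
      have hBv : ∑ p'' : P, B p p'' * (μ * v p'') = μ * ∑ p'', B p p'' * v p'' := by
        rw [Finset.mul_sum]
        apply Finset.sum_congr rfl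
        intros; ring
      calc Sf p s k = 1 + ∑ p', ∑ k' ∈ Eoo p' s k, co p k p' k' * Real.exp (ε*(k - k')) :=
            hSsplit
        _ ≤ 1 + ∑ p'' : P, B p p'' * (μ * v p'') := by linarith [hoff]
        _ = 1 + μ * ∑ p'', B p p'' * v p'' := by rw [hBv]
        _ ≤ μ * v p := hind p
  -- final constants
  set CS : ℝ := μ * vmax with hCSdef
  have hCS0 : 0 < CS := mul_pos hμ0 (lt_of_lt_of_le one_pos hvmax1)
  set Gmax : ℝ := Finset.univ.sup' hPne Gf with hGmaxdef
  have hGmax : ∀ p, Gf p ≤ Gmax := fun p => Finset.le_sup' Gf (Finset.mem_univ p)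
  have hGmax0 : 0 < Gmax := lt_of_lt_of_le (hGfpos (Classical.arbitrary P)) (hGmax _)
  have hMPne : (Finset.univ : Finset (M × P)).Nonempty := Finset.univ_nonempty
  set amax : ℝ := Finset.univ.sup' hMPne (fun mp : M × P => aMP mp.1 mp.2) with hamaxdef
  have hamax : ∀ (m : M) (p : P), aMP m p ≤ amax := fun m p =>
    Finset.le_sup' (fun mp : M × P => aMP mp.1 mp.2) (Finset.mem_univ (m, p))
  have hamax0 : 0 ≤ amax :=
    le_trans (haMP (Classical.arbitrary M) (Classical.arbitrary P)) (hamax _ _)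
  set Q0 : ℝ := amax * K₀^2 * CS * Gmax with hQ0def
  have hQ00 : 0 ≤ Q0 := by positivity
  refine ⟨K₀ + (Fintype.card P)^2 * Q0, ε, by positivity, hε0, ?_⟩
  intro m m' s t hst
  rw [hH𝔥 m m' s t hst]
  -- set equalities
  have hsetoo : ∀ p : P, (D p ∩ Set.Ioo s t) = ↑(Eoo p s t) := by
    intro p
    ext x
    rw [Finset.mem_coe, hEoomem]
    simp [Set.mem_Ioo, and_assoc]
  have hsetoc : ∀ (p' : P) (k : ℝ), (D p' ∩ Set.Ioc s k) = ↑(Efin p' s k) := by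
    intro p' k
    ext x
    rw [Finset.mem_coe, hEmem]
    simp [Set.mem_Ioc, and_assoc]
  -- convert tsums to finite sums
  have hTeq : ∀ p p' : P,
      (∑' k : (D p ∩ Set.Ioo s t : Set ℝ),
        ∑' k' : (D p' ∩ Set.Ioc s (k : ℝ) : Set ℝ),
          ENNReal.ofReal (aMP m p * hMP m p (t - (k : ℝ)) *
            co p (k : ℝ) p' (k' : ℝ) * hPM p' m' ((k' : ℝ) - s)))
      = ENNReal.ofReal (∑ k ∈ Eoo p s t, ∑ k' ∈ Efin p' s k,
          aMP m p * hMP m p (t - k) * co p k p' k' * hPM p' m' (k' - s)) := by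
    intro p p'
    have hnn : ∀ k ∈ Eoo p s t, ∀ k' ∈ Efin p' s k,
        0 ≤ aMP m p * hMP m p (t - k) * co p k p' k' * hPM p' m' (k' - s) := by
      intro k hk k' hk'
      obtain ⟨hkD, -, -⟩ := (hEoomem p s t k).1 hk
      obtain ⟨hk'D, -, hk'k⟩ := (hEmem p' s k k').1 hk'
      have hco0 := hco_nonneg p k p' k' hkD hk'D hk'k
      have := haMP m p
      have := hhMP m p (t - k)
      have := hhPM p' m' (k' - s)
      positivity
    have tsum_fin : ∀ (S : Set ℝ) (F : Finset ℝ), S = ↑F → ∀ (f : ℝ → ℝ≥0∞),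
        ∑' x : S, f ↑x = ∑ x ∈ F, f x := by
      intro S F hSF f
      rw [hSF]
      exact Finset.tsum_subtype' F f
    calc (∑' k : (D p ∩ Set.Ioo s t : Set ℝ),
          ∑' k' : (D p' ∩ Set.Ioc s (k : ℝ) : Set ℝ),
            ENNReal.ofReal (aMP m p * hMP m p (t - (k : ℝ)) *
              co p (k : ℝ) p' (k' : ℝ) * hPM p' m' ((k' : ℝ) - s)))
        = ∑ k ∈ Eoo p s t,
          ∑' k' : (D p' ∩ Set.Ioc s k : Set ℝ),
            ENNReal.ofReal (aMP m p * hMP m p (t - k) *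
              co p k p' (k' : ℝ) * hPM p' m' ((k' : ℝ) - s)) :=
          tsum_fin (D p ∩ Set.Ioo s t) (Eoo p s t) (hsetoo p)
            (fun r => ∑' k' : (D p' ∩ Set.Ioc s r : Set ℝ),
              ENNReal.ofReal (aMP m p * hMP m p (t - r) *
                co p r p' (k' : ℝ) * hPM p' m' ((k' : ℝ) - s)))
      _ = ∑ k ∈ Eoo p s t, ∑ k' ∈ Efin p' s k,
            ENNReal.ofReal (aMP m p * hMP m p (t - k) *
              co p k p' k' * hPM p' m' (k' - s)) := by
          apply Finset.sum_congr rfl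
          intro k hk
          exact tsum_fin (D p' ∩ Set.Ioc s k) (Efin p' s k) (hsetoc p' k)
            (fun r => ENNReal.ofReal (aMP m p * hMP m p (t - k) *
              co p k p' r * hPM p' m' (r - s)))
      _ = ∑ k ∈ Eoo p s t, ENNReal.ofReal (∑ k' ∈ Efin p' s k,
            aMP m p * hMP m p (t - k) * co p k p' k' * hPM p' m' (k' - s)) := by
          apply Finset.sum_congr rfl
          intro k hk
          exact (ENNReal.ofReal_sum_of_nonneg (fun k' hk' => hnn k hk k' hk')).symm
      _ = ENNReal.ofReal (∑ k ∈ Eoo p s t, ∑ k' ∈ Efin p' s k,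
            aMP m p * hMP m p (t - k) * co p k p' k' * hPM p' m' (k' - s)) :=
          (ENNReal.ofReal_sum_of_nonneg
            (fun k hk => Finset.sum_nonneg (fun k' hk' => hnn k hk k' hk'))).symm
  -- bound the finite double sums
  have hmain : ∀ p p' : P,
      ∑ k ∈ Eoo p s t, ∑ k' ∈ Efin p' s k,
        aMP m p * hMP m p (t - k) * co p k p' k' * hPM p' m' (k' - s)
      ≤ Q0 * Real.exp (-ε * (t - s)) := by
    intro p p'
    have hinner : ∀ k ∈ Eoo p s t,
        ∑ k' ∈ Efin p' s k, aMP m p * hMP m p (t - k) * co p k p' k' * hPM p' m' (k' - s)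
        ≤ (aMP m p * K₀^2 * Real.exp (-ε * (t - s)) * CS) * Real.exp (-(c₀/2) * (t - k)) := by
      intro k hk
      obtain ⟨hkD, hsk, hkt⟩ := (hEoomem p s t k).1 hk
      have hterm : ∀ k' ∈ Efin p' s k,
          aMP m p * hMP m p (t - k) * co p k p' k' * hPM p' m' (k' - s)
          ≤ (aMP m p * K₀^2 * Real.exp (-ε * (t - s)) * Real.exp (-(c₀/2) * (t - k))) *
            (co p k p' k' * Real.exp (ε * (k - k'))) := by
        intro k' hk'
        obtain ⟨hk'D, hsk', hk'k⟩ := (hEmem p' s k k').1 hk'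
        have h1 : hMP m p (t - k) ≤ K₀ * Real.exp (-c₀ * (t - k)) :=
          hdecayMP m p _ (by linarith)
        have h2 : hPM p' m' (k' - s) ≤ K₀ * Real.exp (-c₀ * (k' - s)) :=
          hdecayPM p' m' _ (by linarith)
        have hco0 : 0 ≤ co p k p' k' := hco_nonneg p k p' k' hkD hk'D hk'k
        have hexpineq : Real.exp (-c₀ * (t - k)) * Real.exp (-c₀ * (k' - s))
            ≤ Real.exp (-ε * (t - s)) *
              (Real.exp (-(c₀/2) * (t - k)) * Real.exp (ε * (k - k'))) := by
          rw [← Real.exp_add, ← Real.exp_add, ← Real.exp_add]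
          apply Real.exp_le_exp.2
          have hA : 0 ≤ (c₀/2 - ε) * (t - k) := mul_nonneg (by linarith) (by linarith)
          have hB : 0 ≤ (c₀ - ε) * (k' - s) := mul_nonneg (by linarith) (by linarith)
          nlinarith [hA, hB]
        have haMP0 := haMP m p
        have hMP0 := hhMP m p (t - k)
        have hPM0 := hhPM p' m' (k' - s)
        calc aMP m p * hMP m p (t - k) * co p k p' k' * hPM p' m' (k' - s)
            ≤ aMP m p * (K₀ * Real.exp (-c₀ * (t - k))) * co p k p' k' *
              hPM p' m' (k' - s) := by
              apply mul_le_mul_of_nonneg_right _ hPM0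
              apply mul_le_mul_of_nonneg_right _ hco0
              exact mul_le_mul_of_nonneg_left h1 haMP0
          _ ≤ aMP m p * (K₀ * Real.exp (-c₀ * (t - k))) * co p k p' k' *
              (K₀ * Real.exp (-c₀ * (k' - s))) := by
              apply mul_le_mul_of_nonneg_left h2
              positivity
          _ = (aMP m p * K₀^2 * co p k p' k') *
              (Real.exp (-c₀ * (t - k)) * Real.exp (-c₀ * (k' - s))) := by ring
          _ ≤ (aMP m p * K₀^2 * co p k p' k') *
              (Real.exp (-ε * (t - s)) *
                (Real.exp (-(c₀/2) * (t - k)) * Real.exp (ε * (k - k')))) := by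
              apply mul_le_mul_of_nonneg_left hexpineq
              positivity
          _ = (aMP m p * K₀^2 * Real.exp (-ε * (t - s)) * Real.exp (-(c₀/2) * (t - k))) *
              (co p k p' k' * Real.exp (ε * (k - k'))) := by ring
      have hsum1 : ∑ k' ∈ Efin p' s k, co p k p' k' * Real.exp (ε * (k - k')) ≤ CS := by
        have hle1 : ∑ k' ∈ Efin p' s k, co p k p' k' * Real.exp (ε * (k - k'))
            ≤ Sf p s k := by
          simp only [hSfdef]
          apply Finset.single_le_sum (f := fun p'' : P =>
            ∑ k' ∈ Efin p'' s k, co p k p'' k' * Real.exp (ε * (k - k')))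
            _ (Finset.mem_univ p')
          intro p'' _
          apply Finset.sum_nonneg
          intro k' hk'
          obtain ⟨hk'D, -, hk'k⟩ := (hEmem p'' s k k').1 hk'
          have := hco_nonneg p k p'' k' hkD hk'D hk'k
          positivity
        have hle2 : Sf p s k ≤ μ * v p :=
          key (Wfin s k).card p s k hkD hsk (le_refl _)
        have hle3 : μ * v p ≤ CS := by
          rw [hCSdef]
          exact mul_le_mul_of_nonneg_left (hvmax p) hμ0.le
        linarith
      calc ∑ k' ∈ Efin p' s k,
          aMP m p * hMP m p (t - k) * co p k p' k' * hPM p' m' (k' - s)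
          ≤ ∑ k' ∈ Efin p' s k,
            (aMP m p * K₀^2 * Real.exp (-ε * (t - s)) * Real.exp (-(c₀/2) * (t - k))) *
              (co p k p' k' * Real.exp (ε * (k - k'))) := Finset.sum_le_sum hterm
        _ = (aMP m p * K₀^2 * Real.exp (-ε * (t - s)) * Real.exp (-(c₀/2) * (t - k))) *
            ∑ k' ∈ Efin p' s k, co p k p' k' * Real.exp (ε * (k - k')) := by
            rw [Finset.mul_sum]
        _ ≤ (aMP m p * K₀^2 * Real.exp (-ε * (t - s)) * Real.exp (-(c₀/2) * (t - k))) * CS := by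
            apply mul_le_mul_of_nonneg_left hsum1
            have := haMP m p
            positivity
        _ = (aMP m p * K₀^2 * Real.exp (-ε * (t - s)) * CS) * Real.exp (-(c₀/2) * (t - k)) := by
            ring
    have hgeo : ∑ k ∈ Eoo p s t, Real.exp (-(c₀/2) * (t - k)) ≤ Gf p := by
      have := aux_geom (c₀/2) (by linarith) (n p) (hn p) (θ p) 0 t (le_refl 0) (Eoo p s t)
        (fun x hx => ⟨hlatt p x ((hEoomem p s t x).1 hx).1,
          by have := ((hEoomem p s t x).1 hx).2.2; linarith⟩)
      simpa [hGfdef] using this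
    calc ∑ k ∈ Eoo p s t, ∑ k' ∈ Efin p' s k,
        aMP m p * hMP m p (t - k) * co p k p' k' * hPM p' m' (k' - s)
        ≤ ∑ k ∈ Eoo p s t,
          (aMP m p * K₀^2 * Real.exp (-ε * (t - s)) * CS) * Real.exp (-(c₀/2) * (t - k)) :=
          Finset.sum_le_sum hinner
      _ = (aMP m p * K₀^2 * Real.exp (-ε * (t - s)) * CS) *
          ∑ k ∈ Eoo p s t, Real.exp (-(c₀/2) * (t - k)) := by rw [Finset.mul_sum]
      _ ≤ (aMP m p * K₀^2 * Real.exp (-ε * (t - s)) * CS) * Gf p := by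
          apply mul_le_mul_of_nonneg_left hgeo
          have := haMP m p
          positivity
      _ ≤ (amax * K₀^2 * Real.exp (-ε * (t - s)) * CS) * Gmax := by
          apply mul_le_mul
          · apply mul_le_mul_of_nonneg_right _ hCS0.le
            apply mul_le_mul_of_nonneg_right _ (Real.exp_pos _).le
            exact mul_le_mul_of_nonneg_right (hamax m p) (by positivity)
          · exact hGmax p
          · exact (hGfpos p).le
          · positivity
      _ = Q0 * Real.exp (-ε * (t - s)) := by rw [hQ0def]; ring
  -- put everything together
  have hterm1 : ENNReal.ofReal (hMM m m' (t - s))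
      ≤ ENNReal.ofReal (K₀ * Real.exp (-ε * (t - s))) := by
    apply ENNReal.ofReal_le_ofReal
    have h1 : hMM m m' (t - s) ≤ K₀ * Real.exp (-c₀ * (t - s)) :=
      hdecayMM m m' _ (by linarith)
    have h2 : Real.exp (-c₀ * (t - s)) ≤ Real.exp (-ε * (t - s)) := by
      apply Real.exp_le_exp.2
      nlinarith [mul_nonneg (show (0:ℝ) ≤ c₀ - ε by linarith) (show (0:ℝ) ≤ t - s by linarith)]
    calc hMM m m' (t - s) ≤ K₀ * Real.exp (-c₀ * (t - s)) := h1
      _ ≤ K₀ * Real.exp (-ε * (t - s)) := mul_le_mul_of_nonneg_left h2 hK₀.le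
  have hterm2 : (∑ p : P, ∑ p' : P,
      ∑' k : (D p ∩ Set.Ioo s t : Set ℝ),
        ∑' k' : (D p' ∩ Set.Ioc s (k : ℝ) : Set ℝ),
          ENNReal.ofReal (aMP m p * hMP m p (t - (k : ℝ)) *
            co p (k : ℝ) p' (k' : ℝ) * hPM p' m' ((k' : ℝ) - s)))
      ≤ ENNReal.ofReal (((Fintype.card P)^2 : ℝ) * (Q0 * Real.exp (-ε * (t - s)))) := by
    calc (∑ p : P, ∑ p' : P,
        ∑' k : (D p ∩ Set.Ioo s t : Set ℝ),
          ∑' k' : (D p' ∩ Set.Ioc s (k : ℝ) : Set ℝ),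
            ENNReal.ofReal (aMP m p * hMP m p (t - (k : ℝ)) *
              co p (k : ℝ) p' (k' : ℝ) * hPM p' m' ((k' : ℝ) - s)))
        ≤ ∑ _p : P, ∑ _p' : P, ENNReal.ofReal (Q0 * Real.exp (-ε * (t - s))) := by
          apply Finset.sum_le_sum
          intro p _
          apply Finset.sum_le_sum
          intro p' _
          rw [hTeq p p']
          exact ENNReal.ofReal_le_ofReal (hmain p p')
      _ = ((Fintype.card P : ℕ) * ((Fintype.card P : ℕ) *
          ENNReal.ofReal (Q0 * Real.exp (-ε * (t - s))))) := by
          simp [Finset.sum_const, Finset.card_univ, nsmul_eq_mul, mul_assoc]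
      _ = ENNReal.ofReal (((Fintype.card P)^2 : ℝ) * (Q0 * Real.exp (-ε * (t - s)))) := by
          rw [← ENNReal.ofReal_natCast (Fintype.card P)]
          rw [← ENNReal.ofReal_mul (by positivity), ← ENNReal.ofReal_mul (by positivity)]
          congr 1
          ring
  calc ENNReal.ofReal (hMM m m' (t - s)) + _
      ≤ ENNReal.ofReal (K₀ * Real.exp (-ε * (t - s))) +
        ENNReal.ofReal (((Fintype.card P)^2 : ℝ) * (Q0 * Real.exp (-ε * (t - s)))) :=
        add_le_add hterm1 hterm2
    _ = ENNReal.ofReal ((K₀ + (Fintype.card P)^2 * Q0) * Real.exp (-ε * (t - s))) := by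
        rw [← ENNReal.ofReal_add (by positivity) (by positivity)]
        congr 1
        ring
end
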